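/- arXiv:1911.12518 — 6 statements merged into one kernel-verified Lean document; each statement's English description precedes it below -/
import Mathlib

section
/- Let m, n, r be natural numbers with r ≤ min(m, n). Then the closure (in the Euclidean topology on real m×n matrices) of the set {A ∈ ℝ^{m×n} : rank(A) = r} equals the set {A ∈ ℝ^{m×n} : rank(A) ≤ r}. In particular the set of matrices of rank at most r is closed, and the matrices of rank exactly r are dense in it. -/
open Matrix Module Submodule

lemma aux_rank_submatrix_le {m n k : ℕ} (A : Matrix (Fin m) (Fin n) ℝ) (g : Fin k → Fin n) :
    (A.submatrix id g).rank ≤ A.rank := by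
  have h : A.submatrix id g = A * (Matrix.of fun j i => if g i = j then (1:ℝ) else 0) := by
    ext i j
    simp [Matrix.mul_apply, eq_comm]
  rw [h]
  exact A.rank_mul_le_left _

lemma aux_det_ne_zero_iff_rank {k : ℕ} (M : Matrix (Fin k) (Fin k) ℝ) :
    M.det ≠ 0 ↔ M.rank = k := by
  constructor
  · intro hd
    simpa using M.rank_of_isUnit ((Matrix.isUnit_iff_isUnit_det M).2 hd.isUnit)
  · intro hr hd
    obtain ⟨v, hv, hMv⟩ := (Matrix.exists_mulVec_eq_zero_iff).2 hd
    have hker : v ∈ LinearMap.ker M.mulVecLin := by simpa [Matrix.mulVecLin_apply] using hMv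
    have h1 : LinearMap.ker M.mulVecLin ≠ ⊥ := by
      intro hbot
      rw [hbot] at hker
      exact hv (by simpa using hker)
    have h2 : 0 < finrank ℝ (LinearMap.ker M.mulVecLin) := by
      rcases Submodule.exists_mem_ne_zero_of_ne_bot h1 with ⟨x, hx, hx0⟩
      refine Module.finrank_pos_iff.mpr ?_
      exact ⟨⟨x, hx⟩, 0, by simpa using hx0⟩
    have h3 := LinearMap.finrank_range_add_finrank_ker M.mulVecLin
    rw [Module.finrank_fin_fun] at h3
    have : M.rank < k := by
      rw [Matrix.rank]
      omega
    omega

lemma aux_le_rank_iff {m n : ℕ} (k : ℕ) (A : Matrix (Fin m) (Fin n) ℝ) :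
    k ≤ A.rank ↔ ∃ g : Fin k ↪ Fin n,
      ((A.submatrix id g)ᵀ * (A.submatrix id g)).det ≠ 0 := by
  constructor
  · intro hk
    classical
    obtain ⟨s, hsub, hspan, hind⟩ := exists_linearIndependent ℝ (Set.range Aᵀ)
    haveI : Fintype s := ((Set.finite_range Aᵀ).subset hsub).fintype
    have hcard : finrank ℝ (span ℝ s) = s.toFinset.card := finrank_span_set_eq_card hind
    have hks : k ≤ Fintype.card s := by
      rw [Set.toFinset_card] at hcard
      have := A.rank_eq_finrank_span_cols
      rw [show Set.range A.col = Set.range Aᵀ from rfl, ← hspan] at this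
      omega
    obtain ⟨e⟩ := Function.Embedding.nonempty_of_card_le (by simpa using hks)
      (α := Fin k) (β := s)
    have hp : ∀ x : s, ∃ j, Aᵀ j = (x : Fin m → ℝ) := fun x => hsub x.2
    choose p hpspec using hp
    have hpinj : Function.Injective p := by
      intro x y hxy
      apply Subtype.ext
      rw [← hpspec x, ← hpspec y, hxy]
    refine ⟨⟨p ∘ e, hpinj.comp e.injective⟩, ?_⟩
    set B := A.submatrix id (p ∘ e) with hB
    have hBT : Bᵀ = fun i => Aᵀ (p (e i)) := by
      ext i j
      simp [hB, Matrix.transpose_apply]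
    have hBTind : LinearIndependent ℝ Bᵀ := by
      rw [hBT]
      have : (fun i => Aᵀ (p (e i))) = fun i => ((e i : s) : Fin m → ℝ) := by
        funext i; rw [hpspec]
      rw [this]
      exact hind.comp e e.injective
    have hrB : B.rank = k := by
      have := hBTind.rank_matrix (M := Bᵀ)
      simpa [Matrix.rank_transpose] using this
    rw [aux_det_ne_zero_iff_rank]
    rw [Matrix.rank_transpose_mul_self]
    exact hrB
  · rintro ⟨g, hg⟩
    rw [aux_det_ne_zero_iff_rank] at hg
    calc k = ((A.submatrix id g)ᵀ * (A.submatrix id g)).rank := hg.symm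
      _ ≤ (A.submatrix id g).rank := Matrix.rank_mul_le_right _ _
      _ ≤ A.rank := aux_rank_submatrix_le A g

lemma aux_isClosed {m n : ℕ} (r : ℕ) :
    IsClosed {A : Matrix (Fin m) (Fin n) ℝ | A.rank ≤ r} := by
  rw [← isOpen_compl_iff]
  have hset : {A : Matrix (Fin m) (Fin n) ℝ | A.rank ≤ r}ᶜ =
      ⋃ g : Fin (r + 1) ↪ Fin n,
        {A : Matrix (Fin m) (Fin n) ℝ |
          ((A.submatrix id g)ᵀ * (A.submatrix id g)).det ≠ 0} := by
    ext A
    simp only [Set.mem_compl_iff, Set.mem_setOf_eq, not_le, Set.mem_iUnion]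
    rw [← Nat.add_one_le_iff, aux_le_rank_iff]
  rw [hset]
  refine isOpen_iUnion fun g => ?_
  have hc : Continuous fun A : Matrix (Fin m) (Fin n) ℝ =>
      ((A.submatrix id g)ᵀ * (A.submatrix id g)).det :=
    ((continuous_id.matrix_submatrix id g).matrix_transpose.matrix_mul
      (continuous_id.matrix_submatrix id g)).matrix_det
  exact (isOpen_compl_singleton (x := (0:ℝ))).preimage hc

lemma aux_dense {m n r : ℕ} (hm : r ≤ m) (hn : r ≤ n)
    (A : Matrix (Fin m) (Fin n) ℝ) (hA : A.rank ≤ r) :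
    ∃ B : Matrix (Fin m) (Fin n) ℝ, ∀ ε : ℝ, ε ≠ 0 → (A + ε • B).rank = r := by
  classical
  set f := A.mulVecLin with hf
  have hs : A.rank = finrank ℝ (LinearMap.range f) := rfl
  set s := A.rank with hsdef
  set k := r - s with hk
  -- kernel has dimension ≥ k
  have hrn : finrank ℝ (LinearMap.range f) + finrank ℝ (LinearMap.ker f) = n := by
    have := LinearMap.finrank_range_add_finrank_ker f
    rwa [Module.finrank_fin_fun] at this
  have hkerdim : k ≤ finrank ℝ (LinearMap.ker f) := by omega
  -- complement of the range
  obtain ⟨C, hC⟩ := Submodule.exists_isCompl (LinearMap.range f)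
  have hCdim : k ≤ finrank ℝ C := by
    have := Submodule.finrank_add_eq_of_isCompl hC
    rw [Module.finrank_fin_fun] at this
    omega
  -- independent family in the kernel
  let bK := Module.finBasis ℝ (LinearMap.ker f)
  let v : Fin k → (Fin n → ℝ) := fun i => (bK (Fin.castLE hkerdim i) : Fin n → ℝ)
  have hv_ker : ∀ i, v i ∈ LinearMap.ker f := fun i => (bK (Fin.castLE hkerdim i)).2
  have hv_ind : LinearIndependent ℝ v := by
    have h1 := (bK.linearIndependent.comp (Fin.castLE hkerdim)
      (Fin.castLE_injective hkerdim)).map' (LinearMap.ker f).subtype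
      (Submodule.ker_subtype _)
    exact h1
  -- independent family in the complement of the range
  let bC := Module.finBasis ℝ C
  let u : Fin k → (Fin m → ℝ) := fun i => (bC (Fin.castLE hCdim i) : Fin m → ℝ)
  have hu_mem : ∀ i, u i ∈ C := fun i => (bC (Fin.castLE hCdim i)).2
  have hu_ind : LinearIndependent ℝ u := by
    have h1 := (bC.linearIndependent.comp (Fin.castLE hCdim)
      (Fin.castLE_injective hCdim)).map' C.subtype (Submodule.ker_subtype _)
    exact h1
  -- dual functionals
  set V := span ℝ (Set.range v) with hV
  let bV : Basis (Fin k) ℝ V := Basis.span hv_ind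
  obtain ⟨W, hW⟩ := Submodule.exists_isCompl V
  let π := V.linearProjOfIsCompl W hW
  let φ : Fin k → ((Fin n → ℝ) →ₗ[ℝ] ℝ) := fun i => (bV.coord i).comp π
  have hφ : ∀ i j, φ i (v j) = if j = i then 1 else 0 := by
    intro i j
    have hmem : v j ∈ V := subset_span (Set.mem_range_self j)
    have h1 : π (v j) = bV j := by
      rw [show v j = ((⟨v j, hmem⟩ : V) : Fin n → ℝ) from rfl,
        show π = V.projectionOnto W hW from rfl, Submodule.projectionOnto_apply_left]
      apply Subtype.ext
      exact congrArg Subtype.val (Basis.span_apply hv_ind j).symm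
    simp only [φ, LinearMap.comp_apply, h1, Basis.coord_apply, Basis.repr_self]
    simp [Finsupp.single_apply]
  set g : (Fin n → ℝ) →ₗ[ℝ] (Fin m → ℝ) := ∑ i, (φ i).smulRight (u i) with hg
  have hgv : ∀ j, g (v j) = u j := by
    intro j
    simp only [hg, LinearMap.sum_apply, LinearMap.smulRight_apply, hφ]
    simp [Finset.sum_ite_eq]
  have hg_mem : ∀ x, g x ∈ span ℝ (Set.range u) := by
    intro x
    simp only [hg, LinearMap.sum_apply, LinearMap.smulRight_apply]
    exact Submodule.sum_mem _ fun i _ =>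
      Submodule.smul_mem _ _ (subset_span (Set.mem_range_self i))
  refine ⟨LinearMap.toMatrix' g, fun ε hε => ?_⟩
  have hmv : (A + ε • LinearMap.toMatrix' g).mulVecLin = f + ε • g := by
    have h2 : A + ε • LinearMap.toMatrix' g = LinearMap.toMatrix' (f + ε • g) := by
      rw [map_add, _root_.map_smul]
      congr 1
      rw [hf, ← Matrix.toLin'_apply', LinearMap.toMatrix'_toLin']
    rw [h2, ← Matrix.toLin'_apply', Matrix.toLin'_toMatrix']
  -- compute the range of the perturbed map
  set U := span ℝ (Set.range u) with hU
  have hUle : U ≤ LinearMap.range (f + ε • g) := by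
    rw [hU, span_le]
    rintro _ ⟨j, rfl⟩
    refine ⟨ε⁻¹ • v j, ?_⟩
    have hfv : f (v j) = 0 := hv_ker j
    simp [_root_.map_smul, hfv, hgv j, smul_smul, inv_mul_cancel₀ hε]
  have hfle : LinearMap.range f ≤ LinearMap.range (f + ε • g) := by
    rintro _ ⟨x, rfl⟩
    have hfx : f x = (f + ε • g) x - ε • g x := by simp
    rw [hfx]
    exact Submodule.sub_mem _ (LinearMap.mem_range_self _ x)
      (Submodule.smul_mem _ _ (hUle (hg_mem x)))
  have hrange : LinearMap.range (f + ε • g) = LinearMap.range f ⊔ U := by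
    apply le_antisymm
    · rintro _ ⟨x, rfl⟩
      have : (f + ε • g) x = f x + ε • g x := by simp
      rw [this]
      exact Submodule.add_mem_sup (LinearMap.mem_range_self f x)
        (Submodule.smul_mem _ _ (hg_mem x))
    · exact sup_le hfle hUle
  have hdisj : Disjoint (LinearMap.range f) U := by
    refine hC.disjoint.mono_right ?_
    rw [hU, span_le]
    rintro _ ⟨i, rfl⟩
    exact hu_mem i
  have hfinU : finrank ℝ U = k := by
    rw [hU]
    simpa using finrank_span_eq_card hu_ind
  have hsum : finrank ℝ (LinearMap.range f ⊔ U : Submodule ℝ (Fin m → ℝ)) = s + k := by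
    have h3 := Submodule.finrank_sup_add_finrank_inf_eq (LinearMap.range f) U
    rw [hdisj.eq_bot, finrank_bot, hfinU] at h3
    omega
  rw [Matrix.rank, hmv, hrange, hsum]
  omega


theorem stmt0 (m n r : ℕ) (h : r ≤ min m n) :
    closure {A : Matrix (Fin m) (Fin n) ℝ | A.rank = r} =
      {A : Matrix (Fin m) (Fin n) ℝ | A.rank ≤ r} := by
  apply Set.Subset.antisymm
  · exact closure_minimal (fun A hA => le_of_eq hA) (aux_isClosed r)
  · intro A hA
    obtain ⟨B, hB⟩ := aux_dense (h.trans (min_le_left m n)) (h.trans (min_le_right m n)) A hA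
    have hcont : Continuous fun ε : ℝ => A + ε • B :=
      continuous_const.add (continuous_id.smul continuous_const)
    have htend : Filter.Tendsto (fun ε : ℝ => A + ε • B) (nhdsWithin 0 {(0:ℝ)}ᶜ) (nhds A) := by
      have h0 := (hcont.tendsto 0).mono_left
        (nhdsWithin_le_nhds (s := {(0:ℝ)}ᶜ))
      simpa using h0
    refine mem_closure_of_tendsto htend ?_
    filter_upwards [self_mem_nhdsWithin] with ε hε
    exact hB ε hε
end

section
/- Let m, n, r be natural numbers with 1 ≤ r ≤ min(m, n) and r < max(m, n). Then the set {A ∈ ℝ^{m×n} : rank(A) = r} of real m×n matrices of rank exactly r is path-connected. -/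
open Matrix Set unitInterval

noncomputable section

namespace RankConn

/-- The set of invertible `p × p` real matrices. -/
def J (p : ℕ) : Set (Matrix (Fin p) (Fin p) ℝ) := {V | V.det ≠ 0}

/-- `Good P` means `P` is joined to `1` within the invertible matrices. -/
def Good {p : ℕ} (P : Matrix (Fin p) (Fin p) ℝ) : Prop := JoinedIn (J p) 1 P

lemma Good.one {p : ℕ} : Good (1 : Matrix (Fin p) (Fin p) ℝ) :=
  JoinedIn.refl (by simp [J])

lemma Good.mul {p : ℕ} {P Q : Matrix (Fin p) (Fin p) ℝ} (hP : Good P) (hQ : Good Q) :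
    Good (P * Q) := by
  obtain ⟨γ, hγ⟩ := hP
  obtain ⟨δ, hδ⟩ := hQ
  refine ⟨⟨⟨fun t => γ t * δ t, (γ.continuous.matrix_mul δ.continuous)⟩, by simp, by simp⟩,
    fun t => ?_⟩
  have h1 := hγ t
  have h2 := hδ t
  simp only [J, mem_setOf_eq] at h1 h2 ⊢
  simpa [Matrix.det_mul] using mul_ne_zero h1 h2

lemma moveL {p q : ℕ} {P : Matrix (Fin p) (Fin p) ℝ} (hP : Good P)
    (A : Matrix (Fin p) (Fin q) ℝ) :
    JoinedIn {M : Matrix (Fin p) (Fin q) ℝ | M.rank = A.rank} A (P * A) := by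
  obtain ⟨γ, hγ⟩ := hP
  refine ⟨⟨⟨fun t => γ t * A, (γ.continuous.matrix_mul continuous_const)⟩, by simp, by simp⟩,
    fun t => ?_⟩
  have h1 := hγ t
  simp only [J, mem_setOf_eq] at h1 ⊢
  exact Matrix.rank_mul_eq_right_of_isUnit_det (γ t) A (isUnit_iff_ne_zero.mpr h1)

lemma moveR {p q : ℕ} {Q : Matrix (Fin q) (Fin q) ℝ} (hQ : Good Q)
    (A : Matrix (Fin p) (Fin q) ℝ) :
    JoinedIn {M : Matrix (Fin p) (Fin q) ℝ | M.rank = A.rank} A (A * Q) := by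
  obtain ⟨γ, hγ⟩ := hQ
  refine ⟨⟨⟨fun t => A * γ t, (continuous_const.matrix_mul γ.continuous)⟩, by simp, by simp⟩,
    fun t => ?_⟩
  have h1 := hγ t
  simp only [J, mem_setOf_eq] at h1 ⊢
  exact Matrix.rank_mul_eq_left_of_isUnit_det (γ t) A (isUnit_iff_ne_zero.mpr h1)

lemma good_transvection {p : ℕ} {i j : Fin p} (h : i ≠ j) (c : ℝ) :
    Good (Matrix.transvection i j c) := by
  refine ⟨⟨⟨fun t => Matrix.transvection i j ((t : ℝ) * c), ?_⟩, ?_, ?_⟩, fun t => ?_⟩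
  · have : (fun t : I => Matrix.transvection i j ((t : ℝ) * c))
        = fun t : I => (1 : Matrix (Fin p) (Fin p) ℝ) + ((t : ℝ) * c) • Matrix.single i j (1:ℝ) := by
      funext t
      rw [Matrix.transvection, smul_single, smul_eq_mul, mul_one]
    rw [this]
    exact continuous_const.add ((continuous_subtype_val.mul continuous_const).smul continuous_const)
  · simp
  · simp
  · simp [J, Matrix.det_transvection_of_ne _ _ h]

lemma good_posdiag {p : ℕ} {v : Fin p → ℝ} (hv : ∀ i, 0 < v i) :
    Good (Matrix.diagonal v) := by
  refine ⟨⟨⟨fun t => Matrix.diagonal (fun i => 1 + (t : ℝ) * (v i - 1)),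
      Continuous.matrix_diagonal (by continuity)⟩, by simp, ?_⟩, fun t => ?_⟩
  · simp only [Icc.coe_one]
    funext i
    ring_nf
  · have hpos : ∀ i, 0 < 1 + (t : ℝ) * (v i - 1) := by
      intro i
      nlinarith [t.2.1, t.2.2, hv i, mul_nonneg t.2.1 (hv i).le]
    show Matrix.det (Matrix.diagonal fun i => 1 + (t : ℝ) * (v i - 1)) ≠ 0
    rw [Matrix.det_diagonal]
    exact ne_of_gt (Finset.prod_pos fun i _ => hpos i)

/-! ### sum helper -/

lemma sum_ite_fin {p : ℕ} (t : ℕ) (x : ℝ) :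
    (∑ k : Fin p, if (k : ℕ) = t then x else 0) = if t < p then x else 0 := by
  rw [Fin.sum_univ_eq_sum_range (fun k => if k = t then x else 0) p]
  rw [Finset.sum_ite_eq' (Finset.range p) t (fun _ => x)]
  simp [Finset.mem_range]

/-! ### triangular clearing matrices -/

def lowerOne {p : ℕ} (c : Fin (p+1) → ℝ) : Matrix (Fin (p+1)) (Fin (p+1)) ℝ :=
  Matrix.of fun i k => if i = k then 1 else if k = 0 then c i else 0

def upperOne {p : ℕ} (c : Fin (p+1) → ℝ) : Matrix (Fin (p+1)) (Fin (p+1)) ℝ :=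
  Matrix.of fun k j => if k = j then 1 else if k = 0 then c j else 0

lemma lowerOne_mul {p q : ℕ} (c : Fin (p+1) → ℝ) (M : Matrix (Fin (p+1)) (Fin q) ℝ)
    (i : Fin (p+1)) (j : Fin q) :
    (lowerOne c * M) i j = M i j + if i = 0 then 0 else c i * M 0 j := by
  rw [Matrix.mul_apply]
  have key : ∀ k, lowerOne c i k * M k j
      = (if k = i then M i j else 0) + (if k = 0 then (if i = 0 then 0 else c i * M 0 j) else 0) := by
    intro k
    by_cases hki : k = i
    · subst hki
      by_cases hk0 : k = 0 <;> simp [lowerOne, hk0]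
    · by_cases hk0 : k = 0
      · subst hk0
        have : i ≠ 0 := fun h => hki h.symm
        simp [lowerOne, Ne.symm hki, this, hki]
      · simp [lowerOne, Ne.symm hki, hk0, hki]
  rw [Finset.sum_congr rfl (fun k _ => key k), Finset.sum_add_distrib,
    Finset.sum_ite_eq' Finset.univ i (fun _ => M i j),
    Finset.sum_ite_eq' Finset.univ (0 : Fin (p+1)) (fun _ => if i = 0 then 0 else c i * M 0 j)]
  simp

lemma mul_upperOne {p q : ℕ} (c : Fin (p+1) → ℝ) (M : Matrix (Fin q) (Fin (p+1)) ℝ)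
    (i : Fin q) (j : Fin (p+1)) :
    (M * upperOne c) i j = M i j + if j = 0 then 0 else M i 0 * c j := by
  rw [Matrix.mul_apply]
  have key : ∀ k, M i k * upperOne c k j
      = (if k = j then M i j else 0) + (if k = 0 then (if j = 0 then 0 else M i 0 * c j) else 0) := by
    intro k
    by_cases hkj : k = j
    · subst hkj
      by_cases hk0 : k = 0 <;> simp [upperOne, hk0]
    · by_cases hk0 : k = 0
      · subst hk0
        have : j ≠ 0 := fun h => hkj h.symm
        simp [upperOne, hkj, this]
      · simp [upperOne, hkj, hk0]
  rw [Finset.sum_congr rfl (fun k _ => key k), Finset.sum_add_distrib,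
    Finset.sum_ite_eq' Finset.univ j (fun _ => M i j),
    Finset.sum_ite_eq' Finset.univ (0 : Fin (p+1)) (fun _ => if j = 0 then 0 else M i 0 * c j)]
  simp

lemma det_lowerOne {p : ℕ} (c : Fin (p+1) → ℝ) : (lowerOne c).det = 1 := by
  rw [Matrix.det_of_lowerTriangular (lowerOne c)]
  · simp [lowerOne]
  · intro i j hij
    have hlt : i < j := OrderDual.toDual_lt_toDual.mp hij
    have h1 : i ≠ j := ne_of_lt hlt
    have h2 : j ≠ 0 := by
      intro h; subst h
      simp [Fin.lt_def] at hlt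
    simp [lowerOne, h1, h2]

lemma det_upperOne {p : ℕ} (c : Fin (p+1) → ℝ) : (upperOne c).det = 1 := by
  rw [Matrix.det_of_upperTriangular]
  · simp [upperOne]
  · intro i j hij
    have hlt : j < i := hij
    have h1 : i ≠ j := (ne_of_lt hlt).symm
    have h2 : i ≠ 0 := by
      intro h; subst h
      simp [Fin.lt_def] at hlt
    simp [upperOne, h1, h2]

lemma good_lowerOne {p : ℕ} (c : Fin (p+1) → ℝ) : Good (lowerOne c) := by
  refine ⟨⟨⟨fun t => lowerOne (fun i => (t : ℝ) * c i), ?_⟩, ?_, ?_⟩, fun t => ?_⟩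
  · apply continuous_matrix
    intro i k
    by_cases hik : i = k
    · simp [lowerOne, hik]
      exact continuous_const
    · by_cases hk0 : k = 0
      · have hi0 : ¬ i = 0 := fun h => hik (h.trans hk0.symm)
        simp [lowerOne, hik, hk0, hi0]
        exact Continuous.mul continuous_subtype_val continuous_const
      · simp [lowerOne, hik, hk0]
        exact continuous_const
  · ext i k
    by_cases hik : i = k <;> simp [lowerOne, hik, Matrix.one_apply]
  · simp [lowerOne]
  · show (lowerOne fun i => (t : ℝ) * c i).det ≠ 0
    rw [det_lowerOne]; norm_num

lemma good_upperOne {p : ℕ} (c : Fin (p+1) → ℝ) : Good (upperOne c) := by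
  refine ⟨⟨⟨fun t => upperOne (fun i => (t : ℝ) * c i), ?_⟩, ?_, ?_⟩, fun t => ?_⟩
  · apply continuous_matrix
    intro k j
    by_cases hkj : k = j
    · simp [upperOne, hkj]
      exact continuous_const
    · by_cases hk0 : k = 0
      · have hj0 : ¬ j = 0 := fun h => hkj (hk0.trans h.symm)
        have h0j : ¬ (0 : Fin (p+1)) = j := fun h => hj0 h.symm
        simp [upperOne, hkj, hk0, hj0, h0j]
        exact Continuous.mul continuous_subtype_val continuous_const
      · simp [upperOne, hkj, hk0]
        exact continuous_const
  · ext k j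
    by_cases hkj : k = j <;> simp [upperOne, hkj, Matrix.one_apply]
  · simp [upperOne]
  · show (upperOne fun i => (t : ℝ) * c i).det ≠ 0
    rw [det_upperOne]; norm_num

/-! ### The canonical signed rank-`r` matrices -/

def Emat (eps : ℕ → ℝ) (m n r : ℕ) : Matrix (Fin m) (Fin n) ℝ :=
  Matrix.of fun i j => if (i : ℕ) = (j : ℕ) ∧ (i : ℕ) < r then eps i else 0

lemma rank_Emat {m n r : ℕ} {eps : ℕ → ℝ} (heps : ∀ k, k < r → eps k ≠ 0)
    (hm : r ≤ m) (hn : r ≤ n) : (Emat eps m n r).rank = r := by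
  -- upper bound : Emat = B * C with inner dimension r
  have hupper : (Emat eps m n r).rank ≤ r := by
    set B : Matrix (Fin m) (Fin r) ℝ :=
      Matrix.of fun i k => if (i : ℕ) = (k : ℕ) then eps i else 0 with hB
    set C : Matrix (Fin r) (Fin n) ℝ :=
      Matrix.of fun k j => if (k : ℕ) = (j : ℕ) then 1 else 0 with hC
    have hfac : Emat eps m n r = B * C := by
      ext i j
      rw [Matrix.mul_apply]
      have key : ∀ k : Fin r, B i k * C k j
          = if (k : ℕ) = (i : ℕ) then (if (i : ℕ) = (j : ℕ) then eps i else 0) else 0 := by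
        intro k
        simp only [hB, hC, Matrix.of_apply]
        by_cases h1 : (i : ℕ) = (k : ℕ)
        · rw [if_pos h1, if_pos h1.symm]
          by_cases h2 : (k : ℕ) = (j : ℕ)
          · rw [if_pos h2, if_pos (h1.trans h2), mul_one]
          · rw [if_neg h2, mul_zero, if_neg (fun h : (i : ℕ) = (j : ℕ) => h2 (h1.symm.trans h))]
        · rw [if_neg h1, zero_mul, if_neg (fun h : (k : ℕ) = (i : ℕ) => h1 h.symm)]
      rw [Finset.sum_congr rfl (fun k _ => key k), sum_ite_fin]
      simp only [Emat, Matrix.of_apply]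
      by_cases h1 : (i : ℕ) < r <;> by_cases h2 : (i : ℕ) = (j : ℕ) <;> simp [h1, h2]
    calc (Emat eps m n r).rank = (B * C).rank := by rw [hfac]
      _ ≤ B.rank := Matrix.rank_mul_le_left B C
      _ ≤ Fintype.card (Fin r) := Matrix.rank_le_card_width B
      _ = r := by simp
  -- lower bound : L * Emat * R is an invertible r × r diagonal matrix
  have hlower : r ≤ (Emat eps m n r).rank := by
    set L : Matrix (Fin r) (Fin m) ℝ :=
      Matrix.of fun k i => if (k : ℕ) = (i : ℕ) then 1 else 0 with hL
    set R : Matrix (Fin n) (Fin r) ℝ :=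
      Matrix.of fun j k => if (j : ℕ) = (k : ℕ) then 1 else 0 with hR
    have hLE : L * Emat eps m n r
        = Matrix.of (fun (k : Fin r) (j : Fin n) => if (k : ℕ) = (j : ℕ) then eps k else 0) := by
      ext k j
      rw [Matrix.mul_apply]
      have key : ∀ i : Fin m, L k i * Emat eps m n r i j
          = if (i : ℕ) = (k : ℕ) then (if (k : ℕ) = (j : ℕ) then eps (k : ℕ) else 0) else 0 := by
        intro i
        simp only [hL, Emat, Matrix.of_apply]
        by_cases h1 : (k : ℕ) = (i : ℕ)
        · rw [if_pos h1, if_pos h1.symm, one_mul]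
          by_cases h2 : (k : ℕ) = (j : ℕ)
          · rw [if_pos h2]
            have hir : (i : ℕ) < r := by omega
            rw [if_pos ⟨h1.symm.trans h2, hir⟩]
            rw [← h1]
          · rw [if_neg h2]
            rw [if_neg (fun h : (i : ℕ) = (j : ℕ) ∧ (i : ℕ) < r => h2 (h1.trans h.1))]
        · rw [if_neg h1, zero_mul, if_neg (fun h : (i : ℕ) = (k : ℕ) => h1 h.symm)]
      rw [Finset.sum_congr rfl (fun i _ => key i), sum_ite_fin]
      have hkm : (k : ℕ) < m := lt_of_lt_of_le k.isLt hm
      simp only [Matrix.of_apply, if_pos hkm]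
    have hLER : L * Emat eps m n r * R = Matrix.diagonal (fun k : Fin r => eps k) := by
      rw [hLE]
      ext k l
      rw [Matrix.mul_apply]
      have key : ∀ j : Fin n, (Matrix.of (fun (k : Fin r) (j : Fin n) =>
            if (k : ℕ) = (j : ℕ) then eps (k : ℕ) else 0)) k j * R j l
          = if (j : ℕ) = (k : ℕ) then (if (k : ℕ) = (l : ℕ) then eps (k : ℕ) else 0) else 0 := by
        intro j
        simp only [hR, Matrix.of_apply]
        by_cases h1 : (k : ℕ) = (j : ℕ)
        · rw [if_pos h1, if_pos h1.symm]
          by_cases h2 : (k : ℕ) = (l : ℕ)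
          · rw [if_pos (h1.symm.trans h2), if_pos h2, mul_one]
          · rw [if_neg (fun h : (j : ℕ) = (l : ℕ) => h2 (h1.trans h)), if_neg h2, mul_zero]
        · rw [if_neg h1, zero_mul, if_neg (fun h : (j : ℕ) = (k : ℕ) => h1 h.symm)]
      rw [Finset.sum_congr rfl (fun j _ => key j), sum_ite_fin]
      have hkn : (k : ℕ) < n := lt_of_lt_of_le k.isLt hn
      rw [if_pos hkn, Matrix.diagonal_apply]
      by_cases h : k = l
      · rw [if_pos h, if_pos (by rw [h])]
      · rw [if_neg h, if_neg (fun hh => h (Fin.ext hh))]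
    have hunit : IsUnit (L * Emat eps m n r * R) := by
      rw [hLER, Matrix.isUnit_iff_isUnit_det, Matrix.det_diagonal]
      rw [isUnit_iff_ne_zero]
      exact Finset.prod_ne_zero_iff.mpr fun k _ => heps k k.isLt
    have hrk : (L * Emat eps m n r * R).rank = r := by
      rw [Matrix.rank_of_isUnit _ hunit]
      simp
    calc r = (L * Emat eps m n r * R).rank := hrk.symm
      _ = (L * (Emat eps m n r * R)).rank := by rw [Matrix.mul_assoc]
      _ ≤ (Emat eps m n r * R).rank := Matrix.rank_mul_le_right L _
      _ ≤ (Emat eps m n r).rank := Matrix.rank_mul_le_left _ R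
  omega

/-! ### rank zero -/

lemma eq_zero_of_rank_zero {m n : ℕ} {A : Matrix (Fin m) (Fin n) ℝ} (h : A.rank = 0) :
    A = 0 := by
  have hbot : LinearMap.range A.mulVecLin = ⊥ := by
    rw [← Submodule.finrank_eq_zero (R := ℝ)]
    exact h
  have hzero : A.mulVecLin = 0 := LinearMap.range_eq_bot.mp hbot
  ext i j
  have h0 : A.mulVecLin (Pi.single j 1) = 0 := by rw [hzero]; rfl
  rw [Matrix.mulVecLin_apply] at h0
  have := congrFun h0 i
  simpa [Matrix.mulVec_single] using this

/-! ### the embedding of an `m × n` matrix as the lower-right block -/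

def embMat {m n : ℕ} (c : ℝ) (X : Matrix (Fin m) (Fin n) ℝ) :
    Matrix (Fin (m+1)) (Fin (n+1)) ℝ :=
  Matrix.of fun i j =>
    Fin.cases (Fin.cases c (fun _ => 0) j) (fun i' => Fin.cases 0 (fun j' => X i' j') j) i

@[simp] lemma embMat_zero_zero {m n : ℕ} (c : ℝ) (X : Matrix (Fin m) (Fin n) ℝ) :
    embMat c X 0 0 = c := rfl

@[simp] lemma embMat_zero_succ {m n : ℕ} (c : ℝ) (X : Matrix (Fin m) (Fin n) ℝ) (j : Fin n) :
    embMat c X 0 j.succ = 0 := by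
  simp [embMat]

@[simp] lemma embMat_succ_zero {m n : ℕ} (c : ℝ) (X : Matrix (Fin m) (Fin n) ℝ) (i : Fin m) :
    embMat c X i.succ 0 = 0 := by
  simp [embMat]

@[simp] lemma embMat_succ_succ {m n : ℕ} (c : ℝ) (X : Matrix (Fin m) (Fin n) ℝ)
    (i : Fin m) (j : Fin n) : embMat c X i.succ j.succ = X i j := by
  simp [embMat]

lemma embMat_mulVec {m n : ℕ} (c : ℝ) (X : Matrix (Fin m) (Fin n) ℝ) (v : Fin (n+1) → ℝ) :
    embMat c X *ᵥ v = Fin.cons (c * v 0) (X *ᵥ (v ∘ Fin.succ)) := by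
  funext i
  induction i using Fin.cases with
  | zero =>
      rw [Matrix.mulVec, dotProduct, Fin.sum_univ_succ]
      simp [Matrix.mulVec]
  | succ i' =>
      rw [Matrix.mulVec, dotProduct, Fin.sum_univ_succ]
      simp [Matrix.mulVec, dotProduct]

lemma rank_embMat {m n : ℕ} {c : ℝ} (hc : c ≠ 0) (X : Matrix (Fin m) (Fin n) ℝ) :
    (embMat c X).rank = X.rank + 1 := by
  classical
  have hker : ∀ v : Fin (n+1) → ℝ,
      v ∈ LinearMap.ker (embMat c X).mulVecLin ↔ v 0 = 0 ∧ (v ∘ Fin.succ) ∈ LinearMap.ker X.mulVecLin := by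
    intro v
    rw [LinearMap.mem_ker, LinearMap.mem_ker]
    show embMat c X *ᵥ v = 0 ↔ _
    rw [embMat_mulVec]
    constructor
    · intro h
      have h0 : c * v 0 = 0 ∧ (X *ᵥ (v ∘ Fin.succ)) = 0 := by
        constructor
        · have := congrFun h 0
          simpa using this
        · funext i'
          have := congrFun h i'.succ
          simpa using this
      exact ⟨by rcases mul_eq_zero.mp h0.1 with h | h; exact absurd h hc; exact h,
        h0.2⟩
    · rintro ⟨h1, h2⟩
      funext i
      induction i using Fin.cases with
      | zero => simp [h1]
      | succ i' =>
          have := congrFun h2 i'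
          simpa using this
  -- the kernels are linearly equivalent
  let e : LinearMap.ker (embMat c X).mulVecLin ≃ₗ[ℝ] LinearMap.ker X.mulVecLin :=
    { toFun := fun v => ⟨(v : Fin (n+1) → ℝ) ∘ Fin.succ, ((hker v).mp v.2).2⟩
      map_add' := by intro v w; ext i; rfl
      map_smul' := by intro a v; ext i; rfl
      invFun := fun w => ⟨Fin.cons 0 (w : Fin n → ℝ), by
        rw [hker]
        constructor
        · simp
        · have : (Fin.cons (0:ℝ) (w : Fin n → ℝ)) ∘ Fin.succ = (w : Fin n → ℝ) := by
            funext i; simp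
          rw [this]
          exact w.2⟩
      left_inv := by
        intro v
        ext i
        induction i using Fin.cases with
        | zero =>
            simp only [Fin.cons_zero]
            exact (((hker v).mp v.2).1).symm
        | succ i' => simp
      right_inv := by
        intro w
        ext i
        simp }
  have hkereq : Module.finrank ℝ (LinearMap.ker (embMat c X).mulVecLin)
      = Module.finrank ℝ (LinearMap.ker X.mulVecLin) := e.finrank_eq
  have h1 := LinearMap.finrank_range_add_finrank_ker (embMat c X).mulVecLin
  have h2 := LinearMap.finrank_range_add_finrank_ker X.mulVecLin
  rw [Module.finrank_fin_fun] at h1 h2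
  have hr1 : (embMat c X).rank = Module.finrank ℝ (LinearMap.range (embMat c X).mulVecLin) := rfl
  have hr2 : X.rank = Module.finrank ℝ (LinearMap.range X.mulVecLin) := rfl
  omega

lemma embJoin {m n ρ : ℕ} {c : ℝ} (hc : c ≠ 0) {X Y : Matrix (Fin m) (Fin n) ℝ}
    (h : JoinedIn {M : Matrix (Fin m) (Fin n) ℝ | M.rank = ρ} X Y) :
    JoinedIn {M : Matrix (Fin (m+1)) (Fin (n+1)) ℝ | M.rank = ρ + 1}
      (embMat c X) (embMat c Y) := by
  obtain ⟨γ, hγ⟩ := h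
  refine ⟨⟨⟨fun t => embMat c (γ t), ?_⟩, by simp, by simp⟩, fun t => ?_⟩
  · apply continuous_matrix
    intro i j
    induction i using Fin.cases with
    | zero =>
        induction j using Fin.cases with
        | zero => simpa using continuous_const
        | succ j' => simpa using continuous_const
    | succ i' =>
        induction j using Fin.cases with
        | zero => simpa using continuous_const
        | succ j' =>
            simp only [embMat_succ_succ]
            exact γ.continuous.matrix_elem i' j'
  · show (embMat c (γ t)).rank = ρ + 1
    rw [rank_embMat hc]
    have := hγ t
    simp only [mem_setOf_eq] at this
    rw [this]

lemma stdBasis_mul_apply {m n : ℕ} (i j a : Fin m) (b : Fin n) (c : ℝ)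
    (M : Matrix (Fin m) (Fin n) ℝ) :
    (Matrix.single i j c * M) a b = if a = i then c * M j b else 0 := by
  rw [Matrix.mul_apply]
  have key : ∀ k : Fin m, Matrix.single i j c a k * M k b
      = if k = j then (if a = i then c * M j b else 0) else 0 := by
    intro k
    rw [Matrix.single]
    simp only [Matrix.of_apply]
    by_cases hkj : k = j
    · subst hkj
      by_cases hai : a = i
      · rw [if_pos ⟨hai.symm, rfl⟩, if_pos rfl, if_pos hai]
      · rw [if_neg (fun h : i = a ∧ k = k => hai h.1.symm), zero_mul, if_pos rfl, if_neg hai]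
    · rw [if_neg (fun h : i = a ∧ j = k => hkj h.2.symm), zero_mul, if_neg hkj]
  rw [Finset.sum_congr rfl (fun k _ => key k),
    Finset.sum_ite_eq' Finset.univ j (fun _ => if a = i then c * M j b else 0)]
  simp

lemma mul_stdBasis_apply {m n : ℕ} (i j : Fin n) (a : Fin m) (b : Fin n) (c : ℝ)
    (M : Matrix (Fin m) (Fin n) ℝ) :
    (M * Matrix.single i j c) a b = if b = j then M a i * c else 0 := by
  rw [Matrix.mul_apply]
  have key : ∀ k : Fin n, M a k * Matrix.single i j c k b
      = if k = i then (if b = j then M a i * c else 0) else 0 := by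
    intro k
    rw [Matrix.single]
    simp only [Matrix.of_apply]
    by_cases hki : k = i
    · subst hki
      by_cases hbj : b = j
      · rw [if_pos ⟨rfl, hbj.symm⟩, if_pos rfl, if_pos hbj]
      · rw [if_neg (fun h : k = k ∧ j = b => hbj h.2.symm), mul_zero, if_pos rfl, if_neg hbj]
    · rw [if_neg (fun h : i = k ∧ j = b => hki h.1.symm), mul_zero, if_neg hki]
  rw [Finset.sum_congr rfl (fun k _ => key k),
    Finset.sum_ite_eq' Finset.univ i (fun _ => if b = j then M a i * c else 0)]
  simp

lemma tmul_same {m n : ℕ} (i j : Fin m) (b : Fin n) (c : ℝ) (M : Matrix (Fin m) (Fin n) ℝ) :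
    (Matrix.transvection i j c * M) i b = M i b + c * M j b := by
  rw [Matrix.transvection, Matrix.add_mul, Matrix.add_apply, Matrix.one_mul,
    stdBasis_mul_apply, if_pos rfl]

lemma tmul_ne {m n : ℕ} {i a : Fin m} (j : Fin m) (b : Fin n) (ha : a ≠ i) (c : ℝ)
    (M : Matrix (Fin m) (Fin n) ℝ) :
    (Matrix.transvection i j c * M) a b = M a b := by
  rw [Matrix.transvection, Matrix.add_mul, Matrix.add_apply, Matrix.one_mul,
    stdBasis_mul_apply, if_neg ha, add_zero]

lemma mult_same {m n : ℕ} (i j : Fin n) (a : Fin m) (c : ℝ) (M : Matrix (Fin m) (Fin n) ℝ) :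
    (M * Matrix.transvection i j c) a j = M a j + M a i * c := by
  rw [Matrix.transvection, Matrix.mul_add, Matrix.add_apply, Matrix.mul_one,
    mul_stdBasis_apply, if_pos rfl]

lemma mult_ne {m n : ℕ} {i j b : Fin n} (a : Fin m) (hb : b ≠ j) (c : ℝ)
    (M : Matrix (Fin m) (Fin n) ℝ) :
    (M * Matrix.transvection i j c) a b = M a b := by
  rw [Matrix.transvection, Matrix.mul_add, Matrix.add_apply, Matrix.mul_one,
    mul_stdBasis_apply, if_neg hb, add_zero]

lemma moveL' {p q ρ : ℕ} {P : Matrix (Fin p) (Fin p) ℝ} (hP : Good P)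
    (A : Matrix (Fin p) (Fin q) ℝ) (hA : A.rank = ρ) :
    JoinedIn {M : Matrix (Fin p) (Fin q) ℝ | M.rank = ρ} A (P * A) := by
  subst hA; exact moveL hP A

lemma moveR' {p q ρ : ℕ} {Q : Matrix (Fin q) (Fin q) ℝ} (hQ : Good Q)
    (A : Matrix (Fin p) (Fin q) ℝ) (hA : A.rank = ρ) :
    JoinedIn {M : Matrix (Fin p) (Fin q) ℝ | M.rank = ρ} A (A * Q) := by
  subst hA; exact moveR hQ A

/-- Flipping the sign of row `a`, in the presence of a zero row `b`. -/
lemma rowflip {m n ρ : ℕ} (M : Matrix (Fin m) (Fin n) ℝ) (a b : Fin m) (hab : a ≠ b)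
    (hb : ∀ j, M b j = 0) (hrk : M.rank = ρ) :
    JoinedIn {N : Matrix (Fin m) (Fin n) ℝ | N.rank = ρ} M
      (Matrix.updateRow M a (fun j => -(M a j))) := by
  classical
  set M1 := Matrix.transvection b a (1:ℝ) * M with hM1
  set M2 := Matrix.transvection a b (-2:ℝ) * M1 with hM2
  set M3 := Matrix.transvection b a (1:ℝ) * M2 with hM3
  have e1 : ∀ x, M1 b x = M a x := by
    intro x
    rw [hM1, tmul_same, hb x, one_mul, zero_add]
  have e2 : ∀ x, M1 a x = M a x := by
    intro x
    rw [hM1, tmul_ne _ _ hab]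
  have e3 : ∀ x y, y ≠ a → y ≠ b → M1 y x = M y x := by
    intro x y _ hyb
    rw [hM1, tmul_ne _ _ hyb]
  have f1 : ∀ x, M2 a x = -(M a x) := by
    intro x
    rw [hM2, tmul_same, e2, e1]; ring
  have f2 : ∀ x y, y ≠ a → M2 y x = M1 y x := by
    intro x y hya
    rw [hM2, tmul_ne _ _ hya]
  have g1 : ∀ x, M3 b x = 0 := by
    intro x
    rw [hM3, tmul_same, f2 _ _ hab.symm, f1, e1]; ring
  have g2 : ∀ x y, y ≠ b → M3 y x = M2 y x := by
    intro x y hyb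
    rw [hM3, tmul_ne _ _ hyb]
  have hfinal : M3 = Matrix.updateRow M a (fun j => -(M a j)) := by
    ext i j
    by_cases hia : i = a
    · subst hia
      rw [g2 _ _ hab, f1, Matrix.updateRow_self]
    · by_cases hib : i = b
      · subst hib
        rw [g1, Matrix.updateRow_ne hia, hb]
      · rw [g2 _ _ hib, f2 _ _ hia, e3 _ _ hia hib, Matrix.updateRow_ne hia]
  have j1 := moveL' (good_transvection hab.symm (1:ℝ)) M hrk
  have h1 : M1.rank = ρ := j1.target_mem
  have j2 := moveL' (good_transvection hab (-2:ℝ)) M1 h1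
  have h2 : M2.rank = ρ := j2.target_mem
  have j3 := moveL' (good_transvection hab.symm (1:ℝ)) M2 h2
  rw [← hM1] at j1
  rw [← hM2] at j2
  rw [← hM3] at j3
  rw [hfinal] at j3
  exact (j1.trans j2).trans j3

/-- Flipping the sign of column `a`, in the presence of a zero column `b`. -/
lemma colflip {m n ρ : ℕ} (M : Matrix (Fin m) (Fin n) ℝ) (a b : Fin n) (hab : a ≠ b)
    (hb : ∀ i, M i b = 0) (hrk : M.rank = ρ) :
    JoinedIn {N : Matrix (Fin m) (Fin n) ℝ | N.rank = ρ} M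
      (Matrix.updateCol M a (fun i => -(M i a))) := by
  classical
  set M1 := M * Matrix.transvection a b (1:ℝ) with hM1
  set M2 := M1 * Matrix.transvection b a (-2:ℝ) with hM2
  set M3 := M2 * Matrix.transvection a b (1:ℝ) with hM3
  have e1 : ∀ x, M1 x b = M x a := by
    intro x
    rw [hM1, mult_same, hb x, zero_add, mul_one]
  have e2 : ∀ x, M1 x a = M x a := by
    intro x
    rw [hM1, mult_ne _ hab]
  have e3 : ∀ x y, y ≠ a → y ≠ b → M1 x y = M x y := by
    intro x y _ hyb
    rw [hM1, mult_ne _ hyb]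
  have f1 : ∀ x, M2 x a = -(M x a) := by
    intro x
    rw [hM2, mult_same, e2, e1]; ring
  have f2 : ∀ x y, y ≠ a → M2 x y = M1 x y := by
    intro x y hya
    rw [hM2, mult_ne _ hya]
  have g1 : ∀ x, M3 x b = 0 := by
    intro x
    rw [hM3, mult_same, f2 _ _ hab.symm, f1, e1]; ring
  have g2 : ∀ x y, y ≠ b → M3 x y = M2 x y := by
    intro x y hyb
    rw [hM3, mult_ne _ hyb]
  have hfinal : M3 = Matrix.updateCol M a (fun i => -(M i a)) := by
    ext i j
    by_cases hja : j = a
    · subst hja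
      rw [g2 _ _ hab, f1, Matrix.updateCol_self]
    · by_cases hjb : j = b
      · subst hjb
        rw [g1, Matrix.updateCol_ne hja, hb]
      · rw [g2 _ _ hjb, f2 _ _ hja, e3 _ _ hja hjb, Matrix.updateCol_ne hja]
  have j1 := moveR' (good_transvection hab (1:ℝ)) M hrk
  have h1 : M1.rank = ρ := j1.target_mem
  have j2 := moveR' (good_transvection hab.symm (-2:ℝ)) M1 h1
  have h2 : M2.rank = ρ := j2.target_mem
  have j3 := moveR' (good_transvection hab (1:ℝ)) M2 h2
  rw [← hM1] at j1
  rw [← hM2] at j2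
  rw [← hM3] at j3
  rw [hfinal] at j3
  exact (j1.trans j2).trans j3

/-- Move row `i0` of `A` into row `z`, staying in the fixed-rank set. -/
lemma pivotRow {m n ρ : ℕ} (A : Matrix (Fin m) (Fin n) ℝ) (hA : A.rank = ρ)
    (i0 z : Fin m) :
    ∃ B, JoinedIn {M : Matrix (Fin m) (Fin n) ℝ | M.rank = ρ} A B ∧ ∀ x, B z x = A i0 x := by
  classical
  by_cases h : i0 = z
  · exact ⟨A, JoinedIn.refl hA, fun x => by rw [h]⟩
  · have hz : z ≠ i0 := fun hh => h hh.symm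
    set M1 := Matrix.transvection z i0 (1:ℝ) * A with hM1
    set M2 := Matrix.transvection i0 z (-1:ℝ) * M1 with hM2
    set M3 := Matrix.transvection z i0 (1:ℝ) * M2 with hM3
    have e1 : ∀ x, M1 z x = A z x + A i0 x := by
      intro x; rw [hM1, tmul_same, one_mul]
    have e2 : ∀ x y, y ≠ z → M1 y x = A y x := by
      intro x y hy; rw [hM1, tmul_ne _ _ hy]
    have f1 : ∀ x, M2 i0 x = -(A z x) := by
      intro x; rw [hM2, tmul_same, e1, e2 _ _ h]; ring
    have f2 : ∀ x y, y ≠ i0 → M2 y x = M1 y x := by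
      intro x y hy; rw [hM2, tmul_ne _ _ hy]
    have g1 : ∀ x, M3 z x = A i0 x := by
      intro x; rw [hM3, tmul_same, f2 _ _ hz, f1, e1]; ring
    have j1 := moveL' (good_transvection hz (1:ℝ)) A hA
    have h1 : M1.rank = ρ := j1.target_mem
    have j2 := moveL' (good_transvection h (-1:ℝ)) M1 h1
    have h2 : M2.rank = ρ := j2.target_mem
    have j3 := moveL' (good_transvection hz (1:ℝ)) M2 h2
    rw [← hM1] at j1; rw [← hM2] at j2; rw [← hM3] at j3
    exact ⟨M3, (j1.trans j2).trans j3, g1⟩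

/-- Move column `j0` of `A` into column `z`, staying in the fixed-rank set. -/
lemma pivotCol {m n ρ : ℕ} (A : Matrix (Fin m) (Fin n) ℝ) (hA : A.rank = ρ)
    (j0 z : Fin n) :
    ∃ B, JoinedIn {M : Matrix (Fin m) (Fin n) ℝ | M.rank = ρ} A B ∧ ∀ x, B x z = A x j0 := by
  classical
  by_cases h : j0 = z
  · exact ⟨A, JoinedIn.refl hA, fun x => by rw [h]⟩
  · have hz : z ≠ j0 := fun hh => h hh.symm
    set M1 := A * Matrix.transvection j0 z (1:ℝ) with hM1
    set M2 := M1 * Matrix.transvection z j0 (-1:ℝ) with hM2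
    set M3 := M2 * Matrix.transvection j0 z (1:ℝ) with hM3
    have e1 : ∀ x, M1 x z = A x z + A x j0 := by
      intro x; rw [hM1, mult_same, mul_one]
    have e2 : ∀ x y, y ≠ z → M1 x y = A x y := by
      intro x y hy; rw [hM1, mult_ne _ hy]
    have f1 : ∀ x, M2 x j0 = -(A x z) := by
      intro x; rw [hM2, mult_same, e1, e2 _ _ h]; ring
    have f2 : ∀ x y, y ≠ j0 → M2 x y = M1 x y := by
      intro x y hy; rw [hM2, mult_ne _ hy]
    have g1 : ∀ x, M3 x z = A x j0 := by
      intro x; rw [hM3, mult_same, f2 _ _ hz, f1, e1]; ring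
    have j1 := moveR' (good_transvection h (1:ℝ)) A hA
    have h1 : M1.rank = ρ := by rw [hM1]; exact j1.target_mem
    have j2 := moveR' (good_transvection hz (-1:ℝ)) M1 h1
    have h2 : M2.rank = ρ := by rw [hM2]; exact j2.target_mem
    have j3 := moveR' (good_transvection h (1:ℝ)) M2 h2
    rw [← hM1] at j1; rw [← hM2] at j2; rw [← hM3] at j3
    exact ⟨M3, (j1.trans j2).trans j3, g1⟩

/-- Every rank-`r` matrix is joined, within the rank-`r` matrices, to a signed
canonical matrix. -/
theorem toE (r : ℕ) : ∀ (m n : ℕ) (A : Matrix (Fin m) (Fin n) ℝ), A.rank = r →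
    ∃ eps : ℕ → ℝ, (∀ k, eps k = 1 ∨ eps k = -1) ∧
      JoinedIn {M : Matrix (Fin m) (Fin n) ℝ | M.rank = r} A (Emat eps m n r) := by
  induction r with
  | zero =>
      intro m n A hA
      refine ⟨fun _ => 1, fun k => Or.inl rfl, ?_⟩
      have hA0 : A = 0 := eq_zero_of_rank_zero hA
      have hE : Emat (fun _ => 1) m n 0 = 0 := by
        ext i j; simp [Emat]
      rw [hA0, hE]
      exact JoinedIn.refl (by simp [Matrix.rank_zero] : (0 : Matrix (Fin m) (Fin n) ℝ).rank = 0)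
  | succ r IH =>
      intro m n A hA
      have hA0 : A ≠ 0 := by
        intro h; rw [h, Matrix.rank_zero] at hA; omega
      obtain ⟨i0, j0, hij⟩ : ∃ i j, A i j ≠ 0 := by
        by_contra h
        push_neg at h
        exact hA0 (by ext i j; simpa using h i j)
      obtain ⟨m0, rfl⟩ : ∃ m0, m = m0 + 1 := ⟨m - 1, by have := i0.pos; omega⟩
      obtain ⟨n0, rfl⟩ : ∃ n0, n = n0 + 1 := ⟨n - 1, by have := j0.pos; omega⟩
      -- step 1 : pivot into position (0,0)
      obtain ⟨B, jAB, hB⟩ := pivotRow A hA i0 0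
      have hBrk : B.rank = r + 1 := jAB.target_mem
      obtain ⟨C, jBC, hC⟩ := pivotCol B hBrk j0 0
      have hCrk : C.rank = r + 1 := jBC.target_mem
      have hC00 : C 0 0 ≠ 0 := by
        rw [hC 0, hB j0]; exact hij
      set a : ℝ := C 0 0 with ha
      -- step 2 : scale row 0 by |a|⁻¹
      have hapos : 0 < |a| := abs_pos.mpr hC00
      set D := Matrix.diagonal (fun i : Fin (m0+1) => if i = 0 then |a|⁻¹ else 1) with hD
      have hDgood : Good D := by
        apply good_posdiag
        intro i
        by_cases h : i = 0 <;> simp [h, inv_pos, hapos]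
      have jCD := moveL' hDgood C hCrk
      set A2 := D * C with hA2
      have hA2rk : A2.rank = r + 1 := jCD.target_mem
      have hA2app : ∀ i j, A2 i j = (if i = 0 then |a|⁻¹ else 1) * C i j := by
        intro i j; rw [hA2, hD, Matrix.diagonal_mul]
      set η : ℝ := |a|⁻¹ * a with hη
      have hA200 : A2 0 0 = η := by rw [hA2app, if_pos rfl, ← ha]
      have hηval : η = 1 ∨ η = -1 := by
        rcases hC00.lt_or_gt with h | h
        · right
          rw [hη, abs_of_neg h, inv_neg, neg_mul, inv_mul_cancel₀ (ne_of_lt h)]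
        · left
          rw [hη, abs_of_pos h, inv_mul_cancel₀ (ne_of_gt h)]
      have hηne : η ≠ 0 := by rcases hηval with h | h <;> rw [h] <;> norm_num
      have hη2 : η * η = 1 := by rcases hηval with h | h <;> rw [h] <;> norm_num
      -- step 3 : clear column 0
      set cvec : Fin (m0+1) → ℝ := fun i => -(A2 i 0) * η with hcvec
      set A3 := lowerOne cvec * A2 with hA3
      have jA23 := moveL' (good_lowerOne cvec) A2 hA2rk
      rw [← hA3] at jA23
      have hA3rk : A3.rank = r + 1 := jA23.target_mem
      have hA3app : ∀ i j, A3 i j = A2 i j + if i = 0 then 0 else cvec i * A2 0 j := by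
        intro i j; rw [hA3, lowerOne_mul]
      have hA3row0 : ∀ j, A3 0 j = A2 0 j := by
        intro j; rw [hA3app, if_pos rfl, add_zero]
      have hA300 : A3 0 0 = η := by rw [hA3row0, hA200]
      have hA3col0 : ∀ i, i ≠ 0 → A3 i 0 = 0 := by
        intro i hi
        have hkey : A2 i 0 + cvec i * A2 0 0 = A2 i 0 * (1 - η * η) := by
          simp only [hcvec]; rw [hA200]; ring
        rw [hA3app, if_neg hi, hkey, hη2]; ring
      -- step 4 : clear row 0
      set dvec : Fin (n0+1) → ℝ := fun j => -(A3 0 j) * η with hdvec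
      set A4 := A3 * upperOne dvec with hA4
      have jA34 := moveR' (good_upperOne dvec) A3 hA3rk
      rw [← hA4] at jA34
      have hA4rk : A4.rank = r + 1 := jA34.target_mem
      have hA4app : ∀ i j, A4 i j = A3 i j + if j = 0 then 0 else A3 i 0 * dvec j := by
        intro i j; rw [hA4, mul_upperOne]
      have hA400 : A4 0 0 = η := by
        rw [hA4app, if_pos rfl, add_zero, hA300]
      have hA4row0 : ∀ j, j ≠ 0 → A4 0 j = 0 := by
        intro j hj
        have hkey : A3 0 j + A3 0 0 * dvec j = A3 0 j * (1 - η * η) := by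
          simp only [hdvec]; rw [hA300]; ring
        rw [hA4app, if_neg hj, hkey, hη2]; ring
      have hA4col0 : ∀ i, i ≠ 0 → A4 i 0 = 0 := by
        intro i hi
        rw [hA4app, if_pos rfl, add_zero]
        exact hA3col0 i hi
      have hA4rest : ∀ i j, i ≠ 0 → j ≠ 0 → A4 i j = A3 i j := by
        intro i j hi hj
        rw [hA4app, if_neg hj, hA3col0 i hi, zero_mul, add_zero]
      -- step 5 : recognize the block structure
      set X : Matrix (Fin m0) (Fin n0) ℝ :=
        Matrix.of fun i j => A4 i.succ j.succ with hX
      have hemb : A4 = embMat η X := by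
        ext i j
        induction i using Fin.cases with
        | zero =>
            induction j using Fin.cases with
            | zero => rw [embMat_zero_zero, hA400]
            | succ j' => rw [embMat_zero_succ, hA4row0 _ (Fin.succ_ne_zero j')]
        | succ i' =>
            induction j using Fin.cases with
            | zero => rw [embMat_succ_zero, hA4col0 _ (Fin.succ_ne_zero i')]
            | succ j' => rw [embMat_succ_succ]; rfl
      have hXrank : X.rank = r := by
        have h1 : (embMat η X).rank = X.rank + 1 := rank_embMat hηne X
        rw [← hemb, hA4rk] at h1
        omega
      -- induction hypothesis
      obtain ⟨eps, heps, jX⟩ := IH m0 n0 X hXrank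
      have jEmb := embJoin hηne jX
      rw [← hemb] at jEmb
      -- assemble the sign vector
      set eps' : ℕ → ℝ := fun k => if k = 0 then η else eps (k-1) with heps'
      have heps'val : ∀ k, eps' k = 1 ∨ eps' k = -1 := by
        intro k
        simp only [heps']
        by_cases h : k = 0
        · rw [if_pos h]; exact hηval
        · rw [if_neg h]; exact heps (k-1)
      have hfin : embMat η (Emat eps m0 n0 r) = Emat eps' (m0+1) (n0+1) (r+1) := by
        ext i j
        induction i using Fin.cases with
        | zero =>
            induction j using Fin.cases with
            | zero =>
                rw [embMat_zero_zero]
                show η = Emat eps' (m0+1) (n0+1) (r+1) 0 0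
                rw [Emat, Matrix.of_apply, if_pos ⟨rfl, Nat.succ_pos r⟩]
                simp [heps']
            | succ j' =>
                rw [embMat_zero_succ]
                show (0:ℝ) = Emat eps' (m0+1) (n0+1) (r+1) 0 j'.succ
                rw [Emat, Matrix.of_apply, if_neg]
                intro hcon
                have : (0 : ℕ) = (j' : ℕ) + 1 := by
                  simpa [Fin.val_succ] using hcon.1
                omega
        | succ i' =>
            induction j using Fin.cases with
            | zero =>
                rw [embMat_succ_zero]
                show (0:ℝ) = Emat eps' (m0+1) (n0+1) (r+1) i'.succ 0
                rw [Emat, Matrix.of_apply, if_neg]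
                intro hcon
                have : (i' : ℕ) + 1 = 0 := by
                  simpa [Fin.val_succ] using hcon.1
                omega
            | succ j' =>
                rw [embMat_succ_succ]
                show Emat eps m0 n0 r i' j' = Emat eps' (m0+1) (n0+1) (r+1) i'.succ j'.succ
                rw [Emat, Emat, Matrix.of_apply, Matrix.of_apply]
                by_cases h : (i' : ℕ) = (j' : ℕ) ∧ (i' : ℕ) < r
                · rw [if_pos h, if_pos (by simp [Fin.val_succ]; omega)]
                  simp only [heps', Fin.val_succ]
                  rw [if_neg (by omega)]
                  simp
                · rw [if_neg h, if_neg (by simp [Fin.val_succ]; omega)]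
      rw [hfin] at jEmb
      exact ⟨eps', heps'val,
        (((((jAB.trans jBC).trans jCD).trans jA23).trans jA34).trans jEmb)⟩

lemma signfix {m n r : ℕ} (hm : r ≤ m) (hn : r ≤ n) (hmax : r < max m n) :
    ∀ (c : ℕ) (eps : ℕ → ℝ), (∀ k, eps k = 1 ∨ eps k = -1) →
    ((Finset.range r).filter (fun k => eps k = -1)).card = c →
    JoinedIn {M : Matrix (Fin m) (Fin n) ℝ | M.rank = r}
      (Emat eps m n r) (Emat (fun _ => 1) m n r) := by
  intro c
  induction c with
  | zero =>
      intro eps heps hcard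
      have hone : ∀ k, k < r → eps k = 1 := by
        intro k hk
        rcases heps k with h | h
        · exact h
        · exfalso
          have hmem : k ∈ (Finset.range r).filter (fun k => eps k = -1) :=
            Finset.mem_filter.mpr ⟨Finset.mem_range.mpr hk, h⟩
          rw [Finset.card_eq_zero.mp hcard] at hmem
          exact absurd hmem (Finset.notMem_empty k)
      have hEq : Emat eps m n r = Emat (fun _ => 1) m n r := by
        ext i j
        rw [Emat, Emat, Matrix.of_apply, Matrix.of_apply]
        by_cases h : (i : ℕ) = (j : ℕ) ∧ (i : ℕ) < r
        · rw [if_pos h, if_pos h, hone _ h.2]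
        · rw [if_neg h, if_neg h]
      rw [hEq]
      exact JoinedIn.refl (rank_Emat (fun k _ => one_ne_zero) hm hn)
  | succ c ihc =>
      intro eps heps hcard
      have hpos : 0 < ((Finset.range r).filter (fun k => eps k = -1)).card := by omega
      obtain ⟨k, hk⟩ := Finset.card_pos.mp hpos
      have hkr : k < r := Finset.mem_range.mp (Finset.mem_filter.mp hk).1
      have hkneg : eps k = -1 := (Finset.mem_filter.mp hk).2
      set eps2 : ℕ → ℝ := fun x => if x = k then 1 else eps x with heps2def
      have heps2 : ∀ x, eps2 x = 1 ∨ eps2 x = -1 := by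
        intro x
        simp only [heps2def]
        by_cases h : x = k
        · rw [if_pos h]; exact Or.inl rfl
        · rw [if_neg h]; exact heps x
      have hfilter : (Finset.range r).filter (fun x => eps2 x = -1)
          = ((Finset.range r).filter (fun x => eps x = -1)).erase k := by
        ext x
        simp only [Finset.mem_filter, Finset.mem_erase, heps2def]
        constructor
        · rintro ⟨hx, hval⟩
          by_cases h : x = k
          · rw [if_pos h] at hval; norm_num at hval
          · rw [if_neg h] at hval
            exact ⟨h, hx, hval⟩
        · rintro ⟨h, hx, hval⟩
          rw [if_neg h]
          exact ⟨hx, hval⟩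
      have hcard2 : ((Finset.range r).filter (fun x => eps2 x = -1)).card = c := by
        rw [hfilter, Finset.card_erase_of_mem hk, hcard]
        omega
      have hrk : (Emat eps m n r).rank = r :=
        rank_Emat (fun x _ => by rcases heps x with h | h <;> rw [h] <;> norm_num) hm hn
      have hstep : JoinedIn {M : Matrix (Fin m) (Fin n) ℝ | M.rank = r}
          (Emat eps m n r) (Emat eps2 m n r) := by
        by_cases hrm : r < m
        · set a : Fin m := ⟨k, lt_of_lt_of_le hkr hm⟩ with hadef
          set b : Fin m := ⟨r, hrm⟩ with hbdef
          have hab : a ≠ b := by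
            intro h
            have := congrArg Fin.val h
            simp [hadef, hbdef] at this
            omega
          have hbzero : ∀ j, Emat eps m n r b j = 0 := by
            intro j
            rw [Emat, Matrix.of_apply, if_neg]
            rintro ⟨_, hcon⟩
            simp [hbdef] at hcon
          have jflip := rowflip (Emat eps m n r) a b hab hbzero hrk
          have hupd : (Emat eps m n r).updateRow a (fun j => -(Emat eps m n r a j))
              = Emat eps2 m n r := by
            ext i j
            by_cases hia : i = a
            · subst hia
              rw [Matrix.updateRow_self]
              rw [Emat, Emat, Matrix.of_apply, Matrix.of_apply]
              by_cases h : (a : ℕ) = (j : ℕ) ∧ (a : ℕ) < r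
              · rw [if_pos h, if_pos h]
                have hik : (a : ℕ) = k := by simp [hadef]
                rw [hik]
                simp only [heps2def]
                rw [hkneg]
                simp
              · rw [if_neg h, if_neg h, neg_zero]
            · rw [Matrix.updateRow_ne hia]
              rw [Emat, Emat, Matrix.of_apply, Matrix.of_apply]
              have hik : (i : ℕ) ≠ k := by
                intro h
                exact hia (Fin.ext (by simp [hadef, h]))
              by_cases h : (i : ℕ) = (j : ℕ) ∧ (i : ℕ) < r
              · rw [if_pos h, if_pos h]
                simp only [heps2def]
                rw [if_neg hik]
              · rw [if_neg h, if_neg h]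
          rw [hupd] at jflip
          exact jflip
        · have hrn : r < n := by
            rcases lt_or_ge r n with h | h
            · exact h
            · exfalso
              have := max_le (not_lt.mp hrm) h
              omega
          set a : Fin n := ⟨k, lt_of_lt_of_le hkr hn⟩ with hadef
          set b : Fin n := ⟨r, hrn⟩ with hbdef
          have hab : a ≠ b := by
            intro h
            have := congrArg Fin.val h
            simp [hadef, hbdef] at this
            omega
          have hbzero : ∀ i, Emat eps m n r i b = 0 := by
            intro i
            rw [Emat, Matrix.of_apply, if_neg]
            rintro ⟨hcon1, hcon2⟩
            simp [hbdef] at hcon1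
            omega
          have jflip := colflip (Emat eps m n r) a b hab hbzero hrk
          have hupd : (Emat eps m n r).updateCol a (fun i => -(Emat eps m n r i a))
              = Emat eps2 m n r := by
            ext i j
            by_cases hja : j = a
            · subst hja
              rw [Matrix.updateCol_self]
              rw [Emat, Emat, Matrix.of_apply, Matrix.of_apply]
              by_cases h : (i : ℕ) = (a : ℕ) ∧ (i : ℕ) < r
              · rw [if_pos h, if_pos h]
                have hik : (i : ℕ) = k := by
                  have hak : (a : ℕ) = k := by simp [hadef]
                  omega
                rw [hik]
                simp only [heps2def]
                rw [hkneg]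
                simp
              · rw [if_neg h, if_neg h, neg_zero]
            · rw [Matrix.updateCol_ne hja]
              rw [Emat, Emat, Matrix.of_apply, Matrix.of_apply]
              by_cases h : (i : ℕ) = (j : ℕ) ∧ (i : ℕ) < r
              · rw [if_pos h, if_pos h]
                have hik : (i : ℕ) ≠ k := by
                  intro hcon
                  apply hja
                  apply Fin.ext
                  have hak : (a : ℕ) = k := by simp [hadef]
                  omega
                simp only [heps2def]
                rw [if_neg hik]
              · rw [if_neg h, if_neg h]
          rw [hupd] at jflip
          exact jflip
      exact hstep.trans (ihc eps2 heps2 hcard2)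

end RankConn

theorem stmt1 (m n r : ℕ) (h1 : 1 ≤ r) (h2 : r ≤ min m n) (h3 : r < max m n) :
    IsPathConnected {A : Matrix (Fin m) (Fin n) ℝ | A.rank = r} := by
  have hm : r ≤ m := le_trans h2 (min_le_left m n)
  have hn : r ≤ n := le_trans h2 (min_le_right m n)
  have hbase : (RankConn.Emat (fun _ => 1) m n r).rank = r :=
    RankConn.rank_Emat (fun k _ => one_ne_zero) hm hn
  refine ⟨RankConn.Emat (fun _ => 1) m n r, hbase, ?_⟩
  intro A hA
  obtain ⟨eps, heps, j1⟩ := RankConn.toE r m n A hA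
  have j2 := RankConn.signfix hm hn h3
    (((Finset.range r).filter (fun k => eps k = -1)).card) eps heps rfl
  exact (j1.trans j2).symm
end
end

section
/- Let m, n, r be natural numbers with 1 ≤ r ≤ min(m, n). Then the set {A ∈ ℂ^{m×n} : rank(A) = r} of complex m×n matrices of rank exactly r is path-connected. -/
open Matrix Polynomial

lemma joined_one_of_isUnit_det (k : ℕ) (P : Matrix (Fin k) (Fin k) ℂ) (hP : IsUnit P.det) :
    ∃ γ : Path (1 : Matrix (Fin k) (Fin k) ℂ) P, ∀ t, IsUnit ((γ t).det) := by
  set M : Matrix (Fin k) (Fin k) ℂ[X] := (1 - X : ℂ[X]) • 1 + (X : ℂ[X]) • P.map C with hM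
  set p : ℂ[X] := M.det with hp
  have key : ∀ z : ℂ, p.eval z = ((1 - z) • 1 + z • P).det := by
    intro z
    have hmap : (M.map (evalRingHom z)) = (1 - z) • (1 : Matrix (Fin k) (Fin k) ℂ) + z • P := by
      ext i j
      simp [hM, Matrix.map_apply, Matrix.one_apply, apply_ite, mul_ite]
      ring
    rw [hp, ← hmap]
    show (evalRingHom z) M.det = _
    rw [RingHom.map_det]
    rfl
  have h1 : p.eval 1 = P.det := by rw [key]; norm_num
  have h0 : p.eval 0 = 1 := by rw [key]; norm_num
  have hp0 : p ≠ 0 := by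
    intro h
    rw [h] at h1
    exact hP.ne_zero (by simpa using h1.symm)
  have hfin : {z : ℂ | p.IsRoot z}.Countable := (p.finite_setOf_isRoot hp0).countable
  have hpc : IsPathConnected ({z : ℂ | p.IsRoot z}ᶜ) :=
    hfin.isPathConnected_compl_of_one_lt_rank
      (by rw [Complex.rank_real_complex]; norm_num)
  have hj : JoinedIn ({z : ℂ | p.IsRoot z}ᶜ) 0 1 :=
    hpc.joinedIn 0 (by simp [Polynomial.IsRoot, h0]) 1 (by simp [Polynomial.IsRoot, h1, hP.ne_zero])
  obtain ⟨δ, hδ⟩ := hj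
  refine ⟨⟨⟨fun t => (1 - δ t) • 1 + (δ t) • P, ?_⟩, ?_, ?_⟩, ?_⟩
  · exact ((continuous_const.sub δ.continuous).smul continuous_const).add
      (δ.continuous.smul continuous_const)
  · simp
  · simp
  · intro t
    have := hδ t
    simp only [Set.mem_compl_iff, Set.mem_setOf_eq, Polynomial.IsRoot] at this
    rw [isUnit_iff_ne_zero]
    simpa [← key (δ t)] using this

noncomputable def stdE (m n r : ℕ) (hm : r ≤ m) (hn : r ≤ n) : Matrix (Fin m) (Fin n) ℂ :=
  (Matrix.fromBlocks (1 : Matrix (Fin r) (Fin r) ℂ) 0 0 0).submatrix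
    (finSumFinEquiv.trans (finCongr (Nat.add_sub_cancel' hm))).symm
    (finSumFinEquiv.trans (finCongr (Nat.add_sub_cancel' hn))).symm

lemma exists_factor (m n r : ℕ) (hm : r ≤ m) (hn : r ≤ n) (A : Matrix (Fin m) (Fin n) ℂ)
    (hA : A.rank = r) : ∃ (P : Matrix (Fin m) (Fin m) ℂ) (Q : Matrix (Fin n) (Fin n) ℂ),
      IsUnit P.det ∧ IsUnit Q.det ∧ A = P * stdE m n r hm hn * Q := by
  classical
  set f := A.mulVecLin with hf
  have hrange : Module.finrank ℂ (LinearMap.range f) = r := hA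
  have hdimn : Module.finrank ℂ (Fin n → ℂ) = n := by simp
  have hdimm : Module.finrank ℂ (Fin m → ℂ) = m := by simp
  have hrn : Module.finrank ℂ (LinearMap.range f) + Module.finrank ℂ (LinearMap.ker f) = n := by
    rw [LinearMap.finrank_range_add_finrank_ker f, hdimn]
  obtain ⟨C, hC⟩ := Submodule.exists_isCompl (LinearMap.ker f)
  obtain ⟨D, hD⟩ := Submodule.exists_isCompl (LinearMap.range f)
  have hCfin : Module.finrank ℂ C = r := by
    have h2 := Submodule.finrank_add_eq_of_isCompl hC
    rw [hdimn] at h2; omega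
  have hKfin : Module.finrank ℂ (LinearMap.ker f) = n - r := by omega
  have hDfin : Module.finrank ℂ D = m - r := by
    have h2 := Submodule.finrank_add_eq_of_isCompl hD
    rw [hdimm] at h2; omega
  let bC : Module.Basis (Fin r) ℂ C := Module.finBasisOfFinrankEq ℂ C hCfin
  let bK : Module.Basis (Fin (n - r)) ℂ (LinearMap.ker f) := Module.finBasisOfFinrankEq ℂ _ hKfin
  let bD : Module.Basis (Fin (m - r)) ℂ D := Module.finBasisOfFinrankEq ℂ D hDfin
  let g : C →ₗ[ℂ] LinearMap.range f :=
    (f.comp C.subtype).codRestrict _ (fun c => LinearMap.mem_range_self _ _)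
  have hgapp : ∀ c : C, (g c : Fin m → ℂ) = f c := fun c => rfl
  have hginj : Function.Injective g := by
    intro x y hxy
    have hxy' : f x = f y := congrArg Subtype.val hxy
    have hmem : ((x : Fin n → ℂ) - y) ∈ LinearMap.ker f ⊓ C :=
      ⟨by simp [LinearMap.mem_ker, map_sub, hxy'], C.sub_mem x.2 y.2⟩
    rw [hC.inf_eq_bot] at hmem
    exact Subtype.ext (sub_eq_zero.mp ((Submodule.mem_bot ℂ).mp hmem))
  let e : C ≃ₗ[ℂ] LinearMap.range f :=
    g.linearEquivOfInjective hginj (by rw [hCfin, hrange])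
  have heapp : ∀ c : C, (e c : Fin m → ℂ) = f c := fun c => by
    rw [show e c = g c from LinearMap.linearEquivOfInjective_apply _ _ _]
    exact hgapp c
  let bR : Module.Basis (Fin r) ℂ (LinearMap.range f) := bC.map e
  let B1 : Module.Basis (Fin r ⊕ Fin (n - r)) ℂ (Fin n → ℂ) :=
    (bC.prod bK).map (Submodule.prodEquivOfIsCompl C (LinearMap.ker f) hC.symm)
  let B2 : Module.Basis (Fin r ⊕ Fin (m - r)) ℂ (Fin m → ℂ) :=
    (bR.prod bD).map (Submodule.prodEquivOfIsCompl (LinearMap.range f) D hD)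
  have hB1l : ∀ i, B1 (Sum.inl i) = (bC i : Fin n → ℂ) := by
    intro i
    simp only [B1, Module.Basis.map_apply, Submodule.coe_prodEquivOfIsCompl']
    rw [Module.Basis.prod_apply_inl_fst, Module.Basis.prod_apply_inl_snd]
    simp
  have hB1r : ∀ i, B1 (Sum.inr i) = (bK i : Fin n → ℂ) := by
    intro i
    simp only [B1, Module.Basis.map_apply, Submodule.coe_prodEquivOfIsCompl']
    rw [Module.Basis.prod_apply_inr_fst, Module.Basis.prod_apply_inr_snd]
    simp
  have hB2l : ∀ i, B2 (Sum.inl i) = (bR i : Fin m → ℂ) := by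
    intro i
    simp only [B2, Module.Basis.map_apply, Submodule.coe_prodEquivOfIsCompl']
    rw [Module.Basis.prod_apply_inl_fst, Module.Basis.prod_apply_inl_snd]
    simp
  have hmat : (LinearMap.toMatrix B1 B2) f = Matrix.fromBlocks 1 0 0 0 := by
    ext i j
    rw [LinearMap.toMatrix_apply]
    cases j with
    | inl a =>
      have hfB : f (B1 (Sum.inl a)) = B2 (Sum.inl a) := by
        rw [hB1l, hB2l]
        simp only [bR, Module.Basis.map_apply]
        exact (heapp (bC a)).symm
      rw [hfB, Module.Basis.repr_self]
      cases i with
      | inl b => simp [Finsupp.single_apply, Matrix.one_apply, eq_comm]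
      | inr b => simp [Finsupp.single_apply]
    | inr a =>
      have hfB : f (B1 (Sum.inr a)) = 0 := by
        rw [hB1r]; exact (bK a).2
      rw [hfB, map_zero]
      cases i <;> simp
  let sn := Pi.basisFun ℂ (Fin n)
  let sm := Pi.basisFun ℂ (Fin m)
  have hAmat : (LinearMap.toMatrix sn sm) f = A := by
    ext i j
    rw [LinearMap.toMatrix_apply]
    simp [sn, sm, Pi.basisFun_repr, Pi.basisFun_apply, hf, Matrix.mulVecLin_apply,
      Matrix.mulVec_single]
  let P0 : Matrix (Fin m) (Fin r ⊕ Fin (m - r)) ℂ := LinearMap.toMatrix B2 sm LinearMap.id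
  let Q0 : Matrix (Fin r ⊕ Fin (n - r)) (Fin n) ℂ := LinearMap.toMatrix sn B1 LinearMap.id
  have hfac0 : A = P0 * (Matrix.fromBlocks 1 0 0 0 : Matrix (Fin r ⊕ Fin (m - r)) (Fin r ⊕ Fin (n - r)) ℂ) * Q0 := by
    rw [← hmat, ← hAmat,
      ← LinearMap.toMatrix_comp B1 B2 sm LinearMap.id f,
      ← LinearMap.toMatrix_comp sn B1 sm (LinearMap.id.comp f) LinearMap.id]
    simp
  let em : Fin r ⊕ Fin (m - r) ≃ Fin m := finSumFinEquiv.trans (finCongr (Nat.add_sub_cancel' hm))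
  let en : Fin r ⊕ Fin (n - r) ≃ Fin n := finSumFinEquiv.trans (finCongr (Nat.add_sub_cancel' hn))
  refine ⟨P0.submatrix id em.symm, Q0.submatrix en.symm id, ?_, ?_, ?_⟩
  · apply Matrix.isUnit_det_of_left_inverse (B := (LinearMap.toMatrix sm B2 LinearMap.id).submatrix em.symm id)
    have h1 : (LinearMap.toMatrix sm B2 LinearMap.id).submatrix (⇑em.symm) (⇑(Equiv.refl (Fin m))) *
        P0.submatrix (⇑(Equiv.refl (Fin m))) (⇑em.symm) =
        ((LinearMap.toMatrix sm B2 LinearMap.id) * P0).submatrix (⇑em.symm) (⇑em.symm) :=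
      Matrix.submatrix_mul_equiv _ _ _ _ _
    simp only [Equiv.coe_refl] at h1
    rw [h1]
    have : (LinearMap.toMatrix sm B2 LinearMap.id) * P0 = 1 := by
      rw [show P0 = LinearMap.toMatrix B2 sm LinearMap.id from rfl,
        ← LinearMap.toMatrix_comp B2 sm B2, LinearMap.id_comp, LinearMap.toMatrix_id]
    rw [this, Matrix.submatrix_one_equiv]
  · apply Matrix.isUnit_det_of_left_inverse (B := (LinearMap.toMatrix B1 sn LinearMap.id).submatrix id en.symm)
    have h1 : (LinearMap.toMatrix B1 sn LinearMap.id).submatrix (⇑(Equiv.refl (Fin n))) (⇑en.symm) *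
        Q0.submatrix (⇑en.symm) (⇑(Equiv.refl (Fin n))) =
        ((LinearMap.toMatrix B1 sn LinearMap.id) * Q0).submatrix id id :=
      Matrix.submatrix_mul_equiv _ _ _ _ _
    simp only [Equiv.coe_refl] at h1
    rw [h1]
    have : (LinearMap.toMatrix B1 sn LinearMap.id) * Q0 = 1 := by
      rw [show Q0 = LinearMap.toMatrix sn B1 LinearMap.id from rfl,
        ← LinearMap.toMatrix_comp sn B1 sn, LinearMap.id_comp, LinearMap.toMatrix_id]
    rw [this, Matrix.submatrix_id_id]
  · have key : P0.submatrix id ⇑em.symm * stdE m n r hm hn * Q0.submatrix ⇑en.symm id = A := by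
      have s1 := Matrix.submatrix_mul_equiv P0 (Matrix.fromBlocks (1 : Matrix (Fin r) (Fin r) ℂ) 0 0 0)
        (id : Fin m → Fin m) em.symm (⇑en.symm)
      have s2 := Matrix.submatrix_mul_equiv (P0 * (Matrix.fromBlocks (1 : Matrix (Fin r) (Fin r) ℂ) 0 0 0 : Matrix (Fin r ⊕ Fin (m - r)) (Fin r ⊕ Fin (n - r)) ℂ))
        Q0 (id : Fin m → Fin m) en.symm (id : Fin n → Fin n)
      show P0.submatrix id ⇑em.symm *
        (Matrix.fromBlocks (1 : Matrix (Fin r) (Fin r) ℂ) 0 0 0).submatrix ⇑em.symm ⇑en.symm *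
        Q0.submatrix ⇑en.symm id = A
      rw [s1, s2, Matrix.submatrix_id_id, ← hfac0]
    exact key.symm
lemma rank_stdE (m n r : ℕ) (hm : r ≤ m) (hn : r ≤ n) : (stdE m n r hm hn).rank = r := by
  classical
  set em : Fin r ⊕ Fin (m - r) ≃ Fin m := finSumFinEquiv.trans (finCongr (Nat.add_sub_cancel' hm)) with hem
  set en : Fin r ⊕ Fin (n - r) ≃ Fin n := finSumFinEquiv.trans (finCongr (Nat.add_sub_cancel' hn)) with hen
  set X : Matrix (Fin m) (Fin r) ℂ :=
    (Matrix.fromRows (1 : Matrix (Fin r) (Fin r) ℂ) (0 : Matrix (Fin (m - r)) (Fin r) ℂ)).submatrix ⇑em.symm id with hX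
  set Y : Matrix (Fin r) (Fin n) ℂ :=
    (Matrix.fromCols (1 : Matrix (Fin r) (Fin r) ℂ) (0 : Matrix (Fin r) (Fin (n - r)) ℂ)).submatrix id ⇑en.symm with hY
  have hXY : stdE m n r hm hn = X * Y := by
    have s1 := Matrix.submatrix_mul_equiv (Matrix.fromRows (1 : Matrix (Fin r) (Fin r) ℂ) (0 : Matrix (Fin (m - r)) (Fin r) ℂ))
      (Matrix.fromCols (1 : Matrix (Fin r) (Fin r) ℂ) (0 : Matrix (Fin r) (Fin (n - r)) ℂ))
      (⇑em.symm) (Equiv.refl (Fin r)) (⇑en.symm)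
    simp only [Equiv.coe_refl] at s1
    rw [hX, hY, s1, Matrix.fromRows_mul_fromCols]
    show stdE m n r hm hn = (Matrix.fromBlocks (1*1) (1*0) (0*1) (0*0)).submatrix ⇑em.symm ⇑en.symm
    simp only [one_mul, mul_one, mul_zero, zero_mul, Matrix.mul_zero, Matrix.zero_mul, Matrix.mul_one, Matrix.one_mul]
    rfl
  set Z : Matrix (Fin r) (Fin m) ℂ :=
    (Matrix.fromCols (1 : Matrix (Fin r) (Fin r) ℂ) (0 : Matrix (Fin r) (Fin (m - r)) ℂ)).submatrix id ⇑em.symm with hZ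
  set W : Matrix (Fin n) (Fin r) ℂ :=
    (Matrix.fromRows (1 : Matrix (Fin r) (Fin r) ℂ) (0 : Matrix (Fin (n - r)) (Fin r) ℂ)).submatrix ⇑en.symm id with hW
  have hZX : Z * X = 1 := by
    rw [hZ, hX, Matrix.submatrix_mul_equiv _ _ _ em.symm _, Matrix.submatrix_id_id,
      Matrix.fromCols_mul_fromRows]
    simp
  have hYW : Y * W = 1 := by
    rw [hY, hW, Matrix.submatrix_mul_equiv _ _ _ en.symm _, Matrix.submatrix_id_id,
      Matrix.fromCols_mul_fromRows]
    simp
  apply le_antisymm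
  · rw [hXY]
    exact le_trans (Matrix.rank_mul_le_right X Y) (by simpa using Matrix.rank_le_card_height Y)
  · have hone : Z * stdE m n r hm hn * W = 1 := by
      rw [hXY, Matrix.mul_assoc, Matrix.mul_assoc, hYW, Matrix.mul_one, hZX]
    have h1 : (Z * stdE m n r hm hn * W).rank = r := by
      rw [hone, Matrix.rank_one]
      simp
    calc r = (Z * stdE m n r hm hn * W).rank := h1.symm
      _ ≤ (Z * stdE m n r hm hn).rank := Matrix.rank_mul_le_left _ _
      _ ≤ (stdE m n r hm hn).rank := Matrix.rank_mul_le_right _ _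

theorem stmt2 (m n r : ℕ) (h1 : 1 ≤ r) (h2 : r ≤ min m n) :
    IsPathConnected {A : Matrix (Fin m) (Fin n) ℂ | A.rank = r} := by
  have hm : r ≤ m := le_trans h2 (min_le_left _ _)
  have hn : r ≤ n := le_trans h2 (min_le_right _ _)
  refine ⟨stdE m n r hm hn, rank_stdE m n r hm hn, ?_⟩
  intro A hA
  obtain ⟨P, Q, hP, hQ, hfac⟩ := exists_factor m n r hm hn A hA
  obtain ⟨γP, hγP⟩ := joined_one_of_isUnit_det m P hP
  obtain ⟨γQ, hγQ⟩ := joined_one_of_isUnit_det n Q hQ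
  refine ⟨⟨⟨fun t => γP t * stdE m n r hm hn * γQ t, ?_⟩, ?_, ?_⟩, ?_⟩
  · exact (γP.continuous.matrix_mul continuous_const).matrix_mul γQ.continuous
  · simp
  · simp [hfac]
  · intro t
    show ((γP t * stdE m n r hm hn) * γQ t).rank = r
    rw [Matrix.rank_mul_eq_left_of_isUnit_det (γQ t) _ (hγQ t),
      Matrix.rank_mul_eq_right_of_isUnit_det (γP t) _ (hγP t), rank_stdE]
end

section
/- Let n, r be natural numbers with r ≤ n, and let M_r^H denote the set of Hermitian n×n complex matrices of rank exactly r. For a Hermitian matrix A of rank r, let p(A) denote the number of positive eigenvalues of A counted with multiplicity. Then: (i) if A, B ∈ M_r^H satisfy p(A) = p(B), there is a continuous path from A to B lying entirely in M_r^H; (ii) if p(A) ≠ p(B), there is no continuous path from A to B lying in M_r^H. Consequently M_r^H has exactly r+1 path components when it is nonempty, indexed by the signature (p, r−p). -/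
open Matrix Finset Module Polynomial
noncomputable section
namespace Stmt3Aux
variable {n : ℕ}

/-- The real quadratic form of a matrix. -/
def qf (M : Matrix (Fin n) (Fin n) ℂ) (x : EuclideanSpace ℂ (Fin n)) : ℝ :=
  Complex.re (inner ℂ x (Matrix.toEuclideanLin M x))

/-- Sum of absolute values of entries. -/
def ent (M : Matrix (Fin n) (Fin n) ℂ) : ℝ := ∑ i, ∑ j, ‖M i j‖

lemma qf_sub (M M' : Matrix (Fin n) (Fin n) ℂ) (x : EuclideanSpace ℂ (Fin n)) :
    qf M' x = qf M x + qf (M' - M) x := by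
  simp only [qf, map_sub, LinearMap.sub_apply, inner_sub_right]
  simp [Complex.sub_re]

lemma coord_norm_le (x : EuclideanSpace ℂ (Fin n)) (i : Fin n) : ‖x i‖ ≤ ‖x‖ := by
  rw [EuclideanSpace.norm_eq]
  have h1 : ‖x i‖ ^ 2 ≤ ∑ j, ‖x j‖ ^ 2 :=
    Finset.single_le_sum (f := fun j => ‖x j‖ ^ 2) (fun j _ => sq_nonneg _) (mem_univ i)
  calc ‖x i‖ = Real.sqrt (‖x i‖ ^ 2) := (Real.sqrt_sq (norm_nonneg _)).symm
    _ ≤ _ := Real.sqrt_le_sqrt h1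

lemma abs_qf_le (N : Matrix (Fin n) (Fin n) ℂ) (x : EuclideanSpace ℂ (Fin n)) :
    |qf N x| ≤ ent N * ‖x‖ ^ 2 := by
  have h : ‖(inner ℂ x (Matrix.toEuclideanLin N x) : ℂ)‖ ≤ ent N * ‖x‖ ^ 2 := by
    rw [PiLp.inner_apply]
    calc ‖∑ i, (inner ℂ (x i) ((Matrix.toEuclideanLin N x) i) : ℂ)‖
        ≤ ∑ i, ‖(inner ℂ (x i) ((Matrix.toEuclideanLin N x) i) : ℂ)‖ := norm_sum_le _ _
      _ ≤ ∑ i, ∑ j, ‖N i j‖ * ‖x‖ ^ 2 := by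
          apply Finset.sum_le_sum
          intro i _
          have : (Matrix.toEuclideanLin N x) i = ∑ j, N i j * x j := by
            simp [Matrix.toEuclideanLin_apply, Matrix.mulVec, dotProduct]
          rw [this, RCLike.inner_apply', Finset.mul_sum]
          calc ‖∑ j, (starRingEnd ℂ) (x i) * (N i j * x j)‖
              ≤ ∑ j, ‖(starRingEnd ℂ) (x i) * (N i j * x j)‖ := norm_sum_le _ _
            _ ≤ ∑ j, ‖N i j‖ * ‖x‖ ^ 2 := by
                apply Finset.sum_le_sum
                intro j _
                rw [norm_mul, norm_mul, RCLike.norm_conj]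
                calc ‖x i‖ * (‖N i j‖ * ‖x j‖) = ‖N i j‖ * (‖x i‖ * ‖x j‖) := by ring
                  _ ≤ ‖N i j‖ * (‖x‖ * ‖x‖) := by
                      apply mul_le_mul_of_nonneg_left _ (norm_nonneg _)
                      exact mul_le_mul (coord_norm_le x i) (coord_norm_le x j)
                        (norm_nonneg _) (norm_nonneg _)
                  _ = ‖N i j‖ * ‖x‖ ^ 2 := by ring
      _ = ent N * ‖x‖ ^ 2 := by rw [ent, Finset.sum_mul]; exact Finset.sum_congr rfl fun i _ => (Finset.sum_mul _ _ _).symm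
  calc |qf N x| ≤ ‖(inner ℂ x (Matrix.toEuclideanLin N x) : ℂ)‖ := Complex.abs_re_le_norm _
    _ ≤ _ := h

lemma continuous_ent : Continuous (ent (n := n)) := by
  unfold ent
  exact continuous_finset_sum _ fun i _ => continuous_finset_sum _ fun j _ =>
    (continuous_apply_apply i j).norm



section Basis
variable {M : Matrix (Fin n) (Fin n) ℂ} (hM : M.IsHermitian)
  (b : OrthonormalBasis (Fin n) ℂ (EuclideanSpace ℂ (Fin n))) (μ : Fin n → ℝ)
  (hb : ∀ j, M *ᵥ ⇑(b j) = μ j • ⇑(b j))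
include hM hb

omit hM in
lemma toEuc_b (j : Fin n) : Matrix.toEuclideanLin M (b j) = (μ j : ℂ) • b j := by
  apply PiLp.ext
  intro i
  have := congrFun (hb j) i
  simpa [Matrix.toEuclideanLin_apply] using this

lemma repr_toEuc (x : EuclideanSpace ℂ (Fin n)) (i : Fin n) :
    b.repr (Matrix.toEuclideanLin M x) i = (μ i : ℂ) * b.repr x i := by
  rw [OrthonormalBasis.repr_apply_apply, OrthonormalBasis.repr_apply_apply,
    ← (Matrix.isHermitian_iff_isSymmetric.1 hM) (b i) x, toEuc_b b μ hb,
    inner_smul_left]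
  simp

omit hM hb in
lemma norm_sq_eq_sum_repr (x : EuclideanSpace ℂ (Fin n)) :
    ‖x‖ ^ 2 = ∑ i, ‖b.repr x i‖ ^ 2 := by
  have : ‖b.repr x‖ = ‖x‖ := b.repr.norm_map x
  rw [← this, EuclideanSpace.norm_eq, Real.sq_sqrt]
  positivity

lemma qf_eq_sum (x : EuclideanSpace ℂ (Fin n)) :
    qf M x = ∑ i, μ i * ‖b.repr x i‖ ^ 2 := by
  have h1 : (inner ℂ x (Matrix.toEuclideanLin M x) : ℂ)
      = inner ℂ (b.repr x) (b.repr (Matrix.toEuclideanLin M x)) := by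
    rw [b.repr.inner_map_map]
  rw [qf, h1, PiLp.inner_apply]
  rw [Complex.re_sum]
  apply Finset.sum_congr rfl
  intro i _
  rw [repr_toEuc hM b μ hb, RCLike.inner_apply']
  have : (starRingEnd ℂ) (b.repr x i) * ((μ i : ℂ) * b.repr x i)
      = (μ i : ℂ) * ((starRingEnd ℂ) (b.repr x i) * b.repr x i) := by ring
  rw [this, Complex.conj_mul']
  rw [← Complex.ofReal_pow, ← Complex.ofReal_mul, Complex.ofReal_re]



omit hM hb in
lemma repr_eq_zero_of_mem_span (P : Finset (Fin n)) {x : EuclideanSpace ℂ (Fin n)}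
    (hx : x ∈ Submodule.span ℂ (⇑b '' ↑P)) {j : Fin n} (hj : j ∉ P) :
    b.repr x j = 0 := by
  rw [OrthonormalBasis.repr_apply_apply]
  have : Submodule.span ℂ (⇑b '' ↑P) ≤ LinearMap.ker ((innerSL ℂ (b j)).toLinearMap) := by
    rw [Submodule.span_le]
    rintro y ⟨i, hi, rfl⟩
    simp only [SetLike.mem_coe, LinearMap.mem_ker, ContinuousLinearMap.coe_coe, innerSL_apply_apply]
    exact b.orthonormal.2 (fun h => hj (h ▸ hi))
  exact this hx

omit hM hb in
lemma finrank_span_basis (P : Finset (Fin n)) :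
    finrank ℂ (Submodule.span ℂ (⇑b '' ↑P)) = P.card := by
  have li := ((b.orthonormal.comp (fun i : {i // i ∈ P} => i.1)
    (fun a b h => Subtype.ext h)).linearIndependent)
  have h2 := finrank_span_eq_card li
  have h1 : Set.range (⇑b ∘ fun i : {i // i ∈ P} => i.1) = ⇑b '' ↑P := by
    rw [Set.range_comp]
    congr 1
    ext x
    simp
  rw [h1] at h2
  rw [h2]
  simp

lemma lemA (V : Submodule ℂ (EuclideanSpace ℂ (Fin n)))
    (hV : ∀ x ∈ V, x ≠ 0 → 0 < qf M x) :
    finrank ℂ V ≤ (univ.filter fun i => 0 < μ i).card := by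
  set P : Finset (Fin n) := univ.filter (fun i => ¬ 0 < μ i) with hP
  set W := Submodule.span ℂ (⇑b '' ↑P) with hWdef
  have hW : ∀ x ∈ W, qf M x ≤ 0 := by
    intro x hx
    rw [qf_eq_sum hM b μ hb]
    apply Finset.sum_nonpos
    intro i _
    by_cases hi : i ∈ P
    · have : ¬ 0 < μ i := by simpa [hP] using hi
      exact mul_nonpos_of_nonpos_of_nonneg (not_lt.1 this) (sq_nonneg _)
    · rw [repr_eq_zero_of_mem_span b P hx hi]
      simp
  have hdisj : V ⊓ W = ⊥ := by
    rw [Submodule.eq_bot_iff]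
    rintro x ⟨hxV, hxW⟩
    by_contra hne
    exact absurd (hW x hxW) (not_le.2 (hV x hxV hne))
  have h1 := Submodule.finrank_sup_add_finrank_inf_eq V W
  rw [hdisj, finrank_bot, add_zero] at h1
  have h2 : finrank ℂ ↥(V ⊔ W) ≤ n := by
    have := Submodule.finrank_le (V ⊔ W)
    rwa [finrank_euclideanSpace, Fintype.card_fin] at this
  have h3 : finrank ℂ W = P.card := finrank_span_basis b P
  have h4 : (univ.filter fun i => 0 < μ i).card + P.card = n := by
    rw [hP, Finset.card_filter_add_card_filter_not]
    simp
  omega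

lemma margin_pos : ∃ c > (0:ℝ), ∀ x ∈ Submodule.span ℂ (⇑b '' ↑(univ.filter fun i => 0 < μ i)),
    c * ‖x‖ ^ 2 ≤ qf M x := by
  set P : Finset (Fin n) := univ.filter (fun i => 0 < μ i) with hP
  by_cases hPe : P.Nonempty
  · set s := P.image μ with hs
    have hse : s.Nonempty := hPe.image μ
    refine ⟨s.min' hse, ?_, ?_⟩
    · obtain ⟨i, hi, hval⟩ := Finset.mem_image.1 (s.min'_mem hse)
      rw [← hval]
      simpa [hP] using hi
    · intro x hx
      rw [qf_eq_sum hM b μ hb, norm_sq_eq_sum_repr b x, Finset.mul_sum]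
      apply Finset.sum_le_sum
      intro i _
      by_cases hi : i ∈ P
      · apply mul_le_mul_of_nonneg_right _ (sq_nonneg _)
        exact Finset.min'_le s (μ i) (Finset.mem_image_of_mem μ hi)
      · rw [repr_eq_zero_of_mem_span b P hx hi]
        simp
  · refine ⟨1, one_pos, ?_⟩
    intro x hx
    rw [Finset.not_nonempty_iff_eq_empty.1 hPe] at hx
    simp only [Finset.coe_empty, Set.image_empty, Submodule.span_empty,
      Submodule.mem_bot] at hx
    subst hx
    simp [qf]

lemma lemB (W : Submodule ℂ (EuclideanSpace ℂ (Fin n)))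
    (hW : ∀ x ∈ W, qf M x ≤ 0) :
    (univ.filter fun i => 0 < μ i).card + finrank ℂ W ≤ n := by
  set P : Finset (Fin n) := univ.filter (fun i => 0 < μ i) with hP
  set V := Submodule.span ℂ (⇑b '' ↑P) with hVdef
  obtain ⟨c, hc, hmargin⟩ := margin_pos hM b μ hb
  have hdisj : V ⊓ W = ⊥ := by
    rw [Submodule.eq_bot_iff]
    rintro x ⟨hxV, hxW⟩
    by_contra hne
    have h1 : c * ‖x‖ ^ 2 ≤ qf M x := hmargin x hxV
    have h2 : 0 < ‖x‖ ^ 2 := pow_pos (norm_pos_iff.mpr hne) 2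
    nlinarith [hW x hxW]
  have h1 := Submodule.finrank_sup_add_finrank_inf_eq V W
  rw [hdisj, finrank_bot, add_zero] at h1
  have h2 : finrank ℂ ↥(V ⊔ W) ≤ n := by
    have := Submodule.finrank_le (V ⊔ W)
    rwa [finrank_euclideanSpace, Fintype.card_fin] at this
  have h3 : finrank ℂ V = P.card := finrank_span_basis b P
  omega


end Basis

/-- number of positive eigenvalues -/
def pH {M : Matrix (Fin n) (Fin n) ℂ} (hM : M.IsHermitian) : ℕ :=
  (univ.filter fun i => 0 < hM.eigenvalues i).card

lemma posCount_eq {M : Matrix (Fin n) (Fin n) ℂ} (hM : M.IsHermitian)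
    (b : OrthonormalBasis (Fin n) ℂ (EuclideanSpace ℂ (Fin n))) (μ : Fin n → ℝ)
    (hb : ∀ j, M *ᵥ ⇑(b j) = μ j • ⇑(b j)) :
    (univ.filter fun i => 0 < μ i).card = pH hM := by
  have hbe := hM.mulVec_eigenvectorBasis
  apply le_antisymm
  · obtain ⟨c, hc, hm⟩ := margin_pos hM b μ hb
    have := lemA hM hM.eigenvectorBasis hM.eigenvalues hbe
      (Submodule.span ℂ (⇑b '' ↑(univ.filter fun i => 0 < μ i)))
      (fun x hx hne => lt_of_lt_of_le (mul_pos hc (pow_pos (norm_pos_iff.mpr hne) 2)) (hm x hx))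
    rwa [finrank_span_basis] at this
  · obtain ⟨c, hc, hm⟩ := margin_pos hM hM.eigenvectorBasis hM.eigenvalues hbe
    have := lemA hM b μ hb
      (Submodule.span ℂ (⇑hM.eigenvectorBasis '' ↑(univ.filter fun i => 0 < hM.eigenvalues i)))
      (fun x hx hne => lt_of_lt_of_le (mul_pos hc (pow_pos (norm_pos_iff.mpr hne) 2)) (hm x hx))
    rwa [finrank_span_basis] at this

lemma negCount_eq {M : Matrix (Fin n) (Fin n) ℂ} (hM : M.IsHermitian)
    (b : OrthonormalBasis (Fin n) ℂ (EuclideanSpace ℂ (Fin n))) (μ : Fin n → ℝ)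
    (hb : ∀ j, M *ᵥ ⇑(b j) = μ j • ⇑(b j)) :
    (univ.filter fun i => μ i < 0).card
      = (univ.filter fun i => hM.eigenvalues i < 0).card := by
  have hb' : ∀ j, (-M) *ᵥ ⇑(b j) = (-μ) j • ⇑(b j) := by
    intro j
    rw [Matrix.neg_mulVec, hb j]
    simp [neg_smul]
  have hbe' : ∀ j, (-M) *ᵥ ⇑(hM.eigenvectorBasis j) = (-hM.eigenvalues) j • ⇑(hM.eigenvectorBasis j) := by
    intro j
    rw [Matrix.neg_mulVec, hM.mulVec_eigenvectorBasis j]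
    simp [neg_smul]
  have h1 := posCount_eq hM.neg b (-μ) hb'
  have h2 := posCount_eq hM.neg hM.eigenvectorBasis (-hM.eigenvalues) hbe'
  have e1 : (univ.filter fun i => 0 < (-μ) i) = (univ.filter fun i => μ i < 0) := by
    apply Finset.filter_congr; intro i _; simp [neg_pos]
  have e2 : (univ.filter fun i => 0 < (-hM.eigenvalues) i)
      = (univ.filter fun i => hM.eigenvalues i < 0) := by
    apply Finset.filter_congr; intro i _; simp [neg_pos]
  rw [e1] at h1; rw [e2] at h2
  rw [h1, h2]

lemma ranksum {M : Matrix (Fin n) (Fin n) ℂ} (hM : M.IsHermitian) :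
    pH hM + (univ.filter fun i => hM.eigenvalues i < 0).card = M.rank := by
  rw [hM.rank_eq_card_non_zero_eigs, Fintype.card_subtype]
  rw [pH]
  have : (univ.filter fun i => hM.eigenvalues i ≠ 0)
      = (univ.filter fun i => 0 < hM.eigenvalues i) ∪ (univ.filter fun i => hM.eigenvalues i < 0) := by
    rw [← Finset.filter_or]
    apply Finset.filter_congr
    intro i _
    constructor
    · intro h; rcases h.lt_or_gt with h' | h'
      · exact Or.inr h'
      · exact Or.inl h'
    · rintro (h | h) <;> [exact h.ne'; exact h.ne]
  rw [this, Finset.card_union_of_disjoint]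
  rw [Finset.disjoint_filter]
  intro i _ h1 h2
  exact absurd h1 (not_lt.2 h2.le)

lemma semicont_pos {M : Matrix (Fin n) (Fin n) ℂ} (hM : M.IsHermitian) :
    ∃ ε > (0:ℝ), ∀ M' : Matrix (Fin n) (Fin n) ℂ, ∀ hM' : M'.IsHermitian,
      ent (M' - M) < ε → pH hM ≤ pH hM' := by
  have hbe := hM.mulVec_eigenvectorBasis
  obtain ⟨c, hc, hm⟩ := margin_pos hM hM.eigenvectorBasis hM.eigenvalues hbe
  refine ⟨c, hc, ?_⟩
  intro M' hM' hent
  have key := lemA hM' hM'.eigenvectorBasis hM'.eigenvalues hM'.mulVec_eigenvectorBasis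
    (Submodule.span ℂ (⇑hM.eigenvectorBasis '' ↑(univ.filter fun i => 0 < hM.eigenvalues i)))
    ?_
  · rw [finrank_span_basis] at key
    exact key
  · intro x hx hne
    have h1 : c * ‖x‖ ^ 2 ≤ qf M x := hm x hx
    have h2 : |qf (M' - M) x| ≤ ent (M' - M) * ‖x‖ ^ 2 := abs_qf_le _ _
    have h3 : 0 < ‖x‖ ^ 2 := pow_pos (norm_pos_iff.mpr hne) 2
    have h4 := qf_sub M M' x
    have h5 : ent (M' - M) * ‖x‖ ^ 2 < c * ‖x‖ ^ 2 :=
      mul_lt_mul_of_pos_right hent h3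
    have := abs_le.1 h2
    nlinarith

lemma semicont_neg {M : Matrix (Fin n) (Fin n) ℂ} (hM : M.IsHermitian) :
    ∃ ε > (0:ℝ), ∀ M' : Matrix (Fin n) (Fin n) ℂ, ∀ hM' : M'.IsHermitian,
      ent (M' - M) < ε →
        (univ.filter fun i => hM.eigenvalues i < 0).card
          ≤ (univ.filter fun i => hM'.eigenvalues i < 0).card := by
  obtain ⟨ε, hε, h⟩ := semicont_pos hM.neg
  refine ⟨ε, hε, ?_⟩
  intro M' hM' hent
  have hent' : ent (-M' - -M) < ε := by
    have : -M' - -M = -(M' - M) := by abel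
    rw [this]
    have : ent (-(M' - M)) = ent (M' - M) := by
      unfold ent
      apply Finset.sum_congr rfl; intro i _
      apply Finset.sum_congr rfl; intro j _
      simpa using norm_sub_rev (M i j) (M' i j)
    rw [this]; exact hent
  have h2 := h (-M') hM'.neg hent'
  -- pH hM.neg = neg count of M
  have e1 : pH hM.neg = (univ.filter fun i => hM.eigenvalues i < 0).card := by
    have hbe' : ∀ j, (-M) *ᵥ ⇑(hM.eigenvectorBasis j)
        = (-hM.eigenvalues) j • ⇑(hM.eigenvectorBasis j) := by
      intro j; rw [Matrix.neg_mulVec, hM.mulVec_eigenvectorBasis j]; simp [neg_smul]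
    have := posCount_eq hM.neg hM.eigenvectorBasis (-hM.eigenvalues) hbe'
    rw [← this]
    congr 1
    apply Finset.filter_congr; intro i _; simp [neg_pos]
  have e2 : pH hM'.neg = (univ.filter fun i => hM'.eigenvalues i < 0).card := by
    have hbe' : ∀ j, (-M') *ᵥ ⇑(hM'.eigenvectorBasis j)
        = (-hM'.eigenvalues) j • ⇑(hM'.eigenvectorBasis j) := by
      intro j; rw [Matrix.neg_mulVec, hM'.mulVec_eigenvectorBasis j]; simp [neg_smul]
    have := posCount_eq hM'.neg hM'.eigenvectorBasis (-hM'.eigenvalues) hbe'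
    rw [← this]
    congr 1
    apply Finset.filter_congr; intro i _; simp [neg_pos]
  rw [e1, e2] at h2
  exact h2

/-- local constancy of signature on the rank-r hermitian set -/
lemma locconst (r : ℕ) {M : Matrix (Fin n) (Fin n) ℂ} (hM : M.IsHermitian) (hMr : M.rank = r) :
    ∃ ε > (0:ℝ), ∀ M' : Matrix (Fin n) (Fin n) ℂ, ∀ hM' : M'.IsHermitian, M'.rank = r →
      ent (M' - M) < ε → pH hM' = pH hM := by
  obtain ⟨ε₁, hε₁, h1⟩ := semicont_pos hM
  obtain ⟨ε₂, hε₂, h2⟩ := semicont_neg hM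
  refine ⟨min ε₁ ε₂, lt_min hε₁ hε₂, ?_⟩
  intro M' hM' hM'r hent
  have p1 := h1 M' hM' (lt_of_lt_of_le hent (min_le_left _ _))
  have p2 := h2 M' hM' (lt_of_lt_of_le hent (min_le_right _ _))
  have r1 := ranksum hM
  have r2 := ranksum hM'
  rw [hMr] at r1; rw [hM'r] at r2
  omega



lemma pathinv (r : ℕ) {A B : Matrix (Fin n) (Fin n) ℂ}
    (hA : A.IsHermitian) (hB : B.IsHermitian)
    (h : JoinedIn {M : Matrix (Fin n) (Fin n) ℂ | M.IsHermitian ∧ M.rank = r} A B) :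
    pH hA = pH hB := by
  classical
  obtain ⟨γ, hγ⟩ := h
  set F : Matrix (Fin n) (Fin n) ℂ → ℕ := fun M => if h : M.IsHermitian then pH h else 0 with hF
  have hFmem : ∀ (M : Matrix (Fin n) (Fin n) ℂ) (hM : M.IsHermitian), F M = pH hM :=
    fun M hM => dif_pos hM
  have key : ∀ t₀ : unitInterval, ∀ᶠ t in nhds t₀, F (γ t) = F (γ t₀) := by
    intro t₀
    obtain ⟨hH, hR⟩ := hγ t₀
    obtain ⟨ε, hε, hloc⟩ := locconst r hH hR
    have hcont : Continuous fun t : unitInterval => ent (γ t - γ t₀) :=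
      continuous_ent.comp ((γ.continuous).sub continuous_const)
    have h0 : ent (γ t₀ - γ t₀) < ε := by
      simpa [ent] using hε
    have hmem : {t : unitInterval | ent (γ t - γ t₀) < ε} ∈ nhds t₀ :=
      (isOpen_lt hcont continuous_const).mem_nhds h0
    filter_upwards [hmem] with t ht
    obtain ⟨hH', hR'⟩ := hγ t
    rw [hFmem _ hH', hFmem _ hH]
    exact hloc (γ t) hH' hR' ht
  have hclopen : IsClopen {t : unitInterval | F (γ t) = F (γ 0)} := by
    constructor
    · rw [← isOpen_compl_iff]
      rw [isOpen_iff_mem_nhds]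
      intro t ht
      filter_upwards [key t] with s hs
      simp only [Set.mem_compl_iff, Set.mem_setOf_eq] at ht ⊢
      rw [hs]; exact ht
    · rw [isOpen_iff_mem_nhds]
      intro t ht
      filter_upwards [key t] with s hs
      simp only [Set.mem_setOf_eq] at ht ⊢
      rw [hs]; exact ht
  have huniv : {t : unitInterval | F (γ t) = F (γ 0)} = Set.univ :=
    hclopen.eq_univ ⟨0, rfl⟩
  have h1 : F (γ 1) = F (γ 0) := by
    have : (1 : unitInterval) ∈ {t : unitInterval | F (γ t) = F (γ 0)} := by
      rw [huniv]; trivial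
    exact this
  rw [γ.source, γ.target] at h1
  rw [← hFmem A hA, ← hFmem B hB, h1]


lemma cong (r : ℕ) (D G : Matrix (Fin n) (Fin n) ℂ) (hD : D.IsHermitian)
    (hDr : D.rank = r) (hG : IsUnit G.det) :
    JoinedIn {M : Matrix (Fin n) (Fin n) ℂ | M.IsHermitian ∧ M.rank = r}
      (G * D * Gᴴ) D := by
  classical
  set g : ℂ → Matrix (Fin n) (Fin n) ℂ := fun z => z • G + (1 - z) • 1 with hg
  set q : Polynomial ℂ :=
    (Matrix.det ((X : ℂ[X]) • G.map Polynomial.C + ((1 : ℂ[X]) - X) • 1)) with hq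
  have heval : ∀ z : ℂ, Polynomial.eval z q = (g z).det := by
    intro z
    rw [hq, ← Polynomial.coe_evalRingHom, RingHom.map_det]
    congr 1
    ext i j
    simp only [RingHom.mapMatrix_apply, Matrix.map_apply, Matrix.add_apply, Matrix.smul_apply,
      smul_eq_mul, Matrix.one_apply, hg]
    rw [Polynomial.coe_evalRingHom]
    by_cases h : i = j
    · simp only [if_pos h, Polynomial.eval_add, Polynomial.eval_mul, Polynomial.eval_X,
        Polynomial.eval_C, Polynomial.eval_sub, Polynomial.eval_one]
    · simp only [if_neg h, Polynomial.eval_add, Polynomial.eval_mul, Polynomial.eval_X,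
        Polynomial.eval_C, Polynomial.eval_sub, Polynomial.eval_one, mul_zero, add_zero]
  have h1 : Polynomial.eval 1 q ≠ 0 := by
    rw [heval]
    have : g 1 = G := by simp [hg]
    rw [this]
    exact hG.ne_zero
  have h0 : Polynomial.eval 0 q ≠ 0 := by
    rw [heval]
    have : g 0 = 1 := by simp [hg]
    rw [this, Matrix.det_one]
    exact one_ne_zero
  have hqne : q ≠ 0 := fun h => h1 (by rw [h]; simp)
  have hcount : {z : ℂ | Polynomial.IsRoot q z}.Countable :=
    (Polynomial.finite_setOf_isRoot hqne).countable
  have hpc : IsPathConnected {z : ℂ | Polynomial.IsRoot q z}ᶜ := by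
    apply hcount.isPathConnected_compl_of_one_lt_rank
    rw [Complex.rank_real_complex]
    norm_num
  have hj : JoinedIn {z : ℂ | Polynomial.IsRoot q z}ᶜ 1 0 :=
    hpc.joinedIn 1 h1 0 h0
  obtain ⟨ζ, hζ⟩ := hj
  have hgunit : ∀ t : unitInterval, IsUnit (g (ζ t)).det := by
    intro t
    have := hζ t
    rw [Set.mem_compl_iff, Set.mem_setOf_eq, Polynomial.IsRoot, heval] at this
    exact isUnit_iff_ne_zero.2 this
  have hcontg : Continuous fun t : unitInterval => g (ζ t) := by
    apply Continuous.add
    · exact ζ.continuous.smul continuous_const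
    · exact (continuous_const.sub ζ.continuous).smul continuous_const
  refine ⟨⟨⟨fun t => g (ζ t) * D * (g (ζ t))ᴴ, ?_⟩, ?_, ?_⟩, ?_⟩
  · exact (hcontg.matrix_mul continuous_const).matrix_mul hcontg.matrix_conjTranspose
  · show g (ζ 0) * D * (g (ζ 0))ᴴ = G * D * Gᴴ
    rw [ζ.source]
    have : g 1 = G := by simp [hg]
    rw [this]
  · show g (ζ 1) * D * (g (ζ 1))ᴴ = D
    rw [ζ.target]
    have : g 0 = 1 := by simp [hg]
    rw [this, Matrix.conjTranspose_one, one_mul, mul_one]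
  · intro t
    constructor
    · show (g (ζ t) * D * (g (ζ t))ᴴ)ᴴ = g (ζ t) * D * (g (ζ t))ᴴ
      rw [Matrix.conjTranspose_mul, Matrix.conjTranspose_mul,
        Matrix.conjTranspose_conjTranspose, hD.eq, mul_assoc]
    · show (g (ζ t) * D * (g (ζ t))ᴴ).rank = r
      rw [Matrix.rank_mul_eq_left_of_isUnit_det _ _ ?_,
        Matrix.rank_mul_eq_right_of_isUnit_det _ _ (hgunit t), hDr]
      rw [Matrix.det_conjTranspose]
      exact (hgunit t).star


/-- sign function of a real vector -/
def sgn (μ : Fin n → ℝ) (i : Fin n) : ℝ :=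
  if 0 < μ i then 1 else if μ i < 0 then -1 else 0

lemma sgn_mem (μ : Fin n → ℝ) (i : Fin n) : sgn μ i = 1 ∨ sgn μ i = -1 ∨ sgn μ i = 0 := by
  unfold sgn; split_ifs <;> simp

lemma sgn_eq_one_iff (μ : Fin n → ℝ) (i : Fin n) : sgn μ i = 1 ↔ 0 < μ i := by
  constructor
  · intro h; by_contra hc
    unfold sgn at h; rw [if_neg hc] at h; split_ifs at h <;> norm_num at h
  · intro h; simp [sgn, h]

lemma sgn_eq_negone_iff (μ : Fin n → ℝ) (i : Fin n) : sgn μ i = -1 ↔ μ i < 0 := by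
  constructor
  · intro h; unfold sgn at h; split_ifs at h with h1 h2
    · norm_num at h
    · exact h2
    · norm_num at h
  · intro h; unfold sgn; rw [if_neg (not_lt.2 h.le), if_pos h]

lemma card_filter_lt (k : ℕ) (hk : k ≤ n) :
    (univ.filter fun i : Fin n => (i : ℕ) < k).card = k := by
  have : (univ.filter fun i : Fin n => (i : ℕ) < k) = Finset.image (Fin.castLE hk) univ := by
    ext i
    simp only [mem_filter, mem_univ, true_and, Finset.mem_image]
    constructor
    · intro h; exact ⟨⟨(i : ℕ), h⟩, Fin.ext rfl⟩
    · rintro ⟨j, rfl⟩; exact j.2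
  rw [this, Finset.card_image_of_injective _ (Fin.castLE_injective hk)]
  simp

lemma exists_perm_comp {α β : Type*} [Fintype α] [DecidableEq α] [DecidableEq β]
    (f g : α → β) (h : ∀ v, Fintype.card {i // f i = v} = Fintype.card {i // g i = v}) :
    ∃ σ : Equiv.Perm α, g ∘ σ = f := by
  let e : ∀ v, {i // f i = v} ≃ {i // g i = v} := fun v => Fintype.equivOfCardEq (h v)
  refine ⟨(Equiv.sigmaFiberEquiv f).symm.trans
    ((Equiv.sigmaCongrRight e).trans (Equiv.sigmaFiberEquiv g)), funext fun i => ?_⟩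
  exact ((e (f i)) ⟨i, rfl⟩).2

lemma perm_conj (σ : Equiv.Perm (Fin n)) (d : Fin n → ℂ) :
    (σ.toPEquiv.toMatrix : Matrix (Fin n) (Fin n) ℂ) * diagonal d
      * (σ.toPEquiv.toMatrix : Matrix (Fin n) (Fin n) ℂ)ᴴ = diagonal (d ∘ σ) := by
  have hH : (σ.toPEquiv.toMatrix : Matrix (Fin n) (Fin n) ℂ)ᴴ
      = (σ.symm.toPEquiv.toMatrix : Matrix (Fin n) (Fin n) ℂ) := by
    ext i j
    simp only [conjTranspose_apply, PEquiv.toMatrix_apply, Equiv.toPEquiv_apply,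
      Option.mem_def, Option.some.injEq]
    by_cases h : σ j = i
    · rw [if_pos h, if_pos (by rw [Equiv.symm_apply_eq]; exact h.symm)]; simp
    · rw [if_neg h, if_neg (fun hc => h (by rw [Equiv.symm_apply_eq] at hc; exact hc.symm))]
      simp
  rw [hH, PEquiv.toMatrix_toPEquiv_mul, PEquiv.mul_toMatrix_toPEquiv]
  ext i j
  simp only [submatrix_apply, Equiv.symm_symm, id_eq, diagonal_apply, Function.comp_apply,
    σ.injective.eq_iff]

lemma perm_det_isUnit (σ : Equiv.Perm (Fin n)) :
    IsUnit (σ.toPEquiv.toMatrix : Matrix (Fin n) (Fin n) ℂ).det := by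
  rw [Matrix.det_permutation]
  rcases Int.units_eq_one_or (Equiv.Perm.sign σ) with h | h <;> rw [h] <;> simp



lemma isHermitian_diagonal_ofReal (d : Fin n → ℝ) :
    (diagonal (fun i => (d i : ℂ)) : Matrix (Fin n) (Fin n) ℂ).IsHermitian := by
  rw [Matrix.IsHermitian, diagonal_conjTranspose]
  refine congrArg diagonal (funext fun i => ?_)
  simp only [Pi.star_apply, RCLike.star_def]
  exact Complex.conj_ofReal _

/-- spectral decomposition into congruence-normal form -/
lemma decomp {M : Matrix (Fin n) (Fin n) ℂ} (hM : M.IsHermitian) :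
    ∃ G : Matrix (Fin n) (Fin n) ℂ, IsUnit G.det ∧
      M = G * diagonal (fun i => (sgn hM.eigenvalues i : ℂ)) * Gᴴ := by
  classical
  set lam := hM.eigenvalues with hlam
  set er : Fin n → ℝ := fun i => if lam i = 0 then 1 else Real.sqrt |lam i| with her
  set e : Fin n → ℂ := fun i => (er i : ℂ) with he
  set U : Matrix (Fin n) (Fin n) ℂ := (hM.eigenvectorUnitary : Matrix (Fin n) (Fin n) ℂ)
    with hU
  refine ⟨U * diagonal e, ?_, ?_⟩
  · rw [Matrix.det_mul]
    apply IsUnit.mul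
    · exact Matrix.UnitaryGroup.det_isUnit hM.eigenvectorUnitary
    · rw [Matrix.det_diagonal]
      apply isUnit_iff_ne_zero.2
      apply Finset.prod_ne_zero_iff.2
      intro i _
      simp only [he, her, ne_eq, Complex.ofReal_eq_zero]
      by_cases h : lam i = 0
      · simp [h]
      · rw [if_neg h]
        exact (Real.sqrt_pos.2 (abs_pos.2 h)).ne'
  · have hsp := hM.spectral_theorem
    rw [Unitary.conjStarAlgAut_apply, Matrix.star_eq_conjTranspose] at hsp
    have hGH : (U * diagonal e)ᴴ = diagonal e * Uᴴ := by
      rw [Matrix.conjTranspose_mul, Matrix.diagonal_conjTranspose]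
      refine congrArg (· * Uᴴ) (congrArg diagonal (funext fun i => ?_))
      simp only [he, Pi.star_apply, RCLike.star_def]
      exact Complex.conj_ofReal _
    rw [hGH]
    have key : diagonal e * diagonal (fun i => (sgn lam i : ℂ)) * diagonal e
        = diagonal (Complex.ofReal ∘ lam) := by
      rw [Matrix.diagonal_mul_diagonal, Matrix.diagonal_mul_diagonal]
      refine congrArg diagonal (funext fun i => ?_)
      show e i * (sgn lam i : ℂ) * e i = (lam i : ℂ)
      rw [he, her]
      push_cast
      rw [← Complex.ofReal_mul, ← Complex.ofReal_mul]
      congr 1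
      by_cases h0 : lam i = 0
      · simp [sgn, h0]
      · rw [if_neg h0]
        rcases lt_or_gt_of_ne h0 with hneg | hpos
        · rw [show sgn lam i = -1 from by simp [sgn, hneg, not_lt.2 hneg.le]]
          rw [show |lam i| = -lam i from abs_of_neg hneg] at *
          nlinarith [Real.mul_self_sqrt (neg_nonneg.2 hneg.le)]
        · rw [show sgn lam i = 1 from by simp [sgn, hpos]]
          rw [show |lam i| = lam i from abs_of_pos hpos] at *
          nlinarith [Real.mul_self_sqrt hpos.le]
    calc M = U * diagonal (Complex.ofReal ∘ lam) * Uᴴ := hsp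
      _ = U * (diagonal e * diagonal (fun i => (sgn lam i : ℂ)) * diagonal e) * Uᴴ := by
          rw [key]
      _ = U * diagonal e * diagonal (fun i => (sgn lam i : ℂ)) * (diagonal e * Uᴴ) := by
          simp only [mul_assoc]


/-- pH of a real diagonal matrix -/
lemma pH_diagonal (d : Fin n → ℝ) :
    pH (isHermitian_diagonal_ofReal d) = (univ.filter fun i => 0 < d i).card := by
  refine (posCount_eq _ (EuclideanSpace.basisFun (Fin n) ℂ) d ?_).symm
  intro j
  have hb : ⇑(EuclideanSpace.basisFun (Fin n) ℂ j) = Pi.single j (1:ℂ) := by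
    funext i
    simp [EuclideanSpace.basisFun_apply, EuclideanSpace.single_apply, Pi.single_apply, eq_comm]
  rw [hb, Matrix.diagonal_mulVec_single]
  funext i
  by_cases h : i = j
  · subst h
    simp [Pi.single_apply, Complex.real_smul]
  · simp [Pi.single_apply, h]

lemma rank_diagonal_ofReal (d : Fin n → ℝ) :
    (diagonal (fun i => (d i : ℂ)) : Matrix (Fin n) (Fin n) ℂ).rank
      = (univ.filter fun i => d i ≠ 0).card := by
  classical
  rw [Matrix.rank_diagonal, Fintype.card_subtype]
  congr 1
  apply Finset.filter_congr
  intro i _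
  simp [Complex.ofReal_eq_zero]

/-- counts of sign fibers determined by pH and rank -/
lemma sgn_fiber_count {M : Matrix (Fin n) (Fin n) ℂ} (hM : M.IsHermitian) :
    ((univ.filter fun i => sgn hM.eigenvalues i = 1).card = pH hM)
    ∧ ((univ.filter fun i => sgn hM.eigenvalues i = -1).card
        = (univ.filter fun i => hM.eigenvalues i < 0).card) := by
  constructor
  · rw [pH]; congr 1; apply Finset.filter_congr; intro i _
    simp [sgn_eq_one_iff]
  · congr 1; apply Finset.filter_congr; intro i _
    simp [sgn_eq_negone_iff]

lemma sgn_fiber_total (μ : Fin n → ℝ) :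
    (univ.filter fun i => sgn μ i = 1).card + (univ.filter fun i => sgn μ i = -1).card
      + (univ.filter fun i => sgn μ i = 0).card = n := by
  classical
  have h1 : (univ : Finset (Fin n))
      = univ.filter fun i => sgn μ i = 1 ∨ sgn μ i = -1 ∨ sgn μ i = 0 := by
    symm; rw [Finset.filter_true_of_mem]; intro i _; exact sgn_mem μ i
  have h2 := congrArg Finset.card h1
  rw [Finset.card_univ, Fintype.card_fin] at h2
  rw [Finset.filter_or, Finset.filter_or] at h2
  rw [Finset.card_union_of_disjoint, Finset.card_union_of_disjoint] at h2
  · omega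
  · rw [Finset.disjoint_filter]; intro i _ ha hb; rw [ha] at hb; norm_num at hb
  · rw [Finset.disjoint_left]
    intro i hi hmem
    rw [Finset.mem_filter] at hi
    rw [Finset.mem_union, Finset.mem_filter, Finset.mem_filter] at hmem
    rcases hmem with ⟨-, h⟩ | ⟨-, h⟩ <;> rw [hi.2] at h <;> norm_num at h


end Stmt3Aux

theorem stmt3 (n r : ℕ) (hr : r ≤ n) :
    (∀ (A B : Matrix (Fin n) (Fin n) ℂ) (hA : A.IsHermitian) (hB : B.IsHermitian),
        A.rank = r → B.rank = r →
        ((Finset.univ.filter fun i => 0 < hA.eigenvalues i).card =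
            (Finset.univ.filter fun i => 0 < hB.eigenvalues i).card ↔
          JoinedIn {M : Matrix (Fin n) (Fin n) ℂ | M.IsHermitian ∧ M.rank = r} A B)) ∧
    (∀ p : ℕ, p ≤ r → ∃ (A : Matrix (Fin n) (Fin n) ℂ) (hA : A.IsHermitian),
        A.rank = r ∧ (Finset.univ.filter fun i => 0 < hA.eigenvalues i).card = p) := by
  classical
  constructor
  · intro A B hA hB hAr hBr
    constructor
    · intro hcount
      have hpq : Stmt3Aux.pH hA = Stmt3Aux.pH hB := hcount
      obtain ⟨GA, hGAu, hdecA⟩ := Stmt3Aux.decomp hA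
      obtain ⟨GB, hGBu, hdecB⟩ := Stmt3Aux.decomp hB
      set sA := Stmt3Aux.sgn hA.eigenvalues with hsA
      set sB := Stmt3Aux.sgn hB.eigenvalues with hsB
      set DA : Matrix (Fin n) (Fin n) ℂ := Matrix.diagonal (fun i => (sA i : ℂ)) with hDA
      set DB : Matrix (Fin n) (Fin n) ℂ := Matrix.diagonal (fun i => (sB i : ℂ)) with hDB
      have hDAH : DA.IsHermitian := Stmt3Aux.isHermitian_diagonal_ofReal sA
      have hDBH : DB.IsHermitian := Stmt3Aux.isHermitian_diagonal_ofReal sB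
      have hGAu' : IsUnit (GA)ᴴ.det := by
        rw [Matrix.det_conjTranspose]; exact hGAu.star
      have hGBu' : IsUnit (GB)ᴴ.det := by
        rw [Matrix.det_conjTranspose]; exact hGBu.star
      have hrDA : DA.rank = r := by
        have h1 : A.rank = DA.rank := by
          rw [hdecA, Matrix.rank_mul_eq_left_of_isUnit_det _ _ hGAu',
            Matrix.rank_mul_eq_right_of_isUnit_det _ _ hGAu]
        rw [← h1, hAr]
      have hrDB : DB.rank = r := by
        have h1 : B.rank = DB.rank := by
          rw [hdecB, Matrix.rank_mul_eq_left_of_isUnit_det _ _ hGBu',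
            Matrix.rank_mul_eq_right_of_isUnit_det _ _ hGBu]
        rw [← h1, hBr]
      have jA : JoinedIn {M : Matrix (Fin n) (Fin n) ℂ | M.IsHermitian ∧ M.rank = r} A DA := by
        have := Stmt3Aux.cong r DA GA hDAH hrDA hGAu
        rwa [← hdecA] at this
      have jB : JoinedIn {M : Matrix (Fin n) (Fin n) ℂ | M.IsHermitian ∧ M.rank = r} B DB := by
        have := Stmt3Aux.cong r DB GB hDBH hrDB hGBu
        rwa [← hdecB] at this
      have hneg : (Finset.univ.filter fun i => hA.eigenvalues i < 0).card
          = (Finset.univ.filter fun i => hB.eigenvalues i < 0).card := by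
        have t1 := Stmt3Aux.ranksum hA
        have t2 := Stmt3Aux.ranksum hB
        rw [hAr] at t1; rw [hBr] at t2
        omega
      have hfib : ∀ v : ℝ, Fintype.card {i // sA i = v} = Fintype.card {i // sB i = v} := by
        intro v
        rw [Fintype.card_subtype, Fintype.card_subtype, hsA, hsB]
        obtain ⟨c1A, cmA⟩ := Stmt3Aux.sgn_fiber_count hA
        obtain ⟨c1B, cmB⟩ := Stmt3Aux.sgn_fiber_count hB
        have totA := Stmt3Aux.sgn_fiber_total hA.eigenvalues
        have totB := Stmt3Aux.sgn_fiber_total hB.eigenvalues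
        by_cases h1 : v = 1
        · subst h1; rw [c1A, c1B]; exact hpq
        by_cases h2 : v = -1
        · subst h2; rw [cmA, cmB]; exact hneg
        by_cases h0 : v = 0
        · subst h0
          rw [c1A, cmA] at totA
          rw [c1B, cmB] at totB
          omega
        · have eA : (Finset.univ.filter fun i => sA i = v) = ∅ := by
            rw [Finset.filter_eq_empty_iff]
            intro i _
            rcases Stmt3Aux.sgn_mem hA.eigenvalues i with h | h | h <;> rw [hsA, h]
            · exact fun hv => h1 hv.symm
            · exact fun hv => h2 hv.symm
            · exact fun hv => h0 hv.symm
          have eB : (Finset.univ.filter fun i => sB i = v) = ∅ := by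
            rw [Finset.filter_eq_empty_iff]
            intro i _
            rcases Stmt3Aux.sgn_mem hB.eigenvalues i with h | h | h <;> rw [hsB, h]
            · exact fun hv => h1 hv.symm
            · exact fun hv => h2 hv.symm
            · exact fun hv => h0 hv.symm
          have eA' : (Finset.univ.filter fun x => Stmt3Aux.sgn hA.eigenvalues x = v) = ∅ := eA
          have eB' : (Finset.univ.filter fun x => Stmt3Aux.sgn hB.eigenvalues x = v) = ∅ := eB
          rw [eA', eB']
      obtain ⟨σ, hσ⟩ := Stmt3Aux.exists_perm_comp sA sB hfib
      have hPDB : (σ.toPEquiv.toMatrix : Matrix (Fin n) (Fin n) ℂ) * DB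
          * (σ.toPEquiv.toMatrix : Matrix (Fin n) (Fin n) ℂ)ᴴ = DA := by
        rw [hDB, Stmt3Aux.perm_conj σ, hDA]
        refine congrArg Matrix.diagonal (funext fun i => ?_)
        show (sB (σ i) : ℂ) = (sA i : ℂ)
        exact congrArg _ (congrFun hσ i)
      have jmid : JoinedIn {M : Matrix (Fin n) (Fin n) ℂ | M.IsHermitian ∧ M.rank = r} DA DB := by
        have := Stmt3Aux.cong r DB _ hDBH hrDB (Stmt3Aux.perm_det_isUnit σ)
        rwa [hPDB] at this
      exact jA.trans (jmid.trans jB.symm)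
    · intro hjoin
      exact Stmt3Aux.pathinv r hA hB hjoin
  · intro p hp
    set d : Fin n → ℝ := fun i => if (i:ℕ) < p then 1 else if (i:ℕ) < r then -1 else 0 with hd
    refine ⟨Matrix.diagonal (fun i => (d i : ℂ)), Stmt3Aux.isHermitian_diagonal_ofReal d, ?_, ?_⟩
    · rw [Stmt3Aux.rank_diagonal_ofReal]
      have e1 : (Finset.univ.filter fun i => d i ≠ 0)
          = (Finset.univ.filter fun i : Fin n => (i:ℕ) < r) := by
        apply Finset.filter_congr
        intro i _
        rw [hd]
        by_cases h1 : (i:ℕ) < p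
        · simp only [if_pos h1]
          simp [h1, lt_of_lt_of_le h1 hp]
        · by_cases h2 : (i:ℕ) < r
          · simp only [if_neg h1, if_pos h2]
            simp [h2]
          · simp only [if_neg h1, if_neg h2]
            simp [h2]
      rw [e1, Stmt3Aux.card_filter_lt r hr]
    · have : (Finset.univ.filter fun i =>
          0 < (Stmt3Aux.isHermitian_diagonal_ofReal d).eigenvalues i).card
          = Stmt3Aux.pH (Stmt3Aux.isHermitian_diagonal_ofReal d) := rfl
      rw [this, Stmt3Aux.pH_diagonal]
      have e1 : (Finset.univ.filter fun i => 0 < d i)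
          = (Finset.univ.filter fun i : Fin n => (i:ℕ) < p) := by
        apply Finset.filter_congr
        intro i _
        rw [hd]
        by_cases h1 : (i:ℕ) < p
        · simp only [if_pos h1]
          simp [h1]
        · by_cases h2 : (i:ℕ) < r
          · simp only [if_neg h1, if_pos h2]
            simp [h1]
          · simp only [if_neg h1, if_neg h2]
            simp [h1]
      rw [e1, Stmt3Aux.card_filter_lt p (le_trans hp hr)]
end
end

section
/- Let f : ℝ^d → ℝ be twice continuously differentiable, and suppose its gradient ∇f is L-Lipschitz. Fix a step size α with 0 < α < 1/L and define the gradient descent map φ(x) = x − α∇f(x). Let S be a countable set of critical points of f such that at every p ∈ S the Hessian ∇²f(p) (the second derivative, a symmetric bilinear form) is invertible and possesses at least one direction v with ⟨∇²f(p)v, v⟩ < 0. Then the set of initial points x₀ ∈ ℝ^d for which the iterates φ^n(x₀) converge (as n → ∞) to some point of S has Lebesgue measure zero. -/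
open MeasureTheory Filter Set Module
open scoped NNReal ENNReal

lemma vol_zero_of_dimH_lt {d : ℕ} {s : Set (EuclideanSpace ℝ (Fin d))}
    (h : dimH s < d) : volume s = 0 := by
  have hfr : finrank ℝ (EuclideanSpace ℝ (Fin d)) = d := finrank_euclideanSpace_fin
  have e1 : ((finrank ℝ (EuclideanSpace ℝ (Fin d))) : ℝ) = (d : ℝ) := by rw [hfr]
  haveI hH : (μH[(d : ℝ)] : Measure (EuclideanSpace ℝ (Fin d))).IsAddHaarMeasure := e1 ▸ inferInstance
  have hac : (volume : Measure (EuclideanSpace ℝ (Fin d))) ≪ μH[(d : ℝ)] := by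
    rw [Measure.isAddLeftInvariant_eq_smul (volume : Measure (EuclideanSpace ℝ (Fin d))) (μH[(d : ℝ)])]
    exact Measure.AbsolutelyContinuous.rfl.smul_left _
  have e2 : ((d : ℝ≥0) : ℝ) = (d : ℝ) := by norm_num
  refine measure_zero_of_dimH_lt (d := (d : ℝ≥0)) (by rw [e2]; exact hac) ?_
  simpa using h

lemma dimH_graph_le {d : ℕ} (e : EuclideanSpace ℝ (Fin d)) (he : ‖e‖ = 1)
    {s : Set (EuclideanSpace ℝ (Fin d))}
    (hs : ∀ x ∈ s, ∀ y ∈ s,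
      |(inner ℝ e (x - y) : ℝ)| ≤ ‖(x - y) - (inner ℝ e (x - y) : ℝ) • e‖) :
    dimH s ≤ ((d - 1 : ℕ) : ℝ≥0∞) := by
  classical
  have hfr : finrank ℝ (EuclideanSpace ℝ (Fin d)) = d := finrank_euclideanSpace_fin
  have he0 : e ≠ 0 := fun h => by simp [h] at he
  haveI : Nontrivial (EuclideanSpace ℝ (Fin d)) := nontrivial_of_ne e 0 he0
  have hd1 : 1 ≤ d := by
    have := finrank_pos (R := ℝ) (M := EuclideanSpace ℝ (Fin d)); omega
  set π : EuclideanSpace ℝ (Fin d) → EuclideanSpace ℝ (Fin d) :=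
    fun x => x - (inner ℝ e x : ℝ) • e with hπ
  have hπsub : ∀ x y, π x - π y = π (x - y) := by
    intro x y
    simp only [hπ, inner_sub_right, sub_smul]
    abel
  set T := π '' s with hT
  have hex : ∀ q ∈ T, ∃ x, x ∈ s ∧ π x = q := fun q hq => hq
  choose! ξ hξs hξπ using hex
  set h : EuclideanSpace ℝ (Fin d) → ℝ := fun q => (inner ℝ e (ξ q) : ℝ) with hh
  set g : EuclideanSpace ℝ (Fin d) → EuclideanSpace ℝ (Fin d) :=
    fun q => q + h q • e with hg
  have hπnorm : ∀ x y, x ∈ s → y ∈ s → |(inner ℝ e (x - y) : ℝ)| ≤ ‖π x - π y‖ := by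
    intro x y hx hy
    rw [hπsub]
    exact hs x hx y hy
  have hsub : s ⊆ g '' T := by
    intro x hx
    have hmem : π x ∈ T := Set.mem_image_of_mem π hx
    have h1 : ξ (π x) ∈ s := hξs _ hmem
    have h2 : π (ξ (π x)) = π x := hξπ _ hmem
    have h3 : |(inner ℝ e (x - ξ (π x)) : ℝ)| ≤ ‖π x - π (ξ (π x))‖ := by
      have := hπnorm x (ξ (π x)) hx h1
      linarith [this]
    rw [h2, sub_self, norm_zero] at h3
    have h4 : (inner ℝ e x : ℝ) = inner ℝ e (ξ (π x)) := by
      have : (inner ℝ e (x - ξ (π x)) : ℝ) = 0 := by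
        have := abs_nonneg (inner ℝ e (x - ξ (π x)) : ℝ); 
        have habs : |(inner ℝ e (x - ξ (π x)) : ℝ)| = 0 := le_antisymm h3 this
        exact abs_eq_zero.mp habs
      rw [inner_sub_right] at this; linarith
    refine ⟨π x, hmem, ?_⟩
    simp only [hg, hh]; rw [← h4]; simp only [hπ]
    abel
  have hglip : LipschitzOnWith 2 g T := by
    rw [lipschitzOnWith_iff_dist_le_mul]
    intro q1 hq1 q2 hq2
    have hhd : |h q1 - h q2| ≤ dist q1 q2 := by
      have h1 := hπnorm (ξ q1) (ξ q2) (hξs _ hq1) (hξs _ hq2)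
      rw [hξπ _ hq1, hξπ _ hq2] at h1
      have : (inner ℝ e (ξ q1 - ξ q2) : ℝ) = h q1 - h q2 := by
        simp [hh, inner_sub_right]
      rw [this] at h1
      simpa [dist_eq_norm] using h1
    have : g q1 - g q2 = (q1 - q2) + (h q1 - h q2) • e := by
      simp only [hg, sub_smul]; abel
    rw [dist_eq_norm, this]
    calc ‖(q1 - q2) + (h q1 - h q2) • e‖ ≤ ‖q1 - q2‖ + ‖(h q1 - h q2) • e‖ := norm_add_le _ _
      _ ≤ ‖q1 - q2‖ + |h q1 - h q2| := by rw [norm_smul, he, Real.norm_eq_abs, mul_one]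
      _ ≤ dist q1 q2 + dist q1 q2 := by
          rw [dist_eq_norm]; exact add_le_add le_rfl (by simpa [dist_eq_norm] using hhd)
      _ = 2 * dist q1 q2 := by push_cast; ring
  -- T sits inside the orthogonal complement of e
  set K := (ℝ ∙ e)ᗮ with hK
  have hTK : T ⊆ (K : Set (EuclideanSpace ℝ (Fin d))) := by
    rintro q ⟨x, _, rfl⟩
    rw [hK, SetLike.mem_coe, Submodule.mem_orthogonal_singleton_iff_inner_right]
    have : (inner ℝ e e : ℝ) = 1 := by
      rw [real_inner_self_eq_norm_sq, he]; norm_num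
    simp [hπ, inner_sub_right, inner_smul_right, this, he]
  haveI : Fact (finrank ℝ (EuclideanSpace ℝ (Fin d)) = (d - 1) + 1) := ⟨by omega⟩
  have hfrK : finrank ℝ K = d - 1 := Submodule.finrank_orthogonal_span_singleton he0
  have hdimK : dimH (K : Set (EuclideanSpace ℝ (Fin d))) ≤ ((d - 1 : ℕ) : ℝ≥0∞) := by
    have h1 : (K : Set (EuclideanSpace ℝ (Fin d))) = Subtype.val '' (Set.univ : Set K) := by
      simp
    rw [h1]
    calc dimH (Subtype.val '' (Set.univ : Set K))
        ≤ dimH (Set.univ : Set K) :=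
          ((isometry_subtype_coe).lipschitz).dimH_image_le _
      _ = ((finrank ℝ K : ℕ) : ℝ≥0∞) := by
          rw [Real.dimH_univ_eq_finrank]
      _ = ((d - 1 : ℕ) : ℝ≥0∞) := by rw [hfrK]
  calc dimH s ≤ dimH (g '' T) := dimH_mono hsub
    _ ≤ dimH T := hglip.dimH_image_le
    _ ≤ dimH (K : Set (EuclideanSpace ℝ (Fin d))) := dimH_mono hTK
    _ ≤ ((d - 1 : ℕ) : ℝ≥0∞) := hdimK


lemma grad_contDiff {d : ℕ} {f : EuclideanSpace ℝ (Fin d) → ℝ} (hf : ContDiff ℝ 2 f) :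
    ContDiff ℝ 1 (gradient f) := by
  have hfd : ContDiff ℝ 1 (fderiv ℝ f) := hf.fderiv_right (by norm_num)
  let iso : StrongDual ℝ (EuclideanSpace ℝ (Fin d)) ≃ₗᵢ[ℝ] EuclideanSpace ℝ (Fin d) :=
    (InnerProductSpace.toDual ℝ (EuclideanSpace ℝ (Fin d))).symm
  exact iso.contDiff.comp hfd

lemma hess_symm {d : ℕ} {f : EuclideanSpace ℝ (Fin d) → ℝ} (hf : ContDiff ℝ 2 f)
    (p v w : EuclideanSpace ℝ (Fin d)) :
    (inner ℝ (fderiv ℝ (gradient f) p v) w : ℝ) = inner ℝ v (fderiv ℝ (gradient f) p w) := by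
  have hfd : ContDiff ℝ 1 (fderiv ℝ f) := hf.fderiv_right (by norm_num)
  have hdiff : Differentiable ℝ f := hf.differentiable (by norm_num)
  have hfd' : DifferentiableAt ℝ (fderiv ℝ f) p := (hfd.differentiable one_ne_zero) p
  have hsymm : ∀ v w, fderiv ℝ (fderiv ℝ f) p v w = fderiv ℝ (fderiv ℝ f) p w v :=
    second_derivative_symmetric (fun y => (hdiff y).hasFDerivAt) hfd'.hasFDerivAt
  let iso : StrongDual ℝ (EuclideanSpace ℝ (Fin d)) ≃ₗᵢ[ℝ] EuclideanSpace ℝ (Fin d) :=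
    (InnerProductSpace.toDual ℝ (EuclideanSpace ℝ (Fin d))).symm
  have hcomp : fderiv ℝ (gradient f) p
      = (iso : StrongDual ℝ (EuclideanSpace ℝ (Fin d)) →L[ℝ]
          EuclideanSpace ℝ (Fin d)).comp (fderiv ℝ (fderiv ℝ f) p) := by
    have h0 : gradient f = (iso ∘ fderiv ℝ f) := rfl
    rw [h0, LinearIsometryEquiv.comp_fderiv]
  have happ : ∀ u, fderiv ℝ (gradient f) p u
      = (InnerProductSpace.toDual ℝ (EuclideanSpace ℝ (Fin d))).symm
          (fderiv ℝ (fderiv ℝ f) p u) := by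
    intro u; rw [hcomp]; rfl
  rw [happ, happ, InnerProductSpace.toDual_symm_apply, real_inner_comm,
    InnerProductSpace.toDual_symm_apply, hsymm]

set_option maxHeartbeats 1000000 in
lemma key {d : ℕ} (f : EuclideanSpace ℝ (Fin d) → ℝ) (L : NNReal) (α : ℝ)
    (hf : ContDiff ℝ 2 f)
    (hLip : LipschitzWith L (gradient f))
    (hα : 0 < α) (hα' : α < 1 / (L : ℝ))
    (p : EuclideanSpace ℝ (Fin d))
    (hneg : ∃ v, (inner ℝ (fderiv ℝ (gradient f) p v) v : ℝ) < 0) :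
    volume {x₀ : EuclideanSpace ℝ (Fin d) |
      Tendsto (fun k => (fun x => x - α • gradient f x)^[k] x₀) atTop (nhds p)} = 0 := by
  classical
  -- basic constants
  have hL0 : (0:ℝ) < L := by
    rcases lt_or_eq_of_le L.coe_nonneg with h | h
    · exact h
    · exfalso; rw [← h] at hα'; simp at hα'; linarith
  have hαL : α * L < 1 := (lt_div_iff₀ hL0).mp hα'
  set Φ : EuclideanSpace ℝ (Fin d) → EuclideanSpace ℝ (Fin d) :=
    fun x => x - α • gradient f x with hΦ
  -- gradient facts
  have hg1 : ContDiff ℝ 1 (gradient f) := grad_contDiff hf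
  have hgdiff : Differentiable ℝ (gradient f) := hg1.differentiable one_ne_zero
  set H := fderiv ℝ (gradient f) p with hH
  have hsym : ∀ v w, (inner ℝ (H v) w : ℝ) = inner ℝ v (H w) := hess_symm hf p
  have hsymL : (H : EuclideanSpace ℝ (Fin d) →ₗ[ℝ] EuclideanSpace ℝ (Fin d)).IsSymmetric := by
    intro x y; simpa using hsym x y
  have hn : finrank ℝ (EuclideanSpace ℝ (Fin d)) = d := finrank_euclideanSpace_fin
  set b := hsymL.eigenvectorBasis hn with hb
  set μ := hsymL.eigenvalues hn with hμdef
  have hdiag : ∀ (z : EuclideanSpace ℝ (Fin d)) i, b.repr (H z) i = μ i * b.repr z i := by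
    intro z i
    have := hsymL.eigenvectorBasis_apply_self_apply hn z i
    simpa [← hb, ← hμdef] using this
  -- eigenvalue bounds
  have hnormH : ‖H‖ ≤ L := norm_fderiv_le_of_lipschitz ℝ hLip
  have hbnorm : ∀ i, ‖b i‖ = 1 := fun i => b.orthonormal.1 i
  have hμL : ∀ i, |μ i| ≤ L := by
    intro i
    have h1 : b.repr (H (b i)) i = μ i * b.repr (b i) i := hdiag (b i) i
    have h2 : H (b i) = μ i • b i := by
      have := hsymL.apply_eigenvectorBasis hn i
      simpa [← hb, ← hμdef] using this
    have h3 : ‖H (b i)‖ ≤ L := by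
      calc ‖H (b i)‖ ≤ ‖H‖ * ‖b i‖ := H.le_opNorm _
        _ ≤ L * 1 := by rw [hbnorm i]; exact mul_le_mul_of_nonneg_right hnormH zero_le_one
        _ = L := mul_one _
    calc |μ i| = ‖μ i • b i‖ := by rw [norm_smul, Real.norm_eq_abs, hbnorm, mul_one]
      _ ≤ L := by rw [← h2]; exact h3
  -- Euclidean norm formula and coordinate bound
  have hnormEuc : ∀ (w : EuclideanSpace ℝ (Fin d)), ‖w‖ = Real.sqrt (∑ i, (w i) ^ 2) := by
    intro w
    rw [EuclideanSpace.norm_eq]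
    congr 1
    refine Finset.sum_congr rfl fun i _ => ?_
    rw [Real.norm_eq_abs, sq_abs]
  have habs : ∀ (w : EuclideanSpace ℝ (Fin d)) i, |w i| ≤ ‖w‖ := by
    intro w i
    rw [hnormEuc, ← Real.sqrt_sq_eq_abs]
    exact Real.sqrt_le_sqrt (Finset.single_le_sum (f := fun j => (w j)^2)
      (fun j _ => sq_nonneg _) (Finset.mem_univ i))
  -- negative spectrum
  set N : Finset (Fin d) := Finset.univ.filter (fun i => μ i < 0) with hN
  have hNne : N.Nonempty := by
    by_contra hne
    obtain ⟨v, hv⟩ := hneg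
    have hall : ∀ i, 0 ≤ μ i := by
      intro i; by_contra hcon; push_neg at hcon
      exact hne ⟨i, by simp [hN, hcon]⟩
    have hinner : (inner ℝ (H v) v : ℝ) = ∑ i, μ i * (b.repr v i) ^ 2 := by
      have h1 : (inner ℝ (H v) v : ℝ) = inner ℝ (b.repr (H v)) (b.repr v) :=
        (b.repr.inner_map_map (H v) v).symm
      rw [h1, PiLp.inner_apply]
      refine Finset.sum_congr rfl fun i _ => ?_
      simp only [RCLike.inner_apply, conj_trivial, hdiag]
      ring
    rw [hinner] at hv
    have : (0:ℝ) ≤ ∑ i, μ i * (b.repr v i) ^ 2 :=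
      Finset.sum_nonneg fun i _ => mul_nonneg (hall i) (sq_nonneg _)
    linarith
  set δ : ℝ := N.inf' hNne (fun i => -μ i) with hδdef
  have hδpos : 0 < δ := by
    rw [hδdef, Finset.lt_inf'_iff]
    intro i hi
    rw [hN, Finset.mem_filter] at hi
    linarith [hi.2]
  have hμδ : ∀ i ∈ N, μ i ≤ -δ := by
    intro i hi
    have := Finset.inf'_le (fun i => -μ i) hi
    rw [← hδdef] at this; linarith
  -- radius
  have hcont : ContinuousAt (fderiv ℝ (gradient f)) p :=
    (hg1.continuous_fderiv one_ne_zero).continuousAt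
  obtain ⟨r, hrpos, hball⟩ : ∃ r > 0, ∀ z ∈ Metric.closedBall p r,
      ‖fderiv ℝ (gradient f) z - H‖ ≤ δ/4 := by
    have h4 : 0 < δ/4 := by linarith
    obtain ⟨ε, hε, hev⟩ := Metric.continuousAt_iff.mp hcont (δ/4) h4
    refine ⟨ε/2, by linarith, fun z hz => ?_⟩
    have h5 : dist z p < ε := lt_of_le_of_lt (Metric.mem_closedBall.mp hz) (by linarith)
    have h6 := hev h5
    rw [dist_eq_norm] at h6
    rw [hH]
    linarith
  -- mean value inequality
  have hMV : ∀ x ∈ Metric.closedBall p r, ∀ y ∈ Metric.closedBall p r,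
      ‖gradient f x - gradient f y - H (x - y)‖ ≤ δ/4 * ‖x - y‖ := by
    intro x hx y hy
    exact (convex_closedBall p r).norm_image_sub_le_of_norm_fderiv_le'
      (fun z _ => (hgdiff z)) (fun z hz => hball z hz) hy hx
  have hmemN : ∀ i, i ∈ N ↔ μ i < 0 := by
    intro i; rw [hN, Finset.mem_filter]; simp
  -- masked coordinate seminorms
  set mU : EuclideanSpace ℝ (Fin d) → EuclideanSpace ℝ (Fin d) :=
    fun z => WithLp.toLp 2 (fun i => if i ∈ N then b.repr z i else 0) with hmU
  set mS : EuclideanSpace ℝ (Fin d) → EuclideanSpace ℝ (Fin d) :=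
    fun z => WithLp.toLp 2 (fun i => if i ∈ N then 0 else b.repr z i) with hmS
  set U : EuclideanSpace ℝ (Fin d) → ℝ := fun z => ‖mU z‖ with hUdef
  set S : EuclideanSpace ℝ (Fin d) → ℝ := fun z => ‖mS z‖ with hSdef
  have hU0le : ∀ z, 0 ≤ U z := fun z => norm_nonneg _
  have hS0le : ∀ z, 0 ≤ S z := fun z => norm_nonneg _
  have hmUadd : ∀ z w, mU (z + w) = mU z + mU w := by
    intro z w
    ext i
    simp only [hmU, map_add]
    by_cases hi : i ∈ N <;> simp [hi, PiLp.add_apply]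
  have hmSadd : ∀ z w, mS (z + w) = mS z + mS w := by
    intro z w
    ext i
    simp only [hmS, map_add]
    by_cases hi : i ∈ N <;> simp [hi, PiLp.add_apply]
  have hUadd : ∀ z w, U (z + w) ≤ U z + U w := by
    intro z w; rw [hUdef]; simp only; rw [hmUadd]; exact norm_add_le _ _
  have hUsq : ∀ z, U z = Real.sqrt (∑ i ∈ N, (b.repr z i)^2) := by
    intro z
    rw [hUdef]; simp only; rw [hnormEuc]
    congr 1
    have h1 : ∀ i : Fin d, (mU z i)^2 = if i ∈ N then (b.repr z i)^2 else 0 := by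
      intro i; by_cases h : i ∈ N <;> simp [hmU, h]
    rw [Finset.sum_congr rfl (fun i _ => h1 i), Finset.sum_ite_mem, Finset.univ_inter]
  have hSsq : ∀ z, S z = Real.sqrt (∑ i ∈ Nᶜ, (b.repr z i)^2) := by
    intro z
    rw [hSdef]; simp only; rw [hnormEuc]
    congr 1
    have h1 : ∀ i : Fin d, (mS z i)^2 = if i ∈ Nᶜ then (b.repr z i)^2 else 0 := by
      intro i; by_cases h : i ∈ N <;> simp [hmS, h, Finset.mem_compl]
    rw [Finset.sum_congr rfl (fun i _ => h1 i), Finset.sum_ite_mem, Finset.univ_inter]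
  have hUle : ∀ z, U z ≤ ‖z‖ := by
    intro z
    rw [hUsq, ← b.repr.norm_map z, hnormEuc]
    apply Real.sqrt_le_sqrt
    exact Finset.sum_le_sum_of_subset_of_nonneg (Finset.subset_univ N) (fun i _ _ => sq_nonneg _)
  have hSle : ∀ z, S z ≤ ‖z‖ := by
    intro z
    rw [hSsq, ← b.repr.norm_map z, hnormEuc]
    apply Real.sqrt_le_sqrt
    exact Finset.sum_le_sum_of_subset_of_nonneg (Finset.subset_univ Nᶜ) (fun i _ _ => sq_nonneg _)
  have hUS : ∀ z, ‖z‖ ≤ U z + S z := by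
    intro z
    have hsplit : b.repr z = mU z + mS z := by
      ext i
      by_cases hi : i ∈ N <;> simp [hmU, hmS, hi, PiLp.add_apply]
    calc ‖z‖ = ‖b.repr z‖ := (b.repr.norm_map z).symm
      _ = ‖mU z + mS z‖ := by rw [hsplit]
      _ ≤ U z + S z := norm_add_le _ _
  -- linear model map and its expansion/contraction
  set A : EuclideanSpace ℝ (Fin d) → EuclideanSpace ℝ (Fin d) :=
    fun z => z - α • H z with hA
  have hreprA : ∀ z i, b.repr (A z) i = (1 - α * μ i) * b.repr z i := by
    intro z i
    have h1 : b.repr (A z) = b.repr z - α • b.repr (H z) := by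
      rw [hA]; simp only; rw [map_sub, LinearIsometryEquiv.map_smul]
    rw [h1, PiLp.sub_apply, PiLp.smul_apply, hdiag, smul_eq_mul]
    ring
  have hUA : ∀ z, (1 + α*δ) * U z ≤ U (A z) := by
    intro z
    rw [hUsq, hUsq]
    have h0 : (0:ℝ) ≤ 1 + α*δ := by positivity
    have h1 : (1 + α*δ) * Real.sqrt (∑ i ∈ N, (b.repr z i)^2)
        = Real.sqrt ((1+α*δ)^2 * ∑ i ∈ N, (b.repr z i)^2) := by
      rw [Real.sqrt_mul (sq_nonneg _), Real.sqrt_sq h0]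
    rw [h1]
    apply Real.sqrt_le_sqrt
    rw [Finset.mul_sum]
    refine Finset.sum_le_sum fun i hi => ?_
    rw [hreprA]
    have h2 : 1 + α*δ ≤ 1 - α * μ i := by nlinarith [hμδ i hi]
    calc (1+α*δ)^2 * (b.repr z i)^2 ≤ (1 - α*μ i)^2 * (b.repr z i)^2 :=
          mul_le_mul_of_nonneg_right (pow_le_pow_left₀ h0 h2 2) (sq_nonneg _)
      _ = ((1 - α * μ i) * b.repr z i)^2 := by ring
  have hSA : ∀ z, S (A z) ≤ S z := by
    intro z
    rw [hSsq, hSsq]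
    apply Real.sqrt_le_sqrt
    refine Finset.sum_le_sum fun i hi => ?_
    have hi2 : ¬ μ i < 0 := by
      rw [Finset.mem_compl, hmemN] at hi; exact hi
    push_neg at hi2
    have hμiL : μ i ≤ L := le_trans (le_abs_self _) (hμL i)
    rw [hreprA]
    calc ((1 - α * μ i) * b.repr z i)^2 = (1 - α*μ i)^2 * (b.repr z i)^2 := by ring
      _ ≤ 1 * (b.repr z i)^2 := by
          apply mul_le_mul_of_nonneg_right _ (sq_nonneg _)
          nlinarith [mul_nonneg hα.le hi2, mul_le_mul_of_nonneg_left hμiL hα.le, hαL]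
      _ = (b.repr z i)^2 := one_mul _
  -- nonlinear error
  have hΦA : ∀ x ∈ Metric.closedBall p r, ∀ y ∈ Metric.closedBall p r,
      ‖(Φ x - Φ y) - A (x - y)‖ ≤ α * (δ/4) * ‖x - y‖ := by
    intro x hx y hy
    have h1 : (Φ x - Φ y) - A (x - y)
        = (-α) • (gradient f x - gradient f y - H (x - y)) := by
      simp only [hΦ, hA, map_sub, smul_sub, neg_smul]
      abel
    rw [h1, norm_smul, norm_neg, Real.norm_eq_abs, abs_of_pos hα]
    calc α * ‖gradient f x - gradient f y - H (x - y)‖ ≤ α * (δ/4 * ‖x - y‖) :=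
          mul_le_mul_of_nonneg_left (hMV x hx y hy) (le_of_lt hα)
      _ = α * (δ/4) * ‖x - y‖ := by ring
  -- the locally invariant set
  set T : Set (EuclideanSpace ℝ (Fin d)) :=
    {x | ∀ n : ℕ, Φ^[n] x ∈ Metric.closedBall p r} with hT
  set κ : ℝ := 1 + α*δ/2 with hκdef
  have hκ1 : 1 < κ := by rw [hκdef]; nlinarith
  have hκ0 : 0 < κ := by linarith
  -- the cone/expansion argument: T is a Lipschitz graph
  have main : ∀ x ∈ T, ∀ y ∈ T, S (x - y) ≤ U (x - y) → x = y := by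
    intro x hx y hy hSU
    set Δ : ℕ → EuclideanSpace ℝ (Fin d) := fun n => Φ^[n] x - Φ^[n] y with hΔ
    have hstep : ∀ n, S (Δ n) ≤ U (Δ n) →
        S (Δ (n+1)) ≤ U (Δ (n+1)) ∧ κ * U (Δ n) ≤ U (Δ (n+1)) := by
      intro n hsu
      have hxball : Φ^[n] x ∈ Metric.closedBall p r := hx n
      have hyball : Φ^[n] y ∈ Metric.closedBall p r := hy n
      have herr : ‖Δ (n+1) - A (Δ n)‖ ≤ α * (δ/4) * ‖Δ n‖ := by
        have h1 : Δ (n+1) = Φ (Φ^[n] x) - Φ (Φ^[n] y) := by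
          simp only [hΔ, Function.iterate_succ_apply']
        rw [h1]
        exact hΦA _ hxball _ hyball
      have hΔnorm : ‖Δ n‖ ≤ 2 * U (Δ n) := by
        have := hUS (Δ n); linarith
      have herr2 : ‖Δ (n+1) - A (Δ n)‖ ≤ α * δ/2 * U (Δ n) := by
        calc ‖Δ (n+1) - A (Δ n)‖ ≤ α * (δ/4) * ‖Δ n‖ := herr
          _ ≤ α * (δ/4) * (2 * U (Δ n)) := by
              apply mul_le_mul_of_nonneg_left hΔnorm; positivity
          _ = α * δ/2 * U (Δ n) := by ring
      have hUlow : κ * U (Δ n) ≤ U (Δ (n+1)) := by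
        have h1 : U (A (Δ n)) ≤ U (A (Δ n) - Δ (n+1)) + U (Δ (n+1)) := by
          have := hUadd (A (Δ n) - Δ (n+1)) (Δ (n+1))
          simpa using this
        have h2 : U (A (Δ n) - Δ (n+1)) ≤ α * δ/2 * U (Δ n) := by
          calc U (A (Δ n) - Δ (n+1)) ≤ ‖A (Δ n) - Δ (n+1)‖ := hUle _
            _ = ‖Δ (n+1) - A (Δ n)‖ := by rw [norm_sub_rev]
            _ ≤ α * δ/2 * U (Δ n) := herr2
        have h3 := hUA (Δ n)
        rw [hκdef]
        nlinarith
      refine ⟨?_, hUlow⟩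
      have h4 : S (Δ (n+1)) ≤ S (A (Δ n)) + ‖Δ (n+1) - A (Δ n)‖ := by
        have h5 : mS (Δ (n+1)) = mS (A (Δ n)) + mS (Δ (n+1) - A (Δ n)) := by
          have e : A (Δ n) + (Δ (n+1) - A (Δ n)) = Δ (n+1) := by abel
          conv_lhs => rw [← e]
          rw [hmSadd]
        rw [hSdef]; simp only; rw [h5]
        calc ‖mS (A (Δ n)) + mS (Δ (n+1) - A (Δ n))‖
            ≤ ‖mS (A (Δ n))‖ + ‖mS (Δ (n+1) - A (Δ n))‖ := norm_add_le _ _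
          _ ≤ ‖mS (A (Δ n))‖ + ‖Δ (n+1) - A (Δ n)‖ :=
              add_le_add le_rfl (hSle (Δ (n+1) - A (Δ n)))
          _ = S (A (Δ n)) + ‖Δ (n+1) - A (Δ n)‖ := rfl
      calc S (Δ (n+1)) ≤ S (A (Δ n)) + ‖Δ (n+1) - A (Δ n)‖ := h4
        _ ≤ S (Δ n) + α * δ/2 * U (Δ n) := add_le_add (hSA _) herr2
        _ ≤ U (Δ n) + α * δ/2 * U (Δ n) := by linarith
        _ = κ * U (Δ n) := by rw [hκdef]; ring
        _ ≤ U (Δ (n+1)) := hUlow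
    have hind : ∀ n, S (Δ n) ≤ U (Δ n) ∧ κ^n * U (Δ 0) ≤ U (Δ n) := by
      intro n
      induction n with
      | zero => exact ⟨hSU, by simp⟩
      | succ n ih =>
        obtain ⟨h1, h2⟩ := ih
        obtain ⟨h3, h4⟩ := hstep n h1
        refine ⟨h3, ?_⟩
        calc κ^(n+1) * U (Δ 0) = κ * (κ^n * U (Δ 0)) := by ring
          _ ≤ κ * U (Δ n) := mul_le_mul_of_nonneg_left h2 hκ0.le
          _ ≤ U (Δ (n+1)) := h4
    have hbd : ∀ n, U (Δ n) ≤ 2*r := by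
      intro n
      have h1 : ‖Δ n‖ ≤ 2*r := by
        have hx' : dist (Φ^[n] x) p ≤ r := Metric.mem_closedBall.mp (hx n)
        have hy' : dist (Φ^[n] y) p ≤ r := Metric.mem_closedBall.mp (hy n)
        calc ‖Δ n‖ = dist (Φ^[n] x) (Φ^[n] y) := (dist_eq_norm _ _).symm
          _ ≤ dist (Φ^[n] x) p + dist p (Φ^[n] y) := dist_triangle _ _ _
          _ ≤ r + r := add_le_add hx' (by rwa [dist_comm])
          _ = 2*r := by ring
      exact le_trans (hUle _) h1
    have hU0 : U (Δ 0) = 0 := by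
      by_contra hne
      have hpos : 0 < U (Δ 0) := lt_of_le_of_ne (hU0le _) (Ne.symm hne)
      obtain ⟨n, hn⟩ := pow_unbounded_of_one_lt ((2*r)/U (Δ 0)) hκ1
      have h2 : κ^n * U (Δ 0) ≤ 2*r := le_trans (hind n).2 (hbd n)
      rw [div_lt_iff₀ hpos] at hn
      linarith
    have hS0 : S (Δ 0) = 0 := le_antisymm (by rw [← hU0]; exact hSU) (hS0le _)
    have hΔ0 : Δ 0 = x - y := by simp [hΔ]
    have : ‖x - y‖ ≤ 0 := by
      have := hUS (x - y)
      rw [← hΔ0] at this ⊢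
      rw [hU0, hS0] at this
      linarith
    have hxy : ‖x - y‖ = 0 := le_antisymm this (norm_nonneg _)
    exact sub_eq_zero.mp (norm_eq_zero.mp hxy)
  -- graph property for T
  obtain ⟨i₀, hi₀⟩ := hNne
  set e : EuclideanSpace ℝ (Fin d) := b i₀ with he
  have he1 : ‖e‖ = 1 := hbnorm i₀
  have hgraph : ∀ x ∈ T, ∀ y ∈ T,
      |(inner ℝ e (x - y) : ℝ)| ≤ ‖(x - y) - (inner ℝ e (x - y) : ℝ) • e‖ := by
    intro x hx y hy
    rcases eq_or_ne x y with hxy | hxy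
    · simp [hxy]
    set Δ₀ := x - y with hΔ₀def
    have hrepr : (inner ℝ e Δ₀ : ℝ) = b.repr Δ₀ i₀ := (b.repr_apply_apply Δ₀ i₀).symm
    have hUS' : U Δ₀ < S Δ₀ := by
      by_contra hcon
      push_neg at hcon
      exact hxy (main x hx y hy hcon)
    have h1 : |(inner ℝ e Δ₀ : ℝ)| ≤ U Δ₀ := by
      rw [hrepr, hUsq, ← Real.sqrt_sq_eq_abs]
      exact Real.sqrt_le_sqrt (Finset.single_le_sum (f := fun j => (b.repr Δ₀ j)^2)
        (fun j _ => sq_nonneg _) hi₀)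
    have h2 : S Δ₀ ≤ ‖Δ₀ - (inner ℝ e Δ₀ : ℝ) • e‖ := by
      set z := Δ₀ - (inner ℝ e Δ₀ : ℝ) • e with hz
      have hcoord : ∀ j, b.repr z j = if j = i₀ then 0 else b.repr Δ₀ j := by
        intro j
        have : b.repr z = b.repr Δ₀ - (inner ℝ e Δ₀ : ℝ) • b.repr e := by
          rw [hz, map_sub, LinearIsometryEquiv.map_smul]
        rw [this, PiLp.sub_apply, PiLp.smul_apply]
        rw [he, b.repr_self i₀, hrepr]
        rcases eq_or_ne j i₀ with hj | hj
        · subst hj; simp [EuclideanSpace.single_apply]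
        · simp [EuclideanSpace.single_apply, hj, Ne.symm hj]
      rw [hSsq, ← b.repr.norm_map z, hnormEuc]
      apply Real.sqrt_le_sqrt
      have hsubset : Nᶜ ⊆ Finset.univ.filter (fun j => j ≠ i₀) := by
        intro j hj
        rw [Finset.mem_compl] at hj
        rw [Finset.mem_filter]
        exact ⟨Finset.mem_univ _, fun hji => hj (hji ▸ hi₀)⟩
      calc ∑ j ∈ Nᶜ, (b.repr Δ₀ j)^2
          = ∑ j ∈ Nᶜ, (b.repr z j)^2 := by
            refine Finset.sum_congr rfl fun j hj => ?_
            rw [Finset.mem_compl] at hj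
            have hji : j ≠ i₀ := fun hji => hj (hji ▸ hi₀)
            rw [hcoord j, if_neg hji]
        _ ≤ ∑ j, (b.repr z j)^2 :=
            Finset.sum_le_sum_of_subset_of_nonneg (Finset.subset_univ _)
              (fun j _ _ => sq_nonneg _)
    calc |(inner ℝ e Δ₀ : ℝ)| ≤ U Δ₀ := h1
      _ ≤ S Δ₀ := hUS'.le
      _ ≤ ‖Δ₀ - (inner ℝ e Δ₀ : ℝ) • e‖ := h2
  have hdimT : dimH T ≤ ((d - 1 : ℕ) : ℝ≥0∞) := dimH_graph_le e he1 hgraph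
  -- Φ is antilipschitz
  set Kc : ℝ≥0 := Real.toNNReal ((1 - α*L)⁻¹) with hKc
  have hanti : AntilipschitzWith Kc Φ := by
    refine AntilipschitzWith.of_le_mul_dist fun x y => ?_
    have h1 : dist (gradient f x) (gradient f y) ≤ L * dist x y := hLip.dist_le_mul x y
    have h2 : dist x y ≤ dist (Φ x) (Φ y) + α * (L * dist x y) := by
      have h3 : (x - y) = (Φ x - Φ y) + α • (gradient f x - gradient f y) := by
        simp only [hΦ, smul_sub]
        abel
      calc dist x y = ‖x - y‖ := dist_eq_norm _ _
        _ = ‖(Φ x - Φ y) + α • (gradient f x - gradient f y)‖ := by rw [h3]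
        _ ≤ ‖Φ x - Φ y‖ + ‖α • (gradient f x - gradient f y)‖ := norm_add_le _ _
        _ = dist (Φ x) (Φ y) + α * ‖gradient f x - gradient f y‖ := by
            rw [dist_eq_norm, norm_smul, Real.norm_eq_abs, abs_of_pos hα]
        _ ≤ dist (Φ x) (Φ y) + α * (L * dist x y) := by
            rw [← dist_eq_norm]
            exact add_le_add le_rfl (mul_le_mul_of_nonneg_left h1 hα.le)
    have h4 : (1 - α*L) * dist x y ≤ dist (Φ x) (Φ y) := by nlinarith
    have h5 : (0:ℝ) < 1 - α*L := by linarith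
    have h6 : (Kc : ℝ) = (1 - α*L)⁻¹ := Real.coe_toNNReal _ (by positivity)
    rw [h6]
    calc dist x y ≤ (1 - α*L)⁻¹ * ((1 - α*L) * dist x y) := by
          rw [← mul_assoc, inv_mul_cancel₀ h5.ne', one_mul]
      _ ≤ (1 - α*L)⁻¹ * dist (Φ x) (Φ y) := by
          exact mul_le_mul_of_nonneg_left h4 (by positivity)
  have hanti_iter : ∀ n : ℕ, AntilipschitzWith (Kc^n) (Φ^[n]) := by
    intro n
    induction n with
    | zero => simpa using AntilipschitzWith.id
    | succ n ih =>
      rw [Function.iterate_succ', pow_succ]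
      exact hanti.comp ih
  -- the stable set is covered by preimages of T
  have hcover : {x₀ : EuclideanSpace ℝ (Fin d) |
      Tendsto (fun k => Φ^[k] x₀) atTop (nhds p)} ⊆ ⋃ n : ℕ, (Φ^[n]) ⁻¹' T := by
    intro x hx
    have hev : ∀ᶠ k in atTop, Φ^[k] x ∈ Metric.closedBall p r :=
      hx (Metric.closedBall_mem_nhds p hrpos)
    obtain ⟨n₀, hn₀⟩ := eventually_atTop.mp hev
    refine Set.mem_iUnion.mpr ⟨n₀, ?_⟩
    intro n
    rw [← Function.iterate_add_apply]
    exact hn₀ (n + n₀) (by omega)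
  have hd1 : 1 ≤ d := by
    have := i₀.isLt; omega
  apply vol_zero_of_dimH_lt
  calc dimH {x₀ : EuclideanSpace ℝ (Fin d) |
        Tendsto (fun k => Φ^[k] x₀) atTop (nhds p)}
      ≤ dimH (⋃ n : ℕ, (Φ^[n]) ⁻¹' T) := dimH_mono hcover
    _ = ⨆ n : ℕ, dimH ((Φ^[n]) ⁻¹' T) := dimH_iUnion _
    _ ≤ ((d - 1 : ℕ) : ℝ≥0∞) :=
        iSup_le fun n => le_trans ((hanti_iter n).dimH_preimage_le T) hdimT
    _ < (d : ℝ≥0∞) := by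
        rw [Nat.cast_lt]
        omega


theorem stmt4 (d : ℕ) (f : EuclideanSpace ℝ (Fin d) → ℝ) (L : NNReal) (α : ℝ)
    (hf : ContDiff ℝ 2 f)
    (hLip : LipschitzWith L (gradient f))
    (hα : 0 < α) (hα' : α < 1 / (L : ℝ))
    (S : Set (EuclideanSpace ℝ (Fin d)))
    (hS : S.Countable)
    (hcrit : ∀ p ∈ S, gradient f p = 0)
    (hinv : ∀ p ∈ S, Function.Bijective (fderiv ℝ (gradient f) p))
    (hneg : ∀ p ∈ S, ∃ v, (inner ℝ (fderiv ℝ (gradient f) p v) v : ℝ) < 0) :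
    volume {x₀ : EuclideanSpace ℝ (Fin d) | ∃ p ∈ S,
      Tendsto (fun k => (fun x => x - α • gradient f x)^[k] x₀) atTop (nhds p)} = 0 := by
  have heq : {x₀ : EuclideanSpace ℝ (Fin d) | ∃ p ∈ S,
      Tendsto (fun k => (fun x => x - α • gradient f x)^[k] x₀) atTop (nhds p)}
      = ⋃ p ∈ S, {x₀ : EuclideanSpace ℝ (Fin d) |
          Tendsto (fun k => (fun x => x - α • gradient f x)^[k] x₀) atTop (nhds p)} := by
    ext x
    simp only [Set.mem_setOf_eq, Set.mem_iUnion]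
    exact ⟨fun ⟨p, hp, h⟩ => ⟨p, hp, h⟩, fun ⟨p, hp, h⟩ => ⟨p, hp, h⟩⟩
  rw [heq]
  exact (measure_biUnion_null_iff hS).mpr fun p hp => key f L α hf hLip hα hα' p (hneg p hp)
end

section
/- Let f : ℝ^d → ℝ be twice continuously differentiable, and suppose its gradient ∇f is L-Lipschitz. Fix a step size α with 0 < α < 1/L and define the gradient descent map φ(x) = x − α∇f(x). Let S be a countable set of critical points of f such that at every p ∈ S the Hessian ∇²f(p) possesses at least one direction v with ⟨∇²f(p)v, v⟩ < 0 (zero eigenvalues are allowed). Then the set of initial points x₀ ∈ ℝ^d for which the iterates φ^n(x₀) converge (as n → ∞) to some point of S has Lebesgue measure zero. -/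
open MeasureTheory Filter


lemma null_image {d : ℕ} {g : EuclideanSpace ℝ (Fin d) → EuclideanSpace ℝ (Fin d)}
    {s : Set (EuclideanSpace ℝ (Fin d))} {K : NNReal}
    (hg : LipschitzOnWith K g s) (hs : volume s = 0) : volume (g '' s) = 0 := by
  have h1 : (volume : Measure (EuclideanSpace ℝ (Fin d)))
      = Measure.addHaarScalarFactor volume μH[Module.finrank ℝ (EuclideanSpace ℝ (Fin d))]
        • μH[Module.finrank ℝ (EuclideanSpace ℝ (Fin d))] :=
    Measure.isAddLeftInvariant_eq_smul _ _
  have h2 : (μH[Module.finrank ℝ (EuclideanSpace ℝ (Fin d))] :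
        Measure (EuclideanSpace ℝ (Fin d)))
      = Measure.addHaarScalarFactor μH[Module.finrank ℝ (EuclideanSpace ℝ (Fin d))] volume
        • (volume : Measure (EuclideanSpace ℝ (Fin d))) :=
    Measure.isAddLeftInvariant_eq_smul _ _
  have hμs : μH[(Module.finrank ℝ (EuclideanSpace ℝ (Fin d)) : ℝ)] s = 0 := by
    rw [h2]; simp [hs]
  have himg : μH[(Module.finrank ℝ (EuclideanSpace ℝ (Fin d)) : ℝ)] (g '' s) = 0 := by
    have h3 := hg.hausdorffMeasure_image_le
      (d := (Module.finrank ℝ (EuclideanSpace ℝ (Fin d)) : ℝ)) (by positivity)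
    refine le_antisymm (h3.trans ?_) zero_le
    rw [hμs]; simp
  rw [h1]
  simp only [finrank_euclideanSpace_fin] at himg ⊢
  simp [himg]


lemma null_preimage {d : ℕ} {φ : EuclideanSpace ℝ (Fin d) → EuclideanSpace ℝ (Fin d)}
    {c : ℝ} (hc : 0 < c) (hexp : ∀ x y, c * ‖x - y‖ ≤ ‖φ x - φ y‖)
    {A : Set (EuclideanSpace ℝ (Fin d))} (hA : volume A = 0) :
    volume (φ ⁻¹' A) = 0 := by
  have hinj : Function.Injective φ := by
    intro x y hxy
    have h1 := hexp x y
    rw [hxy, sub_self, norm_zero] at h1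
    have h2 : ‖x - y‖ = 0 := le_antisymm (nonpos_of_mul_nonpos_right h1 hc |>.trans_eq rfl) (norm_nonneg _)
    have := norm_eq_zero.mp h2
    exact sub_eq_zero.mp this
  set h : EuclideanSpace ℝ (Fin d) → EuclideanSpace ℝ (Fin d) := Function.invFun φ with hh
  have hleft : ∀ x, h (φ x) = x := fun x => Function.leftInverse_invFun hinj x
  set T : Set (EuclideanSpace ℝ (Fin d)) := φ '' (φ ⁻¹' A) with hT
  have hTA : T ⊆ A := Set.image_preimage_subset _ _
  have hTnull : volume T = 0 := le_antisymm (hA ▸ measure_mono hTA) zero_le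
  have hsub : φ ⁻¹' A ⊆ h '' T := by
    intro x hx
    exact ⟨φ x, Set.mem_image_of_mem φ hx, hleft x⟩
  have hlip : LipschitzOnWith (Real.toNNReal c⁻¹) h T := by
    rw [lipschitzOnWith_iff_dist_le_mul]
    rintro a ⟨x, hx, rfl⟩ b ⟨y, hy, rfl⟩
    rw [hleft, hleft]
    rw [dist_eq_norm, dist_eq_norm]
    have h1 := hexp x y
    have h2 : (Real.toNNReal c⁻¹ : ℝ) = c⁻¹ := Real.coe_toNNReal _ (by positivity)
    rw [h2]
    rw [le_inv_mul_iff₀ hc]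
    exact h1
  exact le_antisymm ((measure_mono hsub).trans_eq (null_image hlip hTnull)) zero_le

lemma null_preimage_iter {d : ℕ} {φ : EuclideanSpace ℝ (Fin d) → EuclideanSpace ℝ (Fin d)}
    {c : ℝ} (hc : 0 < c) (hexp : ∀ x y, c * ‖x - y‖ ≤ ‖φ x - φ y‖)
    {A : Set (EuclideanSpace ℝ (Fin d))} (hA : volume A = 0) (n : ℕ) :
    volume (φ^[n] ⁻¹' A) = 0 := by
  induction n with
  | zero => simpa using hA
  | succ n ih =>
    rw [Function.iterate_succ, Set.preimage_comp]
    exact null_preimage hc hexp ih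


local notation "⟪" x ", " y "⟫" => @inner ℝ _ _ x y

lemma le_of_sq_le_sq' {a b : ℝ} (hb : 0 ≤ b) (h : a ^ 2 ≤ b ^ 2) : a ≤ b := by
  nlinarith

lemma euclid_normsq {d : ℕ} (x : EuclideanSpace ℝ (Fin d)) : ‖x‖ ^ 2 = ∑ i, x i ^ 2 := by
  rw [EuclideanSpace.norm_eq, Real.sq_sqrt (by positivity)]
  congr 1; ext i; rw [Real.norm_eq_abs, sq_abs]

lemma spectral_split {d : ℕ} (T : EuclideanSpace ℝ (Fin d) →ₗ[ℝ] EuclideanSpace ℝ (Fin d))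
    {L α : ℝ} (hsym : T.IsSymmetric)
    (hL : ∀ v, ‖T v‖ ≤ L * ‖v‖) (hα : 0 < α) (hαL : α * L < 1)
    (hneg : ∃ v, ⟪T v, v⟫ < 0) :
    ∃ (μ θ : ℝ) (Pu Pc : EuclideanSpace ℝ (Fin d) →ₗ[ℝ] EuclideanSpace ℝ (Fin d)),
      1 < θ ∧ θ < μ ∧
      (∀ z, Pu z + Pc z = z) ∧
      (∀ z, ‖Pu z‖ ≤ ‖z‖) ∧
      (∀ z, ‖z‖ ^ 2 = ‖Pu z‖ ^ 2 + ‖Pc z‖ ^ 2) ∧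
      (∀ z, ‖Pu (z - α • T z)‖ = μ * ‖Pu z‖) ∧
      (∀ z, ‖Pc (z - α • T z)‖ ≤ θ * ‖Pc z‖) ∧
      (∀ z, Pu (Pc z) = 0) ∧
      volume {z : EuclideanSpace ℝ (Fin d) | Pu z = 0} = 0 := by
  classical
  have hd : Module.finrank ℝ (EuclideanSpace ℝ (Fin d)) = d := finrank_euclideanSpace_fin
  set b := hsym.eigenvectorBasis hd with hb
  set lam := hsym.eigenvalues hd with hlam
  have hTb : ∀ v i, b.repr (T v) i = lam i * b.repr v i := fun v i =>
    hsym.eigenvectorBasis_apply_self_apply hd v i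
  -- eigenvalue bounds
  have habs : ∀ (x : EuclideanSpace ℝ (Fin d)) i, |x i| ≤ ‖x‖ := by
    intro x i
    have h1 : x i ^ 2 ≤ ‖x‖ ^ 2 := by
      rw [euclid_normsq]
      exact Finset.single_le_sum (f := fun j => x j ^ 2) (fun j _ => sq_nonneg _)
        (Finset.mem_univ i)
    nlinarith [abs_nonneg (x i), norm_nonneg x, sq_abs (x i)]
  have hlamle : ∀ i, lam i ≤ L := by
    intro i
    have h1 : ‖T (b i)‖ ≤ L * ‖b i‖ := hL _
    have hbnorm : ‖b i‖ = 1 := b.orthonormal.1 i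
    have h2 : b.repr (T (b i)) i = lam i * b.repr (b i) i := hTb _ i
    have h3 : b.repr (b i) i = 1 := by
      rw [b.repr_self]
      simp [EuclideanSpace.single_apply]
    rw [h3, mul_one] at h2
    have h4 : |lam i| ≤ ‖b.repr (T (b i))‖ := h2 ▸ habs _ i
    rw [b.repr.norm_map] at h4
    rw [hbnorm, mul_one] at h1
    exact (le_abs_self _).trans (h4.trans h1)
  -- a negative eigenvalue exists
  have hex : ∃ i, lam i < 0 := by
    by_contra hcon
    push_neg at hcon
    obtain ⟨v, hv⟩ := hneg
    have hinner : ⟪T v, v⟫ = ∑ i, lam i * (b.repr v i) ^ 2 := by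
      rw [← b.repr.inner_map_map (T v) v]
      rw [PiLp.inner_apply]
      congr 1; ext i
      rw [hTb]
      simp [RCLike.inner_apply]
      ring
    rw [hinner] at hv
    have : (0:ℝ) ≤ ∑ i, lam i * (b.repr v i) ^ 2 :=
      Finset.sum_nonneg fun i _ => mul_nonneg (hcon i) (sq_nonneg _)
    linarith
  obtain ⟨i₀, hi₀⟩ := hex
  haveI : Nonempty (Fin d) := ⟨i₀⟩
  have hne : (Finset.univ : Finset (Fin d)).Nonempty := Finset.univ_nonempty
  set lmin := Finset.univ.inf' hne lam with hlmin
  have hlmin_le : ∀ i, lmin ≤ lam i := fun i => Finset.inf'_le _ (Finset.mem_univ i)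
  have hlmin_neg : lmin < 0 := (hlmin_le i₀).trans_lt hi₀ |>.trans_le (le_refl _)
  set μ := 1 - α * lmin with hμ
  have hμ1 : 1 < μ := by
    have : α * lmin < 0 := mul_neg_of_pos_of_neg hα hlmin_neg
    simp only [hμ]; linarith
  obtain ⟨imin, -, himin⟩ := Finset.exists_mem_eq_inf' hne lam
  have hlam_imin : lam imin = lmin := himin.symm
  set c : Fin d → ℝ := fun i => 1 - α * lam i with hc
  have hcpos : ∀ i, 0 < c i := by
    intro i
    have h1 : α * lam i ≤ α * L := by
      apply mul_le_mul_of_nonneg_left (hlamle i) hα.le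
    simp only [hc]; linarith
  have hcmin : ∀ i, lam i = lmin → c i = μ := by intro i h; simp only [hc, hμ, h]
  have hclt : ∀ i, lam i ≠ lmin → c i < μ := by
    intro i h
    have h1 : lmin < lam i := lt_of_le_of_ne (hlmin_le i) (Ne.symm h)
    have := mul_lt_mul_of_pos_left h1 hα
    simp only [hc, hμ]; linarith
  set θ := Finset.univ.sup' hne (fun i => if lam i = lmin then (1+μ)/2 else c i) with hθ
  have hθ1 : 1 < θ := by
    have h1 : (1+μ)/2 ≤ θ := by
      have := Finset.le_sup' (f := fun i => if lam i = lmin then (1+μ)/2 else c i)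
        (Finset.mem_univ imin)
      rwa [if_pos hlam_imin] at this
    linarith
  have hθμ : θ < μ := by
    rw [hθ, Finset.sup'_lt_iff]
    intro i _
    by_cases h : lam i = lmin
    · rw [if_pos h]; linarith
    · rw [if_neg h]; exact hclt i h
  have hcθ : ∀ i, lam i ≠ lmin → c i ≤ θ := by
    intro i h
    have := Finset.le_sup' (f := fun i => if lam i = lmin then (1+μ)/2 else c i)
      (Finset.mem_univ i)
    rwa [if_neg h] at this
  -- projections
  set Pu : EuclideanSpace ℝ (Fin d) →ₗ[ℝ] EuclideanSpace ℝ (Fin d) :=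
    { toFun := fun z => b.repr.symm (WithLp.toLp 2 (fun i => if lam i = lmin then b.repr z i else 0))
      map_add' := by
        intro x y
        have hfn : (fun i => if lam i = lmin then b.repr (x + y) i else 0)
            = (fun i => if lam i = lmin then b.repr x i else 0)
              + (fun i => if lam i = lmin then b.repr y i else 0) := by
          funext i
          by_cases h : lam i = lmin <;> simp [h, map_add]
        show b.repr.symm _ = b.repr.symm _ + b.repr.symm _
        rw [hfn, WithLp.toLp_add, map_add]
      map_smul' := by
        intro m x
        have hfn : (fun i => if lam i = lmin then b.repr (m • x) i else 0)
            = m • (fun i => if lam i = lmin then b.repr x i else 0) := by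
          funext i
          by_cases h : lam i = lmin <;> simp [h, _root_.map_smul]
        show b.repr.symm _ = m • b.repr.symm _
        rw [hfn, WithLp.toLp_smul, _root_.map_smul] } with hPu
  set Pc : EuclideanSpace ℝ (Fin d) →ₗ[ℝ] EuclideanSpace ℝ (Fin d) :=
    { toFun := fun z => b.repr.symm (WithLp.toLp 2 (fun i => if lam i = lmin then 0 else b.repr z i))
      map_add' := by
        intro x y
        have hfn : (fun i => if lam i = lmin then 0 else b.repr (x + y) i)
            = (fun i => if lam i = lmin then 0 else b.repr x i)
              + (fun i => if lam i = lmin then 0 else b.repr y i) := by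
          funext i
          by_cases h : lam i = lmin <;> simp [h, map_add]
        show b.repr.symm _ = b.repr.symm _ + b.repr.symm _
        rw [hfn, WithLp.toLp_add, map_add]
      map_smul' := by
        intro m x
        have hfn : (fun i => if lam i = lmin then 0 else b.repr (m • x) i)
            = m • (fun i => if lam i = lmin then 0 else b.repr x i) := by
          funext i
          by_cases h : lam i = lmin <;> simp [h, _root_.map_smul]
        show b.repr.symm _ = m • b.repr.symm _
        rw [hfn, WithLp.toLp_smul, _root_.map_smul] } with hPc
  have hreprA : ∀ z i, b.repr (z - α • T z) i = c i * b.repr z i := by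
    intro z i
    have h1 : b.repr (z - α • T z) = b.repr z - α • b.repr (T z) := by
      rw [map_sub, _root_.map_smul]
    rw [h1]
    have h2 : (b.repr z - α • b.repr (T z)) i = b.repr z i - α * b.repr (T z) i := rfl
    rw [h2, hTb]
    simp only [hc]; ring
  have hPuapp : ∀ z i, b.repr (Pu z) i = if lam i = lmin then b.repr z i else 0 := by
    intro z i
    show b.repr (b.repr.symm _) i = _
    rw [LinearIsometryEquiv.apply_symm_apply]
  have hPcapp : ∀ z i, b.repr (Pc z) i = if lam i = lmin then 0 else b.repr z i := by
    intro z i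
    show b.repr (b.repr.symm _) i = _
    rw [LinearIsometryEquiv.apply_symm_apply]
  have hnorm : ∀ w : EuclideanSpace ℝ (Fin d), ‖w‖ ^ 2 = ∑ i, b.repr w i ^ 2 := by
    intro w
    rw [← b.repr.norm_map w, euclid_normsq]
  have hPu_sq : ∀ z, ‖Pu z‖ ^ 2 = ∑ i, if lam i = lmin then b.repr z i ^ 2 else 0 := by
    intro z
    rw [hnorm]
    congr 1; funext i
    rw [hPuapp]
    by_cases h : lam i = lmin <;> simp [h]
  have hPc_sq : ∀ z, ‖Pc z‖ ^ 2 = ∑ i, if lam i = lmin then 0 else b.repr z i ^ 2 := by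
    intro z
    rw [hnorm]
    congr 1; funext i
    rw [hPcapp]
    by_cases h : lam i = lmin <;> simp [h]
  refine ⟨μ, θ, Pu, Pc, hθ1, hθμ, ?_, ?_, ?_, ?_, ?_, ?_, ?_⟩
  · -- split
    intro z
    apply b.repr.injective
    ext i
    rw [map_add]
    have : (b.repr (Pu z) + b.repr (Pc z)) i = b.repr (Pu z) i + b.repr (Pc z) i := rfl
    rw [this, hPuapp, hPcapp]
    by_cases h : lam i = lmin <;> simp [h]
  · -- Pu contraction
    intro z
    apply le_of_sq_le_sq' (norm_nonneg _)
    rw [hPu_sq, hnorm]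
    apply Finset.sum_le_sum
    intro i _
    by_cases h : lam i = lmin <;> simp [h, sq_nonneg]
  · -- Pythagoras
    intro z
    rw [hPu_sq, hPc_sq, hnorm, ← Finset.sum_add_distrib]
    congr 1; funext i
    by_cases h : lam i = lmin <;> simp [h]
  · -- expansion on unstable
    intro z
    have hsqeq : ‖Pu (z - α • T z)‖ ^ 2 = (μ * ‖Pu z‖) ^ 2 := by
      rw [hPu_sq, mul_pow, hPu_sq, Finset.mul_sum]
      congr 1; funext i
      by_cases h : lam i = lmin
      · rw [if_pos h, if_pos h, hreprA, mul_pow]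
        rw [hcmin i h]
      · rw [if_neg h, if_neg h, mul_zero]
    have h1 : 0 ≤ μ * ‖Pu z‖ := mul_nonneg (by linarith) (norm_nonneg _)
    calc ‖Pu (z - α • T z)‖ = Real.sqrt (‖Pu (z - α • T z)‖ ^ 2) :=
          (Real.sqrt_sq (norm_nonneg _)).symm
      _ = Real.sqrt ((μ * ‖Pu z‖) ^ 2) := by rw [hsqeq]
      _ = μ * ‖Pu z‖ := Real.sqrt_sq h1
  · -- contraction on center-stable
    intro z
    apply le_of_sq_le_sq' (mul_nonneg (by linarith) (norm_nonneg _))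
    rw [hPc_sq, mul_pow, hPc_sq, Finset.mul_sum]
    apply Finset.sum_le_sum
    intro i _
    by_cases h : lam i = lmin
    · simp [h]
    · rw [if_neg h, if_neg h, hreprA, mul_pow]
      have h1 : 0 < c i := hcpos i
      have h2 : c i ≤ θ := hcθ i h
      have h3 : c i ^ 2 ≤ θ ^ 2 := by nlinarith
      exact mul_le_mul_of_nonneg_right h3 (sq_nonneg _)
  · -- Pu ∘ Pc = 0
    intro z
    apply b.repr.injective
    ext i
    rw [hPuapp, map_zero]
    have : (0 : EuclideanSpace ℝ (Fin d)) i = 0 := rfl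
    rw [this]
    by_cases h : lam i = lmin
    · rw [if_pos h, hPcapp, if_pos h]
    · rw [if_neg h]
  · -- kernel is null
    have hker : {z : EuclideanSpace ℝ (Fin d) | Pu z = 0} = (LinearMap.ker Pu : Set _) := by
      ext z; simp [LinearMap.mem_ker]
    rw [hker]
    apply Measure.addHaar_submodule
    intro htop
    have hmem : b imin ∈ LinearMap.ker Pu := htop ▸ Submodule.mem_top
    have heq : Pu (b imin) = b imin := by
      apply b.repr.injective
      ext i
      rw [hPuapp]
      by_cases h : lam i = lmin
      · rw [if_pos h]
      · rw [if_neg h, b.repr_self, EuclideanSpace.single_apply, if_neg]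
        intro hi
        exact h (hi ▸ hlam_imin)
    rw [LinearMap.mem_ker, heq] at hmem
    have : ‖b imin‖ = 1 := b.orthonormal.1 imin
    rw [hmem, norm_zero] at this
    exact zero_ne_one this

section Cone
variable {E : Type*} [NormedAddCommGroup E] [InnerProductSpace ℝ E]

lemma cone_trap {φ : E → E} {p : E} {μ θ δ : ℝ} {Pu Pc : E →ₗ[ℝ] E} {A : E → E}
    (hθ1 : 1 < θ) (hθμ : θ < μ)
    (hPule : ∀ z, ‖Pu z‖ ≤ ‖z‖)
    (hsq : ∀ z, ‖z‖ ^ 2 = ‖Pu z‖ ^ 2 + ‖Pc z‖ ^ 2)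
    (hAu : ∀ z, ‖Pu (A z)‖ = μ * ‖Pu z‖)
    (hAc : ∀ z, ‖Pc (A z)‖ ≤ θ * ‖Pc z‖)
    (hδ : 0 < δ)
    (happrox : ∀ x ∈ Metric.closedBall p δ, ∀ y ∈ Metric.closedBall p δ,
      ‖φ x - φ y - A (x - y)‖ ≤ (μ - θ)/4 * ‖x - y‖)
    {x y : E} (hx : ∀ n, φ^[n] x ∈ Metric.closedBall p δ)
    (hy : ∀ n, φ^[n] y ∈ Metric.closedBall p δ) :
    ‖Pu (x - y)‖ ≤ ‖Pc (x - y)‖ := by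
  by_contra hcon
  push_neg at hcon
  set ε := (μ - θ)/4 with hε
  have hεpos : 0 < ε := by rw [hε]; linarith
  set ρ := (μ + θ)/2 with hρ
  have hρ1 : 1 < ρ := by rw [hρ]; linarith
  set z : ℕ → E := fun n => φ^[n] x - φ^[n] y with hz
  have hz0 : z 0 = x - y := by simp [hz]
  have hzle : ∀ n, ‖z n‖ ≤ ‖Pu (z n)‖ + ‖Pc (z n)‖ := by
    intro n
    apply le_of_sq_le_sq' (by positivity)
    rw [hsq]
    nlinarith [norm_nonneg (Pu (z n)), norm_nonneg (Pc (z n))]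
  have claim : ∀ n, ‖Pc (z n)‖ ≤ ‖Pu (z n)‖ ∧ ρ ^ n * ‖Pu (z 0)‖ ≤ ‖Pu (z n)‖ := by
    intro n
    induction n with
    | zero => exact ⟨hcon.le, by simp⟩
    | succ n ih =>
      obtain ⟨h1, h2⟩ := ih
      have hzn : ‖z n‖ ≤ 2 * ‖Pu (z n)‖ := (hzle n).trans (by linarith)
      have hr : ‖z (n+1) - A (z n)‖ ≤ ε * (2 * ‖Pu (z n)‖) := by
        have h3 := happrox _ (hx n) _ (hy n)
        have h4 : z (n+1) = φ (φ^[n] x) - φ (φ^[n] y) := by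
          simp [hz, Function.iterate_succ_apply']
        rw [h4]
        exact h3.trans (by
          apply mul_le_mul_of_nonneg_left hzn hεpos.le)
      have hPu_step : ρ * ‖Pu (z n)‖ ≤ ‖Pu (z (n+1))‖ := by
        have h5 : ‖Pu (A (z n))‖ - ‖Pu (z (n+1))‖ ≤ ‖z (n+1) - A (z n)‖ := by
          have h6 : ‖Pu (A (z n))‖ - ‖Pu (z (n+1))‖ ≤ ‖Pu (A (z n)) - Pu (z (n+1))‖ :=
            norm_sub_norm_le _ _
          have h7 : Pu (A (z n)) - Pu (z (n+1)) = Pu (A (z n) - z (n+1)) := (map_sub _ _ _).symm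
          rw [h7] at h6
          refine h6.trans ((hPule _).trans ?_)
          rw [norm_sub_rev]
        rw [hAu] at h5
        have := hr
        rw [hρ, hε] at *
        nlinarith [norm_nonneg (Pu (z n))]
      constructor
      · have h8 : ‖Pc (z (n+1))‖ ≤ ‖Pc (A (z n))‖ + ‖z (n+1) - A (z n)‖ := by
          have h9 : ‖Pc (z (n+1))‖ - ‖Pc (A (z n))‖ ≤ ‖Pc (z (n+1)) - Pc (A (z n))‖ :=
            norm_sub_norm_le _ _
          have h10 : Pc (z (n+1)) - Pc (A (z n)) = Pc (z (n+1) - A (z n)) := (map_sub _ _ _).symm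
          rw [h10] at h9
          have h11 : ‖Pc (z (n+1) - A (z n))‖ ≤ ‖z (n+1) - A (z n)‖ := by
            apply le_of_sq_le_sq' (norm_nonneg _)
            rw [hsq (z (n+1) - A (z n))]
            nlinarith [norm_nonneg (Pu (z (n+1) - A (z n)))]
          linarith
        have h12 : ‖Pc (A (z n))‖ ≤ θ * ‖Pu (z n)‖ :=
          (hAc _).trans (mul_le_mul_of_nonneg_left h1 (by linarith))
        have : ‖Pc (z (n+1))‖ ≤ ρ * ‖Pu (z n)‖ := by
          rw [hρ, hε] at *
          nlinarith [norm_nonneg (Pu (z n))]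
        exact this.trans hPu_step
      · have h13 : ρ ^ (n+1) * ‖Pu (z 0)‖ = ρ * (ρ ^ n * ‖Pu (z 0)‖) := by ring
        rw [h13]
        refine (mul_le_mul_of_nonneg_left h2 (by linarith)).trans hPu_step
  have hbound : ∀ n, ‖Pu (z n)‖ ≤ 2 * δ := by
    intro n
    refine (hPule _).trans ?_
    have h1 : dist (φ^[n] x) (φ^[n] y) ≤ dist (φ^[n] x) p + dist p (φ^[n] y) := dist_triangle _ _ _
    have h2 := Metric.mem_closedBall.mp (hx n)
    have h3 := Metric.mem_closedBall.mp (hy n)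
    rw [dist_comm p _] at h1
    rw [show ‖z n‖ = dist (φ^[n] x) (φ^[n] y) from (dist_eq_norm _ _).symm]
    linarith
  have hpos : 0 < ‖Pu (z 0)‖ := by
    rw [hz0]; exact (norm_nonneg _).trans_lt hcon
  obtain ⟨n, hn⟩ := ((tendsto_pow_atTop_atTop_of_one_lt hρ1).eventually_gt_atTop
    (2 * δ / ‖Pu (z 0)‖)).exists
  have h14 : 2 * δ < ρ ^ n * ‖Pu (z 0)‖ := by
    rwa [div_lt_iff₀ hpos] at hn
  have h15 := (claim n).2
  have h16 := hbound n
  linarith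

end Cone

lemma stayset_null {d : ℕ} {φ : EuclideanSpace ℝ (Fin d) → EuclideanSpace ℝ (Fin d)}
    {p : EuclideanSpace ℝ (Fin d)} {δ : ℝ}
    {Pu Pc : EuclideanSpace ℝ (Fin d) →ₗ[ℝ] EuclideanSpace ℝ (Fin d)}
    (hsq : ∀ z, ‖z‖ ^ 2 = ‖Pu z‖ ^ 2 + ‖Pc z‖ ^ 2)
    (hPuPc : ∀ z, Pu (Pc z) = 0)
    (hker : volume {z : EuclideanSpace ℝ (Fin d) | Pu z = 0} = 0)
    (hcone : ∀ x y, (∀ n, φ^[n] x ∈ Metric.closedBall p δ) →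
      (∀ n, φ^[n] y ∈ Metric.closedBall p δ) → ‖Pu (x - y)‖ ≤ ‖Pc (x - y)‖) :
    volume {x : EuclideanSpace ℝ (Fin d) | ∀ n, φ^[n] x ∈ Metric.closedBall p δ} = 0 := by
  set K := {x : EuclideanSpace ℝ (Fin d) | ∀ n, φ^[n] x ∈ Metric.closedBall p δ} with hK
  have hpair : ∀ x ∈ K, ∀ y ∈ K, ‖x - y‖ ≤ Real.sqrt 2 * ‖Pc x - Pc y‖ := by
    intro x hx y hy
    have h1 := hcone x y hx hy
    have h2 : Pc x - Pc y = Pc (x - y) := (map_sub _ _ _).symm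
    rw [h2]
    apply le_of_sq_le_sq' (by positivity)
    rw [mul_pow, Real.sq_sqrt (by norm_num : (2:ℝ) ≥ 0), hsq (x - y)]
    nlinarith [norm_nonneg (Pu (x - y)), norm_nonneg (Pc (x - y))]
  set π : EuclideanSpace ℝ (Fin d) → EuclideanSpace ℝ (Fin d) := fun x => Pc x with hπ
  set h := Function.invFunOn π K with hhdef
  have hTsub : π '' K ⊆ {z | Pu z = 0} := by
    rintro a ⟨u, hu, rfl⟩
    exact hPuPc u
  have hTnull : volume (π '' K) = 0 :=
    le_antisymm ((measure_mono hTsub).trans_eq hker) zero_le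
  have hmemeq : ∀ x ∈ K, h (π x) ∈ K ∧ π (h (π x)) = π x := fun x hx =>
    ⟨Function.invFunOn_apply_mem hx, Function.invFunOn_apply_eq hx⟩
  have heqid : ∀ x ∈ K, h (π x) = x := by
    intro x hx
    obtain ⟨hmem, heq⟩ := hmemeq x hx
    have h3 := hpair _ hmem _ hx
    have h4 : Pc (h (π x)) - Pc x = π (h (π x)) - π x := rfl
    rw [h4, heq, sub_self, norm_zero, mul_zero] at h3
    have h5 : h (π x) - x = 0 := by
      have := norm_nonneg (h (π x) - x)
      exact norm_eq_zero.mp (le_antisymm h3 this)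
    exact sub_eq_zero.mp h5
  have hKsub : K ⊆ h '' (π '' K) := by
    intro x hx
    exact ⟨π x, Set.mem_image_of_mem π hx, heqid x hx⟩
  have hlip : LipschitzOnWith (Real.toNNReal (Real.sqrt 2)) h (π '' K) := by
    rw [lipschitzOnWith_iff_dist_le_mul]
    rintro a ⟨u, hu, rfl⟩ b ⟨v, hv, rfl⟩
    rw [heqid u hu, heqid v hv, dist_eq_norm, dist_eq_norm]
    have h6 := hpair u hu v hv
    rwa [Real.coe_toNNReal _ (Real.sqrt_nonneg 2)]
  exact le_antisymm ((measure_mono hKsub).trans_eq (null_image hlip hTnull)) zero_le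

set_option maxHeartbeats 1000000 in
theorem stmt5 (d : ℕ) (f : EuclideanSpace ℝ (Fin d) → ℝ) (L : NNReal) (α : ℝ)
    (hf : ContDiff ℝ 2 f)
    (hLip : LipschitzWith L (gradient f))
    (hα : 0 < α) (hα' : α < 1 / (L : ℝ))
    (S : Set (EuclideanSpace ℝ (Fin d)))
    (hS : S.Countable)
    (hcrit : ∀ p ∈ S, gradient f p = 0)
    (hneg : ∀ p ∈ S, ∃ v, (inner ℝ (fderiv ℝ (gradient f) p v) v : ℝ) < 0) :
    volume {x₀ : EuclideanSpace ℝ (Fin d) | ∃ p ∈ S,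
      Tendsto (fun k => (fun x => x - α • gradient f x)^[k] x₀) atTop (nhds p)} = 0 := by
  classical
  set φ : EuclideanSpace ℝ (Fin d) → EuclideanSpace ℝ (Fin d) :=
    fun x => x - α • gradient f x with hφ
  -- basic facts about L and α
  have hL0 : 0 < (L : ℝ) := by
    rcases lt_or_ge 0 (L : ℝ) with h | h
    · exact h
    · exfalso
      have hL00 : (L : ℝ) = 0 := le_antisymm h L.coe_nonneg
      rw [hL00] at hα'
      simp at hα'
      linarith
  have hαL : α * (L : ℝ) < 1 := by
    rw [one_div] at hα'
    have := mul_lt_mul_of_pos_right hα' hL0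
    rwa [inv_mul_cancel₀ hL0.ne'] at this
  -- differentiability machinery
  have hfd : ∀ x, DifferentiableAt ℝ f x := fun x => (hf.differentiable (by norm_num) x)
  have hfderivC1 : ContDiff ℝ 1 (fderiv ℝ f) := hf.fderiv_right (by norm_num)
  set iso : StrongDual ℝ (EuclideanSpace ℝ (Fin d)) ≃L[ℝ] EuclideanSpace ℝ (Fin d) :=
    (InnerProductSpace.toDual ℝ (EuclideanSpace ℝ (Fin d))).symm.toContinuousLinearEquiv with hiso
  have hgradeq : gradient f = ⇑iso ∘ fderiv ℝ f := by
    funext x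
    rfl
  have hgradC1 : ContDiff ℝ 1 (gradient f) := by
    rw [hgradeq]
    exact (iso.toContinuousLinearMap.contDiff).comp hfderivC1
  set H : EuclideanSpace ℝ (Fin d) → (EuclideanSpace ℝ (Fin d) →L[ℝ] EuclideanSpace ℝ (Fin d)) :=
    fun x => fderiv ℝ (gradient f) x with hH
  have hgrad_diff : ∀ x, HasFDerivAt (gradient f) (H x) x := fun x =>
    (hgradC1.differentiable one_ne_zero x).hasFDerivAt
  have hH_cont : Continuous H := hgradC1.continuous_fderiv one_ne_zero
  have hHnorm : ∀ x, ‖H x‖ ≤ (L : ℝ) := fun x => norm_fderiv_le_of_lipschitz ℝ hLip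
  -- symmetry of Hessian
  have hsym : ∀ p : EuclideanSpace ℝ (Fin d),
      ((H p : EuclideanSpace ℝ (Fin d) →ₗ[ℝ] EuclideanSpace ℝ (Fin d))).IsSymmetric := by
    intro p u v
    set D := fderiv ℝ (fderiv ℝ f) p with hD
    have hHp : H p = (iso : StrongDual ℝ (EuclideanSpace ℝ (Fin d)) →L[ℝ]
        EuclideanSpace ℝ (Fin d)).comp D := by
      rw [hH]
      rw [hgradeq]
      exact iso.comp_fderiv
    have hDsym : ∀ a b, D a b = D b a := by
      apply second_derivative_symmetric (f := f) (f' := fderiv ℝ f)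
      · exact fun y => (hfd y).hasFDerivAt
      · exact (hfderivC1.differentiable one_ne_zero p).hasFDerivAt
    have happ : ∀ w, (H p) w = (InnerProductSpace.toDual ℝ
        (EuclideanSpace ℝ (Fin d))).symm (D w) := by
      intro w
      rw [hHp]
      rfl
    show (inner ℝ ((H p) u) v : ℝ) = inner ℝ u ((H p) v)
    rw [happ, happ, InnerProductSpace.toDual_symm_apply, real_inner_comm,
      InnerProductSpace.toDual_symm_apply, hDsym]
  -- expansivity of φ
  have hφexp : ∀ x y, (1 - α * (L : ℝ)) * ‖x - y‖ ≤ ‖φ x - φ y‖ := by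
    intro x y
    have h1 : ‖(x - y) - (φ x - φ y)‖ = ‖α • gradient f x - α • gradient f y‖ := by
      congr 1
      simp only [hφ]
      abel
    have h2 : ‖α • gradient f x - α • gradient f y‖ ≤ α * ((L : ℝ) * ‖x - y‖) := by
      rw [← smul_sub, norm_smul, Real.norm_eq_abs, abs_of_pos hα]
      apply mul_le_mul_of_nonneg_left _ hα.le
      have := hLip.dist_le_mul x y
      rwa [dist_eq_norm, dist_eq_norm] at this
    have h3 : ‖x - y‖ - ‖φ x - φ y‖ ≤ ‖(x - y) - (φ x - φ y)‖ := norm_sub_norm_le _ _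
    nlinarith [norm_nonneg (x - y)]
  have hexp_pos : (0:ℝ) < 1 - α * (L : ℝ) := by linarith
  -- per-point convergence set is null
  have key : ∀ p ∈ S, volume {x₀ : EuclideanSpace ℝ (Fin d) |
      Tendsto (fun k => φ^[k] x₀) atTop (nhds p)} = 0 := by
    intro p hp
    -- spectral decomposition at p
    obtain ⟨μ, θ, Pu, Pc, hθ1, hθμ, hsplit, hPule, hsq, hAu, hAc, hPuPc, hker⟩ :=
      spectral_split (d := d) ((H p : EuclideanSpace ℝ (Fin d) →ₗ[ℝ]
        EuclideanSpace ℝ (Fin d))) (hsym p)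
        (fun v => ((H p).le_opNorm v).trans
          (mul_le_mul_of_nonneg_right (hHnorm p) (norm_nonneg v)))
        hα hαL (hneg p hp)
    set A : EuclideanSpace ℝ (Fin d) → EuclideanSpace ℝ (Fin d) :=
      fun z => z - α • (H p) z with hA
    set ε := (μ - θ)/4 with hεdef
    have hεpos : 0 < ε := by rw [hεdef]; linarith
    -- choose δ by continuity of the Hessian
    obtain ⟨δ₀, hδ₀, hδball⟩ := Metric.continuousAt_iff.mp (hH_cont.continuousAt (x := p))
      (ε / α) (by positivity)
    set δ := δ₀ / 2 with hδdef
    have hδpos : 0 < δ := by positivity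
    have hHclose : ∀ z ∈ Metric.closedBall p δ, ‖H z - H p‖ ≤ ε / α := by
      intro z hz
      have h1 : dist z p < δ₀ := lt_of_le_of_lt (Metric.mem_closedBall.mp hz) (by linarith)
      have := hδball h1
      rw [dist_eq_norm] at this
      exact this.le
    -- mean value estimate
    have happrox : ∀ x ∈ Metric.closedBall p δ, ∀ y ∈ Metric.closedBall p δ,
        ‖φ x - φ y - A (x - y)‖ ≤ ε * ‖x - y‖ := by
      intro x hx y hy
      set F : EuclideanSpace ℝ (Fin d) → EuclideanSpace ℝ (Fin d) :=
        fun z => α • (H p) z - α • gradient f z with hF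
      have hFeq : φ x - φ y - A (x - y) = F x - F y := by
        simp only [hφ, hA, hF, map_sub, smul_sub]
        abel
      have hFder : ∀ z ∈ Metric.closedBall p δ,
          HasFDerivWithinAt F (α • (H p) - α • (H z)) (Metric.closedBall p δ) z := by
        intro z hz
        have h1 : HasFDerivAt (fun w => α • (H p) w) (α • (H p)) z :=
          ((H p).hasFDerivAt).const_smul α
        have h2 : HasFDerivAt (fun w => α • gradient f w) (α • (H z)) z :=
          (hgrad_diff z).const_smul α
        exact (h1.sub h2).hasFDerivWithinAt
      have hbound : ∀ z ∈ Metric.closedBall p δ, ‖α • (H p) - α • (H z)‖ ≤ ε := by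
        intro z hz
        have h1 : α • (H p) - α • (H z) = α • ((H p) - (H z)) := (smul_sub α _ _).symm
        have h3 : ‖α • ((H p) - (H z))‖ = α * ‖H z - H p‖ := by
          rw [norm_smul α ((H p) - (H z)), Real.norm_eq_abs, abs_of_pos hα, norm_sub_rev]
        have h2 := hHclose z hz
        rw [h1, h3]
        calc α * ‖H z - H p‖ ≤ α * (ε / α) := mul_le_mul_of_nonneg_left h2 hα.le
          _ = ε := by field_simp
      have := (convex_closedBall p δ).norm_image_sub_le_of_norm_hasFDerivWithin_le
        hFder hbound hy hx
      rw [hFeq]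
      exact this
    -- cone argument: trapped orbits satisfy graph condition
    have hcone : ∀ x y, (∀ n, φ^[n] x ∈ Metric.closedBall p δ) →
        (∀ n, φ^[n] y ∈ Metric.closedBall p δ) → ‖Pu (x - y)‖ ≤ ‖Pc (x - y)‖ := by
      intro x y hx hy
      exact cone_trap hθ1 hθμ hPule hsq (fun z => hAu z) (fun z => hAc z) hδpos happrox hx hy
    -- local stable set is null
    have hstay : volume {x : EuclideanSpace ℝ (Fin d) |
        ∀ n, φ^[n] x ∈ Metric.closedBall p δ} = 0 :=
      stayset_null hsq hPuPc hker hcone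
    -- convergence set is contained in union of preimages
    have hsubset : {x₀ : EuclideanSpace ℝ (Fin d) | Tendsto (fun k => φ^[k] x₀) atTop (nhds p)}
        ⊆ ⋃ N : ℕ, φ^[N] ⁻¹' {x : EuclideanSpace ℝ (Fin d) |
            ∀ n, φ^[n] x ∈ Metric.closedBall p δ} := by
      intro x₀ hx₀
      have h1 : ∀ᶠ k in atTop, φ^[k] x₀ ∈ Metric.closedBall p δ :=
        hx₀.eventually (Metric.closedBall_mem_nhds p hδpos)
      obtain ⟨N, hN⟩ := eventually_atTop.mp h1
      refine Set.mem_iUnion.mpr ⟨N, ?_⟩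
      intro n
      rw [← Function.iterate_add_apply]
      exact hN (n + N) (by omega)
    have hiternull : ∀ N : ℕ, volume (φ^[N] ⁻¹' {x : EuclideanSpace ℝ (Fin d) |
        ∀ n, φ^[n] x ∈ Metric.closedBall p δ}) = 0 := fun N =>
      null_preimage_iter hexp_pos hφexp hstay N
    exact le_antisymm ((measure_mono hsubset).trans_eq (measure_iUnion_null hiternull))
      zero_le
  -- conclude by countable union
  have hfinal : {x₀ : EuclideanSpace ℝ (Fin d) | ∃ p ∈ S,
      Tendsto (fun k => φ^[k] x₀) atTop (nhds p)}
      = ⋃ p ∈ S, {x₀ : EuclideanSpace ℝ (Fin d) |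
          Tendsto (fun k => φ^[k] x₀) atTop (nhds p)} := by
    ext x₀
    simp only [Set.mem_setOf_eq, Set.mem_iUnion]
    constructor
    · rintro ⟨p, hp, ht⟩; exact ⟨p, hp, ht⟩
    · rintro ⟨p, hp, ht⟩; exact ⟨p, hp, ht⟩
  rw [hfinal]
  exact (measure_biUnion_null_iff hS).mpr fun p hp => key p hp
end
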